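/- arXiv:1712.07746 — 9 statements merged into one kernel-verified Lean document; each statement's English description precedes it below -/
import Mathlib

section
/- Let M be a finitely generated monoid. Then M is graded if and only if every element of M has only finitely many nontrivial factorizations, i.e., for every u ∈ M the set of finite sequences (u₁,…,uₙ) of non-identity elements of M with u = u₁⋯uₙ is finite. -/
def IsGraded (M : Type*) [Monoid M] : Prop :=
  ∃ (X : Type) (_ : Finite X) (α : FreeMonoid X →* M),
    Function.Surjective α ∧ ∀ m : M, (α ⁻¹' {m}).Finite

private lemma finite_lists_aux {α : Type*} {S : Set α} (hS : S.Finite) (N : ℕ) :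
    {l : List α | l.length ≤ N ∧ ∀ x ∈ l, x ∈ S}.Finite := by
  haveI := hS.to_subtype
  have hfin : {l : List S | l.length ≤ N}.Finite := List.finite_length_le _ N
  apply (hfin.image (List.map Subtype.val)).subset
  rintro l ⟨hlen, hmem⟩
  refine ⟨l.pmap (fun x h => ⟨x, h⟩) hmem, by simpa using hlen, ?_⟩
  simp [List.map_pmap]

theorem graded_iff_finitely_many_nontrivial_factorizations
    (M : Type*) [Monoid M] [Monoid.FG M] :
    IsGraded M ↔
      ∀ u : M, {l : List M | (∀ x ∈ l, x ≠ 1) ∧ l.prod = u}.Finite := by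
  constructor
  · rintro ⟨X, hX, α, hsurj, hfin⟩ u
    set g := Function.surjInv hsurj with hgdef
    have hg : ∀ m, α (g m) = m := fun m => Function.surjInv_eq hsurj m
    obtain ⟨N, hN⟩ : ∃ N, ∀ w ∈ α ⁻¹' {u}, FreeMonoid.length w ≤ N := by
      obtain ⟨N, hN⟩ := ((hfin u).image FreeMonoid.length).bddAbove
      exact ⟨N, fun w hw => hN (Set.mem_image_of_mem _ hw)⟩
    have hlenprod : ∀ L : List (FreeMonoid X),
        FreeMonoid.length L.prod = (L.map FreeMonoid.length).sum := by
      intro L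
      induction L with
      | nil => simp [FreeMonoid.length_one]
      | cons a L ih => simp [FreeMonoid.length_mul, ih]
    have hSfin : {w : FreeMonoid X | FreeMonoid.length w ≤ N}.Finite :=
      List.finite_length_le X N
    apply (finite_lists_aux (hSfin.image α) N).subset
    rintro l ⟨hne, hprod⟩
    -- the concatenation of chosen preimages is in the fiber of u
    have hmem : (l.map g).prod ∈ α ⁻¹' {u} := by
      have : α (l.map g).prod = u := by
        rw [map_list_prod, List.map_map]
        have : (α ∘ g) = id := funext hg
        rw [this, List.map_id, hprod]
      simpa using this
    have hlen : ((l.map g).map FreeMonoid.length).sum ≤ N := by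
      rw [← hlenprod]; exact hN _ hmem
    have hone : ∀ x ∈ l, 1 ≤ FreeMonoid.length (g x) := by
      intro x hx
      rcases Nat.eq_zero_or_pos (FreeMonoid.length (g x)) with h0 | h1
      · exfalso
        apply hne x hx
        have : g x = 1 := FreeMonoid.length_eq_zero.mp h0
        rw [← hg x, this, map_one]
      · exact h1
    constructor
    · -- l.length ≤ N
      calc l.length = (l.map (fun _ => 1)).sum := by simp
        _ ≤ ((l.map g).map FreeMonoid.length).sum := by
            rw [List.map_map]
            exact List.sum_le_sum (fun x hx => hone x hx)
        _ ≤ N := hlen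
    · -- every entry is in α '' {w | length w ≤ N}
      intro x hx
      refine ⟨g x, ?_, hg x⟩
      have : FreeMonoid.length (g x) ≤ ((l.map g).map FreeMonoid.length).sum := by
        apply List.single_le_sum (by simp) _
        rw [List.map_map]
        exact List.mem_map_of_mem hx
      exact le_trans this hlen
  · intro h
    classical
    obtain ⟨S, hS⟩ := Monoid.FG.fg_top (M := M)
    set S' : Finset M := S.erase 1 with hS'def
    have hclos : Submonoid.closure (S' : Set M) = ⊤ := by
      rw [eq_top_iff, ← hS]
      apply Submonoid.closure_le.mpr
      intro x hx
      by_cases hx1 : x = 1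
      · subst hx1; exact Submonoid.one_mem _
      · exact Submonoid.subset_closure (Finset.mem_coe.mpr (Finset.mem_erase.mpr ⟨hx1, hx⟩))
    set n := S'.card with hndef
    set e : {x // x ∈ S'} ≃ Fin n := S'.equivFin with hedef
    set f : Fin n → M := fun i => (e.symm i : M) with hfdef
    have hfinj : Function.Injective f :=
      Subtype.val_injective.comp e.symm.injective
    have hfmem : ∀ i, f i ∈ S' := fun i => (e.symm i).2
    set α : FreeMonoid (Fin n) →* M := FreeMonoid.lift f with hαdef
    have hα : ∀ w : FreeMonoid (Fin n), α w = ((FreeMonoid.toList w).map f).prod :=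
      fun w => FreeMonoid.lift_apply f w
    have hsurj : Function.Surjective α := by
      intro m
      have hm : m ∈ Submonoid.closure (S' : Set M) := hclos ▸ Submonoid.mem_top m
      induction hm using Submonoid.closure_induction with
      | mem x hx => exact ⟨FreeMonoid.of (e ⟨x, hx⟩), by simp [hα, hfdef]⟩
      | one => exact ⟨1, map_one α⟩
      | mul x y _ _ hx hy =>
          obtain ⟨w₁, h₁⟩ := hx
          obtain ⟨w₂, h₂⟩ := hy
          exact ⟨w₁ * w₂, by rw [map_mul, h₁, h₂]⟩
    refine ⟨Fin n, inferInstance, α, hsurj, fun u => ?_⟩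
    set T : FreeMonoid (Fin n) → List M := fun w => (FreeMonoid.toList w).map f with hTdef
    have hTinj : Function.Injective T :=
      (List.map_injective_iff.mpr hfinj).comp FreeMonoid.toList.injective
    have himg : T '' (α ⁻¹' {u}) ⊆ {l : List M | (∀ x ∈ l, x ≠ 1) ∧ l.prod = u} := by
      rintro _ ⟨w, hw, rfl⟩
      constructor
      · intro x hx
        obtain ⟨i, _, rfl⟩ := List.mem_map.mp hx
        exact (Finset.mem_erase.mp (hfmem i)).1
      · rw [← hα]; exact hw
    exact Set.Finite.of_finite_image ((h u).subset himg) hTinj.injOn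
end

section
/- Let M be a finitely generated monoid. Then M is graded if and only if M is finite J-above and the identity 1 is the unique regular element of M. -/
/-- `v` is a factor of `u` if `u ∈ MvM`. A monoid is finite J-above if
every element has only finitely many factors. -/
def FiniteJAbove (M : Type*) [Monoid M] : Prop :=
  ∀ u : M, {v : M | ∃ p q : M, u = p * v * q}.Finite

private lemma freeMonoid_length_pow {X : Type*} (w : FreeMonoid X) (k : ℕ) :
    (w ^ k).length = k * w.length := by
  induction k with
  | zero => simp [pow_zero]
  | succ k ih => rw [pow_succ, FreeMonoid.length_mul, ih]; ring

private lemma exists_idem_pow {M : Type*} [Monoid M] (e : M) {a b : ℕ}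
    (hab : a < b) (heq : e ^ a = e ^ b) :
    ∃ N, 1 ≤ N ∧ e ^ N * e ^ N = e ^ N := by
  set d := b - a with hd
  have hd1 : 1 ≤ d := by omega
  have key : ∀ k, a ≤ k → e ^ (k + d) = e ^ k := by
    intro k hk
    have h1 : k + d = (k - a) + b := by omega
    have h2 : (k - a) + a = k := by omega
    rw [h1, pow_add, ← heq, ← pow_add, h2]
  have key2 : ∀ j k, a ≤ k → e ^ (k + j * d) = e ^ k := by
    intro j
    induction j with
    | zero => intro k _; simp
    | succ j ih =>
      intro k hk
      have : k + (j + 1) * d = (k + d) + j * d := by ring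
      rw [this, ih (k + d) (by omega), key k hk]
  refine ⟨(a + 1) * d, by nlinarith, ?_⟩
  have hN : a ≤ (a + 1) * d := by nlinarith
  rw [← pow_add, key2 (a + 1) ((a + 1) * d) hN]

theorem graded_iff_finiteJAbove_and_unique_regular
    (M : Type*) [Monoid M] [Monoid.FG M] :
    IsGraded M ↔
      (FiniteJAbove M ∧ ∀ u : M, (∃ v : M, u * v * u = u) → u = 1) := by
  constructor
  · rintro ⟨X, hX, α, hsurj, hfib⟩
    classical
    constructor
    · -- finite J-above
      intro u
      have hfin : (α ⁻¹' {u}).Finite := hfib u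
      have hsub : {v : M | ∃ p q : M, u = p * v * q} ⊆
          α '' (⋃ w ∈ α ⁻¹' {u}, {s : FreeMonoid X | s.toList.Sublist w.toList}) := by
        rintro v ⟨p, q, huv⟩
        obtain ⟨P, hP⟩ := hsurj p
        obtain ⟨V, hV⟩ := hsurj v
        obtain ⟨Q, hQ⟩ := hsurj q
        have h1 : P * V * Q ∈ α ⁻¹' {u} := by
          simp only [Set.mem_preimage, Set.mem_singleton_iff, map_mul, hP, hV, hQ]
          exact huv.symm
        have h2 : V ∈ {s : FreeMonoid X | s.toList.Sublist (P * V * Q).toList} := by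
          show V.toList.Sublist (P * V * Q).toList
          rw [FreeMonoid.toList_mul, FreeMonoid.toList_mul]
          exact (List.infix_append _ _ _).sublist
        exact ⟨V, Set.mem_biUnion h1 h2, hV⟩
      refine Set.Finite.subset (Set.Finite.image _ (Set.Finite.biUnion hfin ?_)) hsub
      intro w _
      have hsub2 : {s : FreeMonoid X | s.toList.Sublist w.toList} ⊆
          FreeMonoid.toList ⁻¹' ↑(w.toList.sublists.toFinset) := by
        intro s hs
        simp only [Set.mem_preimage, Finset.mem_coe, List.mem_toFinset, List.mem_sublists]
        exact hs
      exact Set.Finite.subset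
        (Set.Finite.preimage FreeMonoid.toList.injective.injOn
          (w.toList.sublists.toFinset.finite_toSet)) hsub2
    · -- unique regular element
      rintro u ⟨v, huv⟩
      obtain ⟨U, hU⟩ := hsurj u
      obtain ⟨V, hV⟩ := hsurj v
      have hpow : ∀ k : ℕ, u * (v * u) ^ k = u := by
        intro k
        induction k with
        | zero => simp
        | succ k ih => rw [pow_succ, ← mul_assoc, ih, ← mul_assoc, huv]
      have hmem : ∀ k : ℕ, U * (V * U) ^ k ∈ α ⁻¹' {u} := by
        intro k
        simp only [Set.mem_preimage, Set.mem_singleton_iff, map_mul, map_pow, hU, hV]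
        exact hpow k
      by_cases hlen : (V * U).length = 0
      · have hUlen : U.length = 0 := by
          rw [FreeMonoid.length_mul] at hlen; omega
        rw [FreeMonoid.length_eq_zero] at hUlen
        rw [← hU, hUlen, map_one]
      · exfalso
        have hinj : Function.Injective (fun k : ℕ => U * (V * U) ^ k) := by
          intro a b hab
          have h1 : (U * (V * U) ^ a).length = (U * (V * U) ^ b).length :=
            congrArg FreeMonoid.length hab
          rw [FreeMonoid.length_mul, FreeMonoid.length_mul, freeMonoid_length_pow,
            freeMonoid_length_pow] at h1
          exact Nat.eq_of_mul_eq_mul_right (Nat.pos_of_ne_zero hlen)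
            (Nat.add_left_cancel h1)
        exact Set.infinite_of_injective_forall_mem hinj hmem (hfib u)
  · rintro ⟨hJ, hreg⟩
    classical
    obtain ⟨S, hS⟩ := (Monoid.FG.fg_top : (⊤ : Submonoid M).FG)
    set T : Finset M := S.erase 1 with hT
    set g : Fin T.card → M := fun i => ((T.equivFin.symm i : T) : M) with hg
    have hgT : ∀ i, g i ∈ T := fun i => (T.equivFin.symm i).2
    have hgne1 : ∀ i, g i ≠ 1 := fun i => (Finset.mem_erase.mp (hgT i)).1
    have hrange : Set.range g = ↑T := by
      ext x
      constructor
      · rintro ⟨i, rfl⟩; exact hgT i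
      · intro hx
        exact ⟨T.equivFin ⟨x, hx⟩, by simp [hg]⟩
    have hclT : Submonoid.closure (Set.range g) = ⊤ := by
      rw [hrange]
      refine le_antisymm le_top ?_
      rw [← hS]
      refine Submonoid.closure_le.mpr ?_
      intro x hx
      by_cases hx1 : x = 1
      · subst hx1; exact Submonoid.one_mem _
      · exact Submonoid.subset_closure (by simp [hT, Finset.mem_erase, hx1, hx])
    set α : FreeMonoid (Fin T.card) →* M := FreeMonoid.lift g with hα
    have hsurj : Function.Surjective α := by
      rw [← MonoidHom.mrange_eq_top, hα, FreeMonoid.mrange_lift, hclT]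
    -- nonempty words never map to 1
    have hne1 : ∀ w : FreeMonoid (Fin T.card), w ≠ 1 → α w ≠ 1 := by
      intro w hw h1
      have hnil : w.toList ≠ [] := by
        intro hnil
        exact hw (by rw [← FreeMonoid.ofList_toList w, hnil]; rfl)
      obtain ⟨x, t, hxt⟩ := List.exists_cons_of_ne_nil hnil
      have hsplit : α w = g x * (t.map g).prod := by
        rw [hα, FreeMonoid.lift_apply, hxt, List.map_cons, List.prod_cons]
      have hgx1 : g x * (t.map g).prod = 1 := by rw [← hsplit, h1]
      have hreg' : g x * (t.map g).prod * g x = g x := by rw [hgx1, one_mul]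
      exact hgne1 x (hreg (g x) ⟨(t.map g).prod, hreg'⟩)
    refine ⟨Fin T.card, inferInstance, α, hsurj, ?_⟩
    intro m
    have hF : {v : M | ∃ p q : M, m = p * v * q}.Finite := hJ m
    have key : ∀ w : FreeMonoid (Fin T.card), α w = m →
        ∀ i j : ℕ, i < j → j ≤ w.toList.length →
        ((w.toList.take i).map g).prod = ((w.toList.take j).map g).prod → False := by
      intro w hw i j hij hjle heq
      have htj : w.toList.take j = w.toList.take i ++ (w.toList.drop i).take (j - i) := by
        rw [(by omega : j = i + (j - i)), List.take_add, Nat.add_sub_cancel_left]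
      have hpe : ((w.toList.take i).map g).prod * (((w.toList.drop i).take (j - i)).map g).prod
          = ((w.toList.take i).map g).prod := by
        rw [← List.prod_append, ← List.map_append, ← htj]
        exact heq.symm
      have hpek : ∀ k : ℕ, ((w.toList.take i).map g).prod *
          ((((w.toList.drop i).take (j - i)).map g).prod) ^ k
          = ((w.toList.take i).map g).prod := by
        intro k
        induction k with
        | zero => simp
        | succ k ih => rw [pow_succ, ← mul_assoc, ih, hpe]
      have hm : m = ((w.toList.take i).map g).prod *
          (((w.toList.drop i).take (j - i)).map g).prod *
          ((w.toList.drop j).map g).prod := by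
        rw [← List.prod_append, ← List.map_append, ← htj, ← List.prod_append,
          ← List.map_append, List.take_append_drop, ← hw, hα, FreeMonoid.lift_apply]
      have hmempow : ∀ k : ℕ,
          ((((w.toList.drop i).take (j - i)).map g).prod) ^ k
            ∈ {v : M | ∃ p q : M, m = p * v * q} := by
        intro k
        refine ⟨((w.toList.take i).map g).prod, ((w.toList.drop j).map g).prod, ?_⟩
        rw [hpek k, ← hpe]
        exact hm
      have hninj : ¬ Function.Injective
          (fun k : ℕ => ((((w.toList.drop i).take (j - i)).map g).prod) ^ k) := by
        intro hinj
        exact Set.infinite_of_injective_forall_mem hinj hmempow hF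
      rw [Function.not_injective_iff] at hninj
      obtain ⟨a, b, hab, hne⟩ := hninj
      have hidem : ∃ N, 1 ≤ N ∧
          ((((w.toList.drop i).take (j - i)).map g).prod) ^ N *
          ((((w.toList.drop i).take (j - i)).map g).prod) ^ N =
          ((((w.toList.drop i).take (j - i)).map g).prod) ^ N := by
        rcases hne.lt_or_gt with h | h
        · exact exists_idem_pow _ h hab
        · exact exists_idem_pow _ h hab.symm
      obtain ⟨N, hN1, hNidem⟩ := hidem
      have heN1 : ((((w.toList.drop i).take (j - i)).map g).prod) ^ N = 1 :=
        hreg _ ⟨((((w.toList.drop i).take (j - i)).map g).prod) ^ N,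
          by rw [hNidem, hNidem]⟩
      have hword : α ((FreeMonoid.ofList ((w.toList.drop i).take (j - i))) ^ N)
          = ((((w.toList.drop i).take (j - i)).map g).prod) ^ N := by
        rw [map_pow, hα, FreeMonoid.lift_apply, FreeMonoid.toList_ofList]
      refine hne1 ((FreeMonoid.ofList ((w.toList.drop i).take (j - i))) ^ N) ?_
        (by rw [hword, heN1])
      rw [Ne, ← FreeMonoid.length_eq_zero, freeMonoid_length_pow]
      have hlen1 : (FreeMonoid.ofList ((w.toList.drop i).take (j - i))).length = j - i := by
        show (FreeMonoid.toList (FreeMonoid.ofList _)).length = j - i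
        rw [FreeMonoid.toList_ofList, List.length_take, List.length_drop]
        omega
      rw [hlen1]
      have : 0 < j - i := by omega
      positivity
    have hbound : ∀ w : FreeMonoid (Fin T.card), α w = m →
        w.toList.length < hF.toFinset.card + 1 := by
      intro w hw
      by_contra hlong
      push_neg at hlong
      have hmaps : ∀ i ∈ Finset.range (w.toList.length + 1),
          ((w.toList.take i).map g).prod ∈ hF.toFinset := by
        intro i _
        rw [Set.Finite.mem_toFinset]
        refine ⟨1, ((w.toList.drop i).map g).prod, ?_⟩
        rw [one_mul, ← List.prod_append, ← List.map_append, List.take_append_drop,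
          ← hw, hα, FreeMonoid.lift_apply]
      have hcard : hF.toFinset.card < (Finset.range (w.toList.length + 1)).card := by
        rw [Finset.card_range]; omega
      obtain ⟨i, hi, j, hj, hij, heq⟩ :=
        Finset.exists_ne_map_eq_of_card_lt_of_maps_to hcard hmaps
      rw [Finset.mem_range] at hi hj
      rcases hij.lt_or_gt with h | h
      · exact key w hw i j h (by omega) heq
      · exact key w hw j i h (by omega) heq.symm
    have hsub : α ⁻¹' {m} ⊆ FreeMonoid.toList ⁻¹'
        {l : List (Fin T.card) | l.length < hF.toFinset.card + 1} := by
      intro w hw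
      exact hbound w hw
    exact Set.Finite.subset
      (Set.Finite.preimage FreeMonoid.toList.injective.injOn
        (List.finite_length_lt _ _)) hsub
end

section
/- Let M be a finitely generated monoid. Then M is graded if and only if M is finite J-above, the identity 1 is the unique invertible element of M, and 1 is the unique idempotent of M. -/
section AuxLemmas

variable {M : Type*} [Monoid M]

/-- With trivial units and trivial idempotents, any one-sided inverse relation forces both
elements to be `1`. -/
private lemma aux_left_inv
    (hunit : ∀ u : M, (∃ v : M, u * v = 1 ∧ v * u = 1) → u = 1)
    (hid : ∀ u : M, u * u = u → u = 1) :
    ∀ u v : M, u * v = 1 → u = 1 := by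
  intro u v h
  have h1 : (v * u) * (v * u) = v * u := by
    rw [mul_assoc, ← mul_assoc u v u, h, one_mul]
  exact hunit u ⟨v, h, hid _ h1⟩

private lemma aux_prod_ne_one (hA : ∀ u v : M, u * v = 1 → u = 1) :
    ∀ l : List M, (∀ x ∈ l, x ≠ 1) → l ≠ [] → l.prod ≠ 1 := by
  intro l hl hne h1
  cases l with
  | nil => exact hne rfl
  | cons a t =>
    rw [List.prod_cons] at h1
    exact hl a (by simp) (hA _ _ h1)

private lemma aux_pow_eq (hA : ∀ u v : M, u * v = 1 → u = 1)
    (hid : ∀ u : M, u * u = u → u = 1)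
    {t : M} {a b : ℕ} (hb : 0 < b) (h : t ^ (a + b) = t ^ a) : t = 1 := by
  -- bump the exponent so that it is positive
  have h' : t ^ (a + 1 + b) = t ^ (a + 1) := by
    calc t ^ (a + 1 + b) = t * t ^ (a + b) := by
          rw [show a + 1 + b = (a + b) + 1 from by omega, pow_succ']
    _ = t * t ^ a := by rw [h]
    _ = t ^ (a + 1) := (pow_succ' t a).symm
  set A := a + 1 with hA1
  have hA0 : 0 < A := Nat.succ_pos a
  have claim : ∀ k, t ^ (A + k * b) = t ^ A := by
    intro k
    induction k with
    | zero => simp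
    | succ k ih =>
      have hek : A + (k + 1) * b = (A + k * b) + b := by ring
      rw [hek, pow_add, ih, ← pow_add, h']
  have hAb : A ≤ A * b := Nat.le_mul_of_pos_right A hb
  have e1 : t ^ (A * b - A) * t ^ (A + A * b) = t ^ (A * b - A) * t ^ A := by
    rw [claim A]
  rw [← pow_add, ← pow_add] at e1
  have e2 : A * b - A + (A + A * b) = A * b + A * b := by omega
  have e3 : A * b - A + A = A * b := by omega
  rw [e2, e3] at e1
  have hidem : t ^ (A * b) * t ^ (A * b) = t ^ (A * b) := by rw [← pow_add]; exact e1
  have hone : t ^ (A * b) = 1 := hid _ hidem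
  have hAb1 : 1 ≤ A * b := Nat.mul_pos hA0 hb
  have : t * t ^ (A * b - 1) = 1 := by
    rw [← pow_succ', show A * b - 1 + 1 = A * b from by omega]
    exact hone
  exact hA _ _ this

/-- Key counting lemma: in a finite-J-above monoid with trivial units and idempotents,
a product decomposition of `m` into non-identity elements has length bounded by the
number of factors of `m`. -/
private lemma aux_length_lt (hJ : FiniteJAbove M)
    (hA : ∀ u v : M, u * v = 1 → u = 1)
    (hid : ∀ u : M, u * u = u → u = 1)
    {l : List M} (hl : ∀ x ∈ l, x ≠ 1) {m : M} (hm : l.prod = m) :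
    l.length + 1 ≤ ((hJ m).toFinset).card := by
  subst hm
  have hmem : ∀ i : Fin (l.length + 1), (l.take (i : ℕ)).prod ∈ (hJ l.prod).toFinset := by
    intro i
    rw [Set.Finite.mem_toFinset]
    refine ⟨1, (l.drop (i : ℕ)).prod, ?_⟩
    rw [one_mul, ← List.prod_append, List.take_append_drop]
  -- prefixes are pairwise distinct
  have key : ∀ i j : Fin (l.length + 1), (i : ℕ) < (j : ℕ) →
      (l.take (i : ℕ)).prod ≠ (l.take (j : ℕ)).prod := by
    intro i j hij heq
    set c : List M := (l.drop (i : ℕ)).take ((j : ℕ) - (i : ℕ)) with hc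
    have hdecomp : l.take (j : ℕ) = l.take (i : ℕ) ++ c := by
      rw [hc, ← List.take_add, show (i : ℕ) + ((j : ℕ) - (i : ℕ)) = (j : ℕ) from by omega]
    have hjle : (j : ℕ) ≤ l.length := Nat.lt_succ_iff.mp j.isLt
    have hclen : 0 < c.length := by
      rw [hc, List.length_take, List.length_drop]
      omega
    have hcne : c ≠ [] := List.ne_nil_of_length_pos hclen
    have hcl : ∀ x ∈ c, x ≠ 1 := by
      intro x hx
      exact hl x (List.drop_subset _ l (List.take_subset _ _ hx))
    have ht1 : c.prod ≠ 1 := aux_prod_ne_one hA c hcl hcne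
    set p := (l.take (i : ℕ)).prod with hp
    set t := c.prod with htt
    have hpt : p * t = p := by
      rw [hp, htt, ← List.prod_append, ← hdecomp, ← heq]
    have hpk : ∀ k : ℕ, p * t ^ k = p := by
      intro k
      induction k with
      | zero => simp
      | succ k ih => rw [pow_succ, ← mul_assoc, ih, hpt]
    have hfac : ∀ k : ℕ, t ^ k ∈ {v : M | ∃ p' q' : M, l.prod = p' * v * q'} := by
      intro k
      refine ⟨p, (l.drop (i : ℕ)).prod, ?_⟩
      rw [hpk k, hp, ← List.prod_append, List.take_append_drop]
    have : ∃ k1 k2 : ℕ, k1 ≠ k2 ∧ t ^ k1 = t ^ k2 := by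
      have hfin : Finite ({v : M | ∃ p' q' : M, l.prod = p' * v * q'} : Set M) :=
        (hJ l.prod).to_subtype
      obtain ⟨k1, k2, hne, hfe⟩ := Finite.exists_ne_map_eq_of_infinite
        (fun k : ℕ => (⟨t ^ k, hfac k⟩ : {v : M | ∃ p' q' : M, l.prod = p' * v * q'}))
      exact ⟨k1, k2, hne, congrArg Subtype.val hfe⟩
    obtain ⟨k1, k2, hne, hfe⟩ := this
    rcases Nat.lt_or_ge k1 k2 with hlt | hge
    · exact ht1 (aux_pow_eq hA hid (a := k1) (b := k2 - k1) (by omega)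
        (by rw [show k1 + (k2 - k1) = k2 from by omega]; exact hfe.symm))
    · have hlt2 : k2 < k1 := lt_of_le_of_ne hge (Ne.symm hne)
      exact ht1 (aux_pow_eq hA hid (a := k2) (b := k1 - k2) (by omega)
        (by rw [show k2 + (k1 - k2) = k1 from by omega]; exact hfe))
  have hinj : Set.InjOn (fun i : Fin (l.length + 1) => (l.take (i : ℕ)).prod)
      (Finset.univ : Finset (Fin (l.length + 1))) := by
    intro i _ j _ h
    by_contra hne
    rcases Nat.lt_or_ge (i : ℕ) (j : ℕ) with hlt | hge
    · exact key i j hlt h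
    · have : (j : ℕ) < (i : ℕ) := by
        rcases Nat.lt_or_ge (j : ℕ) (i : ℕ) with h' | h'
        · exact h'
        · exact absurd (Fin.ext (le_antisymm h' hge)) hne
      exact key j i this h.symm
  calc l.length + 1 = (Finset.univ : Finset (Fin (l.length + 1))).card := by simp
  _ ≤ ((hJ l.prod).toFinset).card :=
      Finset.card_le_card_of_injOn _ (fun i _ => hmem i) hinj

end AuxLemmas

theorem graded_iff_finiteJAbove_unique_unit_unique_idempotent
    (M : Type*) [Monoid M] [Monoid.FG M] :
    IsGraded M ↔
      (FiniteJAbove M ∧ (∀ u : M, (∃ v : M, u * v = 1 ∧ v * u = 1) → u = 1) ∧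
        ∀ u : M, u * u = u → u = 1) := by
  constructor
  · rintro ⟨X, hX, α, hsurj, hfib⟩
    have hlenpow : ∀ (c : FreeMonoid X) (n : ℕ), (c ^ n).length = n * c.length := by
      intro c n
      induction n with
      | zero => simp [FreeMonoid.length_one]
      | succ n ih => rw [pow_succ, FreeMonoid.length_mul, ih]; ring
    have key : ∀ (w c : FreeMonoid X) (m : M), (∀ n : ℕ, α (w * c ^ n) = m) → c = 1 := by
      intro w c m hn
      by_contra hc
      have hlc : 0 < c.length := by
        rcases Nat.eq_zero_or_pos c.length with h | h
        · exact absurd (FreeMonoid.length_eq_zero.mp h) hc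
        · exact h
      have hinj : Function.Injective (fun n : ℕ => w * c ^ n) := by
        intro n1 n2 h
        have := congrArg FreeMonoid.length h
        simp only [FreeMonoid.length_mul, hlenpow] at this
        have : n1 * c.length = n2 * c.length := by omega
        exact Nat.eq_of_mul_eq_mul_right hlc this
      have hinf : (α ⁻¹' {m}).Infinite :=
        Set.infinite_of_injective_forall_mem hinj (fun n => by
          simp only [Set.mem_preimage, Set.mem_singleton_iff]; exact hn n)
      exact hinf (hfib m)
    refine ⟨?_, ?_, ?_⟩
    · -- finite J-above
      intro u
      have hfin : (⋃ w ∈ α ⁻¹' {u}, {b : FreeMonoid X | b.toList <:+: w.toList}).Finite := by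
        apply Set.Finite.biUnion (hfib u)
        intro w _
        apply Set.Finite.subset
          (((w.toList.sublists).finite_toSet).preimage
            (Set.injOn_of_injective FreeMonoid.toList.injective))
        intro b hb
        simp only [Set.mem_preimage, Set.mem_setOf_eq, List.mem_sublists]
        exact List.IsInfix.sublist hb
      apply Set.Finite.subset (hfin.image α)
      rintro v ⟨p, q, hpq⟩
      obtain ⟨wp, hwp⟩ := hsurj p
      obtain ⟨wv, hwv⟩ := hsurj v
      obtain ⟨wq, hwq⟩ := hsurj q
      refine ⟨wv, ?_, hwv⟩
      refine Set.mem_biUnion (show wp * wv * wq ∈ α ⁻¹' {u} from ?_) ?_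
      · simp only [Set.mem_preimage, Set.mem_singleton_iff, map_mul, hwp, hwv, hwq]
        exact hpq.symm
      · exact ⟨wp.toList, wq.toList, by
          rw [FreeMonoid.toList_mul, FreeMonoid.toList_mul, List.append_assoc]⟩
    · -- unique unit
      rintro u ⟨v, huv, hvu⟩
      obtain ⟨wu, hwu⟩ := hsurj u
      obtain ⟨wv, hwv⟩ := hsurj v
      have h1 : ∀ n : ℕ, α (1 * (wu * wv) ^ n) = 1 := by
        intro n
        rw [one_mul, map_pow, map_mul, hwu, hwv, huv, one_pow]
      have h2 : wu * wv = 1 := key 1 (wu * wv) 1 h1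
      have h3 : wu.length = 0 := by
        have := congrArg FreeMonoid.length h2
        rw [FreeMonoid.length_mul, FreeMonoid.length_one] at this
        omega
      rw [← hwu, FreeMonoid.length_eq_zero.mp h3, map_one]
    · -- unique idempotent
      intro u hu
      obtain ⟨wu, hwu⟩ := hsurj u
      have hupow : ∀ n : ℕ, u * u ^ n = u := by
        intro n
        induction n with
        | zero => simp
        | succ n ih => rw [pow_succ', ← mul_assoc, hu, ih]
      have h2 : wu = 1 := key wu wu u (fun n => by rw [map_mul, map_pow, hwu, hupow n])
      rw [← hwu, h2, map_one]
  · rintro ⟨hJ, hunit, hid⟩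
    classical
    have hA : ∀ u v : M, u * v = 1 → u = 1 := aux_left_inv hunit hid
    obtain ⟨S, hS⟩ := (inferInstance : Monoid.FG M).fg_top
    set S' := S.erase 1 with hS'def
    have hclos : Submonoid.closure (S' : Set M) = ⊤ := by
      rw [eq_top_iff, ← hS]
      apply Submonoid.closure_le.mpr
      intro x hx
      by_cases h1 : x = 1
      · subst h1; exact Submonoid.one_mem _
      · exact Submonoid.subset_closure
          (Finset.mem_coe.mpr (Finset.mem_erase.mpr ⟨h1, Finset.mem_coe.mp hx⟩))
    let e := Fintype.equivFin (↥S')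
    let f : Fin (Fintype.card ↥S') → M := fun i => ((e.symm i : ↥S') : M)
    have hf1 : ∀ i, f i ≠ 1 := fun i => (Finset.mem_erase.mp (e.symm i).2).1
    refine ⟨Fin (Fintype.card ↥S'), inferInstance, FreeMonoid.lift f, ?_, ?_⟩
    · rw [← MonoidHom.mrange_eq_top, eq_top_iff, ← hclos]
      apply Submonoid.closure_le.mpr
      intro x hx
      refine ⟨FreeMonoid.of (e ⟨x, by simpa using hx⟩), ?_⟩
      rw [FreeMonoid.lift_eval_of]
      simp [f]
    · intro m
      apply Set.Finite.subset
        ((List.finite_length_le (Fin (Fintype.card ↥S')) ((hJ m).toFinset.card)).preimage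
          (Set.injOn_of_injective FreeMonoid.toList.injective))
      intro w hw
      simp only [Set.mem_preimage, Set.mem_singleton_iff] at hw
      have hlist : ∀ x ∈ w.toList.map f, x ≠ 1 := by
        intro x hx
        obtain ⟨i, _, rfl⟩ := List.mem_map.mp hx
        exact hf1 i
      have hprod : (w.toList.map f).prod = m := by
        rw [← FreeMonoid.lift_apply]; exact hw
      have hb := aux_length_lt hJ hA hid hlist hprod
      simp only [Set.mem_preimage, Set.mem_setOf_eq]
      rw [List.length_map] at hb
      omega
end

section
/- Let F be a free group and let M be a finitely generated submonoid of F. Then M is graded if and only if M is finite J-above. -/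
lemma freeGroup_infinite {γ : Type*} [Nonempty γ] : Infinite (FreeGroup γ) := by
  obtain ⟨c⟩ := ‹Nonempty γ›
  refine Infinite.of_injective (fun n : ℕ => (FreeGroup.of c) ^ n) ?_
  intro a b h
  have key : ∀ n : ℕ, (FreeGroup.lift (fun _ : γ => Multiplicative.ofAdd (1:ℤ)))
      ((FreeGroup.of c) ^ n) = Multiplicative.ofAdd (n : ℤ) := by
    intro n
    rw [map_pow, FreeGroup.lift_apply_of, ← ofAdd_nsmul]
    norm_num
  have h4 : Multiplicative.ofAdd (a : ℤ) = Multiplicative.ofAdd (b : ℤ) := by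
    rw [← key a, ← key b]; exact congrArg _ h
  have : (a : ℤ) = b := by exact_mod_cast Multiplicative.ofAdd.injective h4
  exact_mod_cast this

lemma freeGroup_not_finOrder {γ : Type*} (g : FreeGroup γ) (hg : g ≠ 1) : ¬ IsOfFinOrder g := by
  intro hfin
  have hfin2 : Finite (Subgroup.zpowers g) := Set.Finite.to_subtype hfin.finite_zpowers
  have hnt : Nontrivial (Subgroup.zpowers g) := by
    refine ⟨⟨g, Subgroup.mem_zpowers g⟩, 1, ?_⟩
    simp [Subtype.ext_iff, hg]
  obtain ⟨ι, ⟨b⟩⟩ := (inferInstance : IsFreeGroup (Subgroup.zpowers g)).nonempty_basis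
  rcases isEmpty_or_nonempty ι with hι | hι
  · haveI := hnt
    exact not_subsingleton _ (b.repr.toEquiv.subsingleton)
  · have := freeGroup_infinite (γ := ι)
    have : Infinite (Subgroup.zpowers g) := Infinite.of_injective b.repr.symm b.repr.symm.injective
    exact this.not_finite hfin2

lemma graded_imp_fja {M : Type*} [Monoid M] (h : IsGraded M) : FiniteJAbove M := by
  obtain ⟨X, hX, α, hsurj, hfib⟩ := h
  intro u
  have hK : (α ⁻¹' {u}).Finite := hfib u
  have hLen : (FreeMonoid.length '' (α ⁻¹' {u})).Finite := hK.image _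
  obtain ⟨L, hL⟩ := hLen.bddAbove
  have hfin : {w : FreeMonoid X | w.length ≤ L}.Finite := by
    haveI := Fintype.ofFinite X
    exact List.finite_length_le X L
  refine ((hfin.image α).subset ?_)
  rintro v ⟨p, q, rfl⟩
  obtain ⟨a, ha⟩ := hsurj p
  obtain ⟨b, hb⟩ := hsurj v
  obtain ⟨c, hc⟩ := hsurj q
  refine ⟨b, ?_, hb⟩
  have hmem : a * b * c ∈ α ⁻¹' {p * v * q} := by
    simp [map_mul, ha, hb, hc]
  have : (a * b * c).length ≤ L := hL ⟨a * b * c, hmem, rfl⟩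
  simp only [FreeMonoid.length_mul] at this
  simp only [Set.mem_setOf_eq]
  omega

lemma fja_imp_graded {F : Type*} [Group F] (htf : ∀ x : F, x ≠ 1 → ¬ IsOfFinOrder x)
    (M : Submonoid F) (hM : M.FG) (hJ : FiniteJAbove M) : IsGraded M := by
  classical
  obtain ⟨S, hS⟩ := hM
  set S' : Finset F := S.erase 1 with hS'def
  have hS' : Submonoid.closure (S' : Set F) = M := by
    rw [← hS]
    apply le_antisymm
    · exact Submonoid.closure_mono (Finset.coe_subset.2 (Finset.erase_subset _ _))
    · rw [Submonoid.closure_le]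
      intro x hx
      rcases eq_or_ne x 1 with rfl | hx1
      · exact Submonoid.one_mem _
      · exact Submonoid.subset_closure (by simp [hS'def, hx1, hx])
  set n := S'.card with hn
  set e : Fin n ≃ {x // x ∈ S'} := S'.equivFin.symm with he
  have hmem : ∀ i : Fin n, ((e i : F)) ∈ M := fun i => by
    rw [← hS']; exact Submonoid.subset_closure (e i).2
  set f : Fin n → M := fun i => ⟨(e i : F), hmem i⟩ with hfdef
  have hf1 : ∀ i, (f i : F) ≠ 1 := fun i => Finset.ne_of_mem_erase (e i).2
  set α : FreeMonoid (Fin n) →* M := FreeMonoid.lift f with hα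
  have hsurj : Function.Surjective α := by
    intro m
    have hmF : (m : F) ∈ Submonoid.closure (S' : Set F) := hS' ▸ m.2
    have : ∃ w : FreeMonoid (Fin n), ((α w : M) : F) = (m : F) := by
      refine Submonoid.closure_induction
        (motive := fun x _ => ∃ w : FreeMonoid (Fin n), ((α w : M) : F) = x) ?_ ?_ ?_ hmF
      · intro x hx
        refine ⟨FreeMonoid.of (e.symm ⟨x, hx⟩), ?_⟩
        rw [hα, FreeMonoid.lift_eval_of]
        simp [hfdef]
      · exact ⟨1, by simp⟩
      · intro x y hx hy ihx ihy
        obtain ⟨w1, h1⟩ := ihx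
        obtain ⟨w2, h2⟩ := ihy
        exact ⟨w1 * w2, by rw [map_mul]; push_cast [h1, h2]; rfl⟩
    obtain ⟨w, hw⟩ := this
    exact ⟨w, Subtype.ext hw⟩
  refine ⟨Fin n, inferInstance, α, hsurj, ?_⟩
  intro u
  set N := (hJ u).toFinset.card with hN
  have hbound : ∀ w : FreeMonoid (Fin n), α w = u → w.length ≤ N := by
    intro w hw
    by_contra hlen
    push_neg at hlen
    set l : List (Fin n) := FreeMonoid.toList w with hl
    have hlenl : N < l.length := hlen
    -- prefix map into the finite factor set
    have hfac : ∀ k : ℕ, α (FreeMonoid.ofList (l.take k)) ∈ (hJ u).toFinset := by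
      intro k
      rw [Set.Finite.mem_toFinset]
      refine ⟨1, α (FreeMonoid.ofList (l.drop k)), ?_⟩
      rw [one_mul, ← map_mul, ← FreeMonoid.ofList_append, List.take_append_drop]
      rw [← hw]
      congr 1
    have hcard : Fintype.card {x // x ∈ (hJ u).toFinset} < Fintype.card (Fin (N + 1)) := by
      simp [Fintype.card_coe, hN]
    obtain ⟨i, j, hij, hEq⟩ := Fintype.exists_ne_map_eq_of_card_lt
      (fun k : Fin (N + 1) => (⟨α (FreeMonoid.ofList (l.take k)), hfac k⟩ :
        {x // x ∈ (hJ u).toFinset})) hcard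
    have key : ∀ i j : Fin (N + 1), (i : ℕ) < (j : ℕ) →
        α (FreeMonoid.ofList (l.take (i : ℕ))) = α (FreeMonoid.ofList (l.take (j : ℕ))) →
        False := by
      clear hij hEq
      intro i j hlt hEq'
      set mid : List (Fin n) := (l.drop i).take (j - i) with hmid
      have hsplit : l.take (j : ℕ) = l.take (i : ℕ) ++ mid := by
        rw [hmid, ← List.take_add]
        congr 1
        omega
      have hone : ((α (FreeMonoid.ofList mid) : M) : F) = 1 := by
        have : α (FreeMonoid.ofList (l.take i)) =
            α (FreeMonoid.ofList (l.take i)) * α (FreeMonoid.ofList mid) := by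
          rw [← map_mul, ← FreeMonoid.ofList_append, ← hsplit, hEq']
        have h2 := congrArg (fun m : M => (m : F)) this
        simp only [Submonoid.coe_mul] at h2
        exact (left_eq_mul.mp h2)
      have hmidne : mid ≠ [] := by
        have : mid.length = min ((j : ℕ) - i) (l.length - i) := by
          simp [hmid]
        intro hemp
        rw [hemp] at this
        simp at this
        omega
      obtain ⟨x, rest, hxr⟩ := List.exists_cons_of_ne_nil hmidne
      set z : M := α (FreeMonoid.ofList rest) with hz
      have hinv : (f x : F) * (z : F) = 1 := by
        have : α (FreeMonoid.ofList mid) = f x * z := by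
          rw [hxr, FreeMonoid.ofList_cons, map_mul, hα, FreeMonoid.lift_eval_of]
        rw [← Submonoid.coe_mul, ← this, hone]
      have hzinv : (z : F) = (f x : F)⁻¹ := (inv_eq_of_mul_eq_one_right hinv).symm
      -- infinitely many factors of 1
      have hinj : Function.Injective (fun k : ℕ => ((f x) ^ k : M)) := by
        intro a b hab
        have : ((f x : F)) ^ a = ((f x : F)) ^ b := by
          have := congrArg (fun m : M => (m : F)) hab
          simpa using this
        exact (injective_pow_iff_not_isOfFinOrder.2 (htf _ (hf1 x))) this
      have hmem1 : ∀ k : ℕ, ((f x) ^ k : M) ∈ {v : M | ∃ p q : M, (1 : M) = p * v * q} := by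
        intro k
        refine ⟨z ^ k, 1, ?_⟩
        apply Subtype.ext
        push_cast
        rw [hzinv, inv_pow, inv_mul_cancel]
        simp
      exact (hJ 1).not_infinite (Set.infinite_of_injective_forall_mem hinj hmem1)
    rcases lt_or_gt_of_ne hij with h | h
    · exact key i j h (congrArg Subtype.val hEq)
    · exact key j i h (congrArg Subtype.val hEq.symm)
  have : (α ⁻¹' {u}) ⊆ {w : FreeMonoid (Fin n) | w.length ≤ N} := by
    intro w hw
    exact hbound w hw
  exact ((List.finite_length_le (Fin n) N).subset this)

theorem graded_iff_finiteJAbove_of_submonoid_of_freeGroup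
    (F : Type*) [Group F] (hF : ∃ ι : Type _, Nonempty (F ≃* FreeGroup ι))
    (M : Submonoid F) (hM : M.FG) :
    IsGraded M ↔ FiniteJAbove M := by
  constructor
  · exact graded_imp_fja
  · intro hJ
    obtain ⟨ι, ⟨φ⟩⟩ := hF
    have htf : ∀ x : F, x ≠ 1 → ¬ IsOfFinOrder x := by
      intro x hx hfin
      have h1 : φ x ≠ 1 := by
        intro h
        exact hx (φ.injective (by simpa using h))
      exact freeGroup_not_finOrder (φ x) h1 ((φ : F →* FreeGroup ι).isOfFinOrder hfin)
    exact fja_imp_graded htf M hM hJ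
end

section
/- Let M be a graded monoid and let S′ ⊆ M \ {1} be any generating set of M (as a monoid). Then every element of M can be written as a product of elements of S′ in only finitely many ways: for every g ∈ M, the set of finite sequences (s₁,…,sₙ) with each sᵢ ∈ S′ and s₁⋯sₙ = g is finite. -/
lemma lists_over_finite_set_bounded_length_finite {M : Type*} {T : Set M} (hT : T.Finite)
    (N : ℕ) : {l : List M | (∀ x ∈ l, x ∈ T) ∧ l.length ≤ N}.Finite := by
  have : Finite T := hT
  have h := (List.finite_length_le T N).image (List.map Subtype.val)
  apply h.subset
  rintro l ⟨h1, h2⟩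
  refine ⟨l.pmap (fun x hx => (⟨x, hx⟩ : T)) h1, by simpa using h2, ?_⟩
  simp [List.map_pmap, List.pmap_eq_map]

theorem graded_finitely_many_factorizations_over_any_generating_set
    (M : Type*) [Monoid M] (hM : IsGraded M)
    (S' : Set M) (hS'1 : (1 : M) ∉ S') (hS'gen : Submonoid.closure S' = ⊤) :
    ∀ g : M, {l : List M | (∀ x ∈ l, x ∈ S') ∧ l.prod = g}.Finite := by
  obtain ⟨X, hX, α, hsurj, hfin⟩ := hM
  intro g
  -- choose a word for each element
  set w : M → FreeMonoid X := Function.surjInv hsurj with hw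
  have hαw : ∀ m, α (w m) = m := fun m => Function.surjInv_eq hsurj m
  -- words for elements of S' are nonempty
  have hlen1 : ∀ s ∈ S', 1 ≤ (w s).length := by
    intro s hs
    by_contra h
    push_neg at h
    have hl : (w s).length = 0 := by omega
    have : s = 1 := by rw [← hαw s, FreeMonoid.length_eq_zero.mp hl, map_one]
    exact hS'1 (this ▸ hs)
  -- bound on the length of words mapping to g
  obtain ⟨N, hN⟩ : ∃ N, ∀ u ∈ α ⁻¹' {g}, u.length ≤ N := by
    obtain ⟨t, ht⟩ := (hfin g).exists_finset_coe
    refine ⟨t.sup (fun u => u.length), fun u hu => Finset.le_sup (by simp [← ht] at hu ⊢; exact hu)⟩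
  -- the word associated to a factorization
  have key : ∀ l : List M, (∀ x ∈ l, x ∈ S') → l.prod = g →
      l.length ≤ N ∧ ∀ x ∈ l, (w x).length ≤ N := by
    intro l hl hp
    have hmem : (l.map w).prod ∈ α ⁻¹' {g} := by
      simp only [Set.mem_preimage, Set.mem_singleton_iff, map_list_prod, List.map_map]
      rw [show α ∘ w = id from funext hαw, List.map_id, hp]
    have hlenprod : ∀ l' : List M, ((l'.map w).prod).length = ((l'.map w).map FreeMonoid.length).sum := by
      intro l'
      induction l' with
      | nil => rfl
      | cons a t ih =>
          simp only [List.map_cons, List.prod_cons, FreeMonoid.length_mul, List.sum_cons, ih]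
    have hle := hN _ hmem
    rw [hlenprod l] at hle
    constructor
    · calc l.length = ((l.map w).map (fun _ => 1)).sum := by
            simp [Function.comp_def, List.map_const', List.sum_replicate]
        _ ≤ ((l.map w).map FreeMonoid.length).sum := by
            apply List.sum_le_sum
            intro u hu
            simp only [List.mem_map] at hu
            obtain ⟨x, hx, rfl⟩ := hu
            exact hlen1 x (hl x hx)
        _ ≤ N := hle
    · intro x hx
      calc (w x).length ≤ ((l.map w).map FreeMonoid.length).sum :=
            List.single_le_sum (fun _ _ => Nat.zero_le _) _
              (by simp only [List.map_map, List.mem_map]; exact ⟨x, hx, rfl⟩)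
        _ ≤ N := hle
  -- finite set of possible factors
  set T : Set M := α '' {u : FreeMonoid X | u.length ≤ N} with hT
  have hTfin : T.Finite := by
    apply Set.Finite.image
    exact List.finite_length_le X N
  apply (lists_over_finite_set_bounded_length_finite hTfin N).subset
  rintro l ⟨h1, h2⟩
  obtain ⟨hlN, hwN⟩ := key l h1 h2
  exact ⟨fun x hx => ⟨w x, hwN x hx, hαw x⟩, hlN⟩
end

section
/- Let X be a finite alphabet, let G be a virtually free group, and let α : X* → G be a monoid homomorphism from the free monoid on X to G. Then for every g ∈ G the language α⁻¹(g) = {w ∈ X* : α(w) = g} is a context-free language over X. -/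
namespace MSAux

open List

section Lcp
variable {β : Type*} [DecidableEq β]

/-- longest common prefix -/
def lcp : List β → List β → List β
  | a :: s, b :: t => if a = b then a :: lcp s t else []
  | _, _ => []

theorem lcp_nil_right : ∀ s : List β, lcp s ([] : List β) = [] := by
  intro s; cases s <;> rfl

theorem lcp_prefix_left : ∀ s t : List β, lcp s t <+: s := by
  intro s
  induction s with
  | nil => intro t; cases t <;> simp [lcp]
  | cons a s ih =>
    intro t
    cases t with
    | nil => simp [lcp_nil_right]
    | cons b t =>
      by_cases h : a = b
      · rw [show lcp (a :: s) (b :: t) = a :: lcp s t by simp [lcp, h]]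
        exact (List.cons_prefix_cons).mpr ⟨rfl, ih t⟩
      · rw [show lcp (a :: s) (b :: t) = [] by simp [lcp, h]]
        exact List.nil_prefix

theorem lcp_prefix_right : ∀ s t : List β, lcp s t <+: t := by
  intro s
  induction s with
  | nil => intro t; cases t <;> simp [lcp]
  | cons a s ih =>
    intro t
    cases t with
    | nil => simp [lcp_nil_right]
    | cons b t =>
      by_cases h : a = b
      · rw [show lcp (a :: s) (b :: t) = a :: lcp s t by simp [lcp, h]]
        exact (List.cons_prefix_cons).mpr ⟨h, ih t⟩
      · rw [show lcp (a :: s) (b :: t) = [] by simp [lcp, h]]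
        exact List.nil_prefix

theorem prefix_lcp : ∀ c s t : List β, c <+: s → c <+: t → c <+: lcp s t := by
  intro c
  induction c with
  | nil => intro s t _ _; exact List.nil_prefix
  | cons x c ih =>
    intro s t hs ht
    obtain ⟨s', rfl⟩ := hs
    obtain ⟨t', rfl⟩ := ht
    simp only [List.cons_append]
    rw [show lcp (x :: (c ++ s')) (x :: (c ++ t')) = x :: lcp (c ++ s') (c ++ t') by
      simp [lcp]]
    exact (List.cons_prefix_cons).mpr ⟨rfl, ih _ _ (c.prefix_append s') (c.prefix_append t')⟩

theorem lcp_self_prefix {c t : List β} (h : c <+: t) : lcp c t = c :=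
  ((lcp_prefix_left c t).eq_of_length
    (le_antisymm (lcp_prefix_left c t).length_le (prefix_lcp c c t List.prefix_rfl h).length_le))

end Lcp

section FG
open FreeGroup
variable {α : Type*} [DecidableEq α]

/-- no cancelling adjacent pair -/
def NC (w : List (α × Bool)) : Prop :=
  List.Chain' (fun a b => ¬(a.1 = b.1 ∧ a.2 = !b.2)) w

theorem reduce_eq_self_of_nc : ∀ {w : List (α × Bool)}, NC w → reduce w = w := by
  intro w
  induction w with
  | nil => intro _; rfl
  | cons x t ih =>
    intro h
    have ht : reduce t = t := ih h.tail
    rw [reduce.cons, ht]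
    cases t with
    | nil => rfl
    | cons hd tl =>
      have hx : ¬(x.1 = hd.1 ∧ x.2 = !hd.2) := (List.isChain_cons_cons.mp h).1
      simp [hx]

theorem exists_of_not_chain' {R : β → β → Prop} :
    ∀ {l : List β}, ¬ l.Chain' R → ∃ u a b v, l = u ++ a :: b :: v ∧ ¬ R a b := by
  intro l
  induction l with
  | nil => intro h; exact absurd List.isChain_nil h
  | cons x t ih =>
    cases t with
    | nil => intro h; exact absurd (List.isChain_singleton x) h
    | cons y s =>
      intro h
      unfold List.Chain' at h
      rw [List.isChain_cons_cons] at h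
      by_cases hxy : R x y
      · obtain ⟨u, a, b, v, heq, hr⟩ := ih (fun hc => h ⟨hxy, hc⟩)
        exact ⟨x :: u, a, b, v, by rw [List.cons_append, ← heq], hr⟩
      · exact ⟨[], x, y, s, rfl, hxy⟩

theorem nc_toWord (x : FreeGroup α) : NC x.toWord := by
  by_contra h
  obtain ⟨u, a, b, v, hw, hr⟩ := exists_of_not_chain' h
  rw [not_not] at hr
  obtain ⟨h1, h2⟩ := hr
  have ha : a = (a.1, a.2) := rfl
  have hb : b = (a.1, !a.2) := by
    rw [Prod.ext_iff]; constructor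
    · exact h1.symm
    · rw [h2, Bool.not_not]
  have : reduce x.toWord = u ++ (a.1, a.2) :: (a.1, !a.2) :: v := by
    rw [reduce_toWord, hw, ← ha, ← hb]
  exact reduce.not this

theorem nc_of_prefix {w v : List (α × Bool)} (h : NC w) (hp : v <+: w) : NC v :=
  List.IsChain.prefix h hp

theorem nc_of_suffix {w v : List (α × Bool)} (h : NC w) (hp : v <:+ w) : NC v :=
  List.IsChain.suffix h hp

theorem nc_invRev {w : List (α × Bool)} (h : NC w) : NC (invRev w) := by
  unfold NC List.Chain' at *
  rw [invRev, List.isChain_reverse, List.isChain_map]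
  refine h.imp ?_
  rintro ⟨a1, a2⟩ ⟨b1, b2⟩ hab hc
  apply hab
  simp only [flip] at hc
  obtain ⟨hc1, hc2⟩ := hc
  simp only [Bool.not_not] at hc2
  exact ⟨hc1.symm, hc2.symm⟩

/-- junction: if heads differ, `invRev a ++ b` is reduced. -/
theorem nc_junction {a b : List (α × Bool)} (ha : NC a) (hb : NC b)
    (hne : ∀ x ∈ a.head?, ∀ y ∈ b.head?, x ≠ y) : NC (invRev a ++ b) := by
  unfold NC List.Chain'
  rw [List.isChain_append]
  refine ⟨nc_invRev ha, hb, ?_⟩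
  intro x hx y hy
  cases a with
  | nil => simp [invRev] at hx
  | cons a0 as =>
    cases b with
    | nil => simp at hy
    | cons b0 bs =>
      obtain ⟨a01, a02⟩ := a0
      obtain ⟨b01, b02⟩ := b0
      have hxv : x = (a01, !a02) := by
        have hgl : (invRev ((a01, a02) :: as)).getLast? =
            some ((fun g : α × Bool => (g.1, !g.2)) (a01, a02)) := by
          rw [invRev, List.getLast?_reverse, List.head?_map]
          rfl
        rw [hgl] at hx
        simpa using hx.symm
      have hyv : y = (b01, b02) := by simpa using hy.symm
      have hne' : ((a01, a02) : α × Bool) ≠ (b01, b02) := hne _ (by simp) _ (by simp)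
      subst hxv hyv
      rintro ⟨h1, h2⟩
      apply hne'
      have h1' : a01 = b01 := h1
      have h2' : (!a02) = (!b02) := h2
      rw [Prod.ext_iff]
      exact ⟨h1', by cases a02 <;> cases b02 <;> simp_all⟩

theorem lcp_heads_ne : ∀ (a b : List (α × Bool)), lcp a b = [] →
    ∀ x ∈ a.head?, ∀ y ∈ b.head?, x ≠ y := by
  intro a b hl x hx y hy
  cases a with
  | nil => simp at hx
  | cons a0 as =>
    cases b with
    | nil => simp at hy
    | cons b0 bs =>
      simp only [List.head?_cons, Option.mem_def, Option.some_inj] at hx hy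
      subst hx
      subst hy
      intro hxy
      rw [show lcp (a0 :: as) (b0 :: bs) = a0 :: lcp as bs by simp [lcp, hxy]] at hl
      exact nomatch hl

/-- key distance formula in the free group tree -/
theorem dist_formula_aux : ∀ (a b : List (α × Bool)), NC a → NC b →
    ((FreeGroup.mk a)⁻¹ * FreeGroup.mk b).toWord.length + 2 * (lcp a b).length
      = a.length + b.length := by
  intro a
  induction a with
  | nil =>
    intro b _ hb
    simp [lcp, reduce_eq_self_of_nc hb]
  | cons a0 as ih =>
    intro b ha hb
    cases b with
    | nil =>
      rw [lcp_nil_right]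
      have hmk1 : FreeGroup.mk ([] : List (α × Bool)) = 1 := by
        rw [FreeGroup.one_eq_mk]
      have : ((FreeGroup.mk (a0 :: as))⁻¹ * FreeGroup.mk []).toWord
          = invRev (a0 :: as) := by
        rw [hmk1, mul_one, FreeGroup.inv_mk, FreeGroup.toWord_mk,
          reduce_eq_self_of_nc (nc_invRev ha)]
      rw [this]
      simp [FreeGroup.invRev_length]
    | cons b0 bs =>
      by_cases h : a0 = b0
      · subst h
        have key : (FreeGroup.mk (a0 :: as))⁻¹ * FreeGroup.mk (a0 :: bs)
            = (FreeGroup.mk as)⁻¹ * FreeGroup.mk bs := by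
          rw [show (a0 :: as) = [a0] ++ as from rfl, show (a0 :: bs) = [a0] ++ bs from rfl,
            ← FreeGroup.mul_mk, ← FreeGroup.mul_mk]
          group
        rw [key, show lcp (a0 :: as) (a0 :: bs) = a0 :: lcp as bs by simp [lcp]]
        have := ih bs ha.tail hb.tail
        simp only [List.length_cons]
        omega
      · rw [show lcp (a0 :: as) (b0 :: bs) = [] by simp [lcp, h]]
        have hnc : NC (invRev (a0 :: as) ++ (b0 :: bs)) :=
          nc_junction ha hb (lcp_heads_ne _ _ (by simp [lcp, h]))
        have : ((FreeGroup.mk (a0 :: as))⁻¹ * FreeGroup.mk (b0 :: bs)).toWord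
            = invRev (a0 :: as) ++ (b0 :: bs) := by
          rw [FreeGroup.inv_mk, FreeGroup.mul_mk, FreeGroup.toWord_mk,
            reduce_eq_self_of_nc hnc]
        rw [this]
        simp [FreeGroup.invRev_length]

theorem dist_formula (x y : FreeGroup α) :
    (x⁻¹ * y).toWord.length + 2 * (lcp x.toWord y.toWord).length
      = x.toWord.length + y.toWord.length := by
  have := dist_formula_aux x.toWord y.toWord (nc_toWord x) (nc_toWord y)
  rwa [FreeGroup.mk_toWord, FreeGroup.mk_toWord] at this

theorem len_mul_le (x y : FreeGroup α) :
    (x * y).toWord.length ≤ x.toWord.length + y.toWord.length := by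
  have := (FreeGroup.toWord_mul_sublist x y).length_le
  simpa using this

theorem len_inv (x : FreeGroup α) : (x⁻¹).toWord.length = x.toWord.length := by
  rw [FreeGroup.toWord_inv, FreeGroup.invRev_length]


/-- The key geometric splitting lemma: a coarse path in the tree (free group)
from `1` to a short element passes near both endpoints simultaneously. -/
theorem split_lemma (L K n : ℕ) (hK : 3*L + 3 ≤ K) (hn : 2 ≤ n)
    (F : ℕ → FreeGroup α) (hF0 : F 0 = 1)
    (hstep : ∀ s, s < n → ((F s)⁻¹ * F (s+1)).toWord.length ≤ L)
    (hfK : (F n).toWord.length ≤ K) :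
    ∃ j, 0 < j ∧ j < n ∧ (F j).toWord.length ≤ K ∧
      ((F j)⁻¹ * F n).toWord.length ≤ K := by
  classical
  by_cases hsmall : (F n).toWord.length + L ≤ K
  · refine ⟨1, one_pos, by omega, ?_, ?_⟩
    · have h1 : ((F 0)⁻¹ * F 1).toWord.length ≤ L := hstep 0 (by omega)
      rw [hF0, inv_one, one_mul] at h1
      omega
    · have hm := len_mul_le (F 1)⁻¹ (F n)
      rw [len_inv] at hm
      have h1 : ((F 0)⁻¹ * F 1).toWord.length ≤ L := hstep 0 (by omega)
      rw [hF0, inv_one, one_mul] at h1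
      omega
  · push_neg at hsmall
    have halen : 2*L + 4 ≤ (F n).toWord.length := by omega
    set a := (F n).toWord with ha
    set t := a.length / 2 with htdef
    have ht2 : 2*t ≤ a.length ∧ a.length ≤ 2*t + 1 := by omega
    have htlen : t < a.length := by omega
    set p := a.take t with hp
    set m := FreeGroup.mk p with hm
    have hncp : NC p := nc_of_prefix (nc_toWord (F n)) (List.take_prefix t a)
    have hmw : m.toWord = p := by
      rw [hm, FreeGroup.toWord_mk, reduce_eq_self_of_nc hncp]
    have hplen : p.length = t := by
      rw [hp, List.length_take]; omega
    set q := a.take (t+1) with hq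
    have hqlen : q.length = t+1 := by
      rw [hq, List.length_take]; omega
    have hqa : q <+: a := List.take_prefix _ _
    have hpq : p <+: q := by
      rw [hp, hq, show a.take t = (a.take (t+1)).take t by
        rw [List.take_take]; congr 1; omega]
      exact List.take_prefix _ _
    have hside_0 : ¬ q <+: (F 0).toWord := by
      rw [hF0, FreeGroup.toWord_one]
      intro hcon
      have := hcon.length_le
      rw [hqlen] at this
      simp at this
    have hex : ∃ j, q <+: (F j).toWord := ⟨n, hqa⟩
    have hjside : q <+: (F (Nat.find hex)).toWord := Nat.find_spec hex
    have hjle : Nat.find hex ≤ n := Nat.find_min' hex hqa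
    set j := Nat.find hex with hj
    have hjpos : 1 ≤ j := by
      rcases Nat.eq_zero_or_pos j with h0 | h1
      · rw [h0] at hjside; exact absurd hjside hside_0
      · exact h1
    have hnotside : ¬ q <+: (F (j-1)).toWord := Nat.find_min hex (by omega)
    have hstepj : ((F (j-1))⁻¹ * F j).toWord.length ≤ L := by
      have := hstep (j-1) (by omega)
      rwa [show j-1+1 = j by omega] at this
    set s := lcp (F (j-1)).toWord (F j).toWord with hs
    have hsy : s <+: (F j).toWord := lcp_prefix_right _ _
    have hsx : s <+: (F (j-1)).toWord := lcp_prefix_left _ _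
    have hslen : s.length ≤ t := by
      by_contra hc
      push_neg at hc
      have hqs : q <+: s :=
        List.prefix_of_prefix_length_le hjside hsy (by omega)
      exact hnotside (hqs.trans hsx)
    have hyq : t+1 ≤ (F j).toWord.length := by
      have := hjside.length_le
      omega
    have hsp : s <+: p :=
      List.prefix_of_prefix_length_le hsy (hpq.trans hjside) (by omega)
    have hsl : s.length ≤ (lcp (F (j-1)).toWord p).length :=
      (prefix_lcp s (F (j-1)).toWord p hsx hsp).length_le
    have hdxm := dist_formula (F (j-1)) m
    rw [hmw] at hdxm
    have hdxy := dist_formula (F (j-1)) (F j)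
    rw [← hs] at hdxy
    have hdxmL : ((F (j-1))⁻¹ * m).toWord.length ≤ L := by omega
    have hdmf : (m⁻¹ * F n).toWord.length + t = a.length := by
      have hd := dist_formula m (F n)
      rw [hmw, ← ha, lcp_self_prefix (List.take_prefix t a)] at hd
      rw [← hp, hplen] at hd
      omega
    have hj2 : 2 ≤ j := by
      by_contra hcc
      push_neg at hcc
      have hj1 : j = 1 := by omega
      rw [hj1, show (1:ℕ)-1 = 0 from rfl, hF0, inv_one, one_mul, hmw] at hdxmL
      omega
    have hxlen : (F (j-1)).toWord.length ≤ t + L := by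
      have h1 : F (j-1) = m * (m⁻¹ * F (j-1)) := by group
      have h2 := len_mul_le m (m⁻¹ * F (j-1))
      rw [← h1, hmw] at h2
      have h3 : (m⁻¹ * F (j-1)) = ((F (j-1))⁻¹ * m)⁻¹ := by group
      rw [h3, len_inv] at h2
      omega
    have hxf : ((F (j-1))⁻¹ * F n).toWord.length ≤ L + (a.length - t) := by
      have h1 : (F (j-1))⁻¹ * F n = ((F (j-1))⁻¹ * m) * (m⁻¹ * F n) := by group
      have h2 := len_mul_le ((F (j-1))⁻¹ * m) (m⁻¹ * F n)
      rw [← h1] at h2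
      omega
    have f3 : (F (j-1)).toWord.length ≤ K := by omega
    have f4 : ((F (j-1))⁻¹ * F n).toWord.length ≤ K := by omega
    exact ⟨j-1, by omega, by omega, f3, f4⟩

end FG

end MSAux


namespace MSAux

open List

/-- all lists of length ≤ n with entries from A -/
def allLists {β : Type*} (A : List β) : ℕ → List (List β)
  | 0 => [[]]
  | n+1 => [] :: (A.flatMap fun a => (allLists A n).map (a :: ·))

theorem mem_allLists {β : Type*} (A : List β) :
    ∀ (n : ℕ) (w : List β), w.length ≤ n → (∀ x ∈ w, x ∈ A) → w ∈ allLists A n := by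
  intro n
  induction n with
  | zero =>
    intro w hw _
    rw [List.length_eq_zero_iff.mp (Nat.le_zero.mp hw)]
    exact List.mem_singleton.mpr rfl
  | succ n ih =>
    intro w hw hA
    cases w with
    | nil => exact List.mem_cons_self
    | cons a w' =>
      refine List.mem_cons_of_mem _ ?_
      rw [List.mem_flatMap]
      refine ⟨a, hA a (by simp), ?_⟩
      rw [List.mem_map]
      exact ⟨w', ih w' (by simpa using hw) (fun x hx => hA x (by simp [hx])), rfl⟩

end MSAux

namespace VFCF

noncomputable section

open List FreeGroup MSAux

universe u

variable {X : Type} [Fintype X] {G : Type u} [Group G]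

/-- all the data needed for the construction -/
structure Ctx (X : Type) [Fintype X] (G : Type u) [Group G] where
  α : FreeMonoid X →* G
  g : G
  H : Subgroup G
  ι : Type u
  dec : DecidableEq ι
  e : ↥H ≃* FreeGroup ι
  m : ℕ
  qe : Quotient (QuotientGroup.rightRel H) ≃ Fin m

namespace Ctx

variable (C : Ctx X G)

def rep (i : Fin C.m) : G := (C.qe.symm i).out

def idx (x : G) : Fin C.m := C.qe (Quotient.mk (QuotientGroup.rightRel C.H) x)

theorem idx_rep (i : Fin C.m) : C.idx (C.rep i) = i := by
  unfold idx rep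
  rw [Quotient.out_eq]
  exact C.qe.apply_symm_apply i

theorem phi_mem (x : G) : x * (C.rep (C.idx x))⁻¹ ∈ C.H := by
  have h1 : Quotient.mk (QuotientGroup.rightRel C.H) (C.rep (C.idx x))
      = Quotient.mk (QuotientGroup.rightRel C.H) x := by
    unfold rep idx
    rw [Quotient.out_eq, Equiv.symm_apply_apply]
  have h2 := Quotient.exact h1
  exact (QuotientGroup.rightRel_apply).mp h2

def phi (x : G) : ↥C.H := ⟨x * (C.rep (C.idx x))⁻¹, C.phi_mem x⟩

theorem phi_spec (x : G) : (C.phi x : G) * C.rep (C.idx x) = x := by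
  simp [phi]

theorem decomp_unique (x : G) (f : ↥C.H) (j : Fin C.m) (h : x = ↑f * C.rep j) :
    C.idx x = j ∧ C.phi x = f := by
  have hrel : Quotient.mk (QuotientGroup.rightRel C.H) (C.rep j)
      = Quotient.mk (QuotientGroup.rightRel C.H) x := by
    apply Quotient.sound
    exact QuotientGroup.rightRel_apply.mpr (by rw [h]; simpa using f.2)
  have hj : C.idx x = j := by
    unfold idx
    rw [← hrel]
    have : Quotient.mk (QuotientGroup.rightRel C.H) (C.rep j) = C.qe.symm j := by
      unfold rep; exact Quotient.out_eq _
    rw [this, Equiv.apply_symm_apply]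
  refine ⟨hj, ?_⟩
  apply Subtype.ext
  show x * (C.rep (C.idx x))⁻¹ = ↑f
  rw [hj, h]
  group

theorem phi_rep (i : Fin C.m) : C.phi (C.rep i) = 1 :=
  (C.decomp_unique (C.rep i) 1 i (by simp)).2

def sigma (i : Fin C.m) (x : X) : ↥C.H := C.phi (C.rep i * C.α (FreeMonoid.of x))

def fg : ↥C.H := C.phi (C.rep (C.idx 1) * C.g)

def jg : Fin C.m := C.idx (C.rep (C.idx 1) * C.g)

/-- the reduced word of (the free-group image of) a subgroup element -/
def ew (h : ↥C.H) : List (C.ι × Bool) := letI := C.dec; (C.e h).toWord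

/-- relevant letters -/
def S₀ : List C.ι :=
  ((Finset.univ : Finset (Fin C.m × X)).toList.flatMap
    fun p => (C.ew (C.sigma p.1 p.2)).map Prod.fst) ++ (C.ew C.fg).map Prod.fst

def L₀ : ℕ :=
  (Finset.univ : Finset (Fin C.m × X)).sup fun p => (C.ew (C.sigma p.1 p.2)).length

def K : ℕ := 3 * C.L₀ + 3 + (C.ew C.fg).length

theorem ew_sigma_le (i : Fin C.m) (x : X) : (C.ew (C.sigma i x)).length ≤ C.L₀ :=
  Finset.le_sup (f := fun p : Fin C.m × X => (C.ew (C.sigma p.1 p.2)).length)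
    (Finset.mem_univ (i, x))

def Good (f : FreeGroup C.ι) : Prop := letI := C.dec; ∀ a ∈ f.toWord, a.1 ∈ C.S₀

theorem good_sigma (i : Fin C.m) (x : X) : C.Good (C.e (C.sigma i x)) := by
  intro a ha
  unfold S₀
  rw [List.mem_append]
  left
  rw [List.mem_flatMap]
  exact ⟨(i, x), by simp, List.mem_map_of_mem ha⟩

theorem good_fg : C.Good (C.e C.fg) := by
  intro a ha
  unfold S₀
  rw [List.mem_append]
  right
  exact List.mem_map_of_mem ha

theorem good_one : C.Good 1 := by
  intro a ha
  letI := C.dec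
  rw [FreeGroup.toWord_one] at ha
  exact absurd ha List.not_mem_nil

theorem good_mul {f₁ f₂ : FreeGroup C.ι} (h₁ : C.Good f₁) (h₂ : C.Good f₂) :
    C.Good (f₁ * f₂) := by
  letI := C.dec
  intro a ha
  have := (FreeGroup.toWord_mul_sublist f₁ f₂).subset ha
  rw [List.mem_append] at this
  exact this.elim (h₁ a) (h₂ a)

theorem good_inv {f : FreeGroup C.ι} (h : C.Good f) : C.Good f⁻¹ := by
  letI := C.dec
  intro a ha
  rw [FreeGroup.toWord_inv, FreeGroup.invRev] at ha
  rw [List.mem_reverse, List.mem_map] at ha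
  obtain ⟨b, hb, rfl⟩ := ha
  exact h b hb

def enc (f : FreeGroup C.ι) : List (ℕ × Bool) :=
  letI := C.dec
  f.toWord.map (fun ab => (C.S₀.idxOf ab.1, ab.2))

def dcd (w : List (ℕ × Bool)) : FreeGroup C.ι :=
  FreeGroup.mk (w.filterMap (fun nb => (C.S₀[nb.1]?).map (fun a => (a, nb.2))))

theorem good_dcd (w : List (ℕ × Bool)) : C.Good (C.dcd w) := by
  letI := C.dec
  intro a ha
  unfold dcd at ha
  rw [FreeGroup.toWord_mk] at ha
  have hsub : FreeGroup.reduce (w.filterMap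
      (fun nb => (C.S₀[nb.1]?).map (fun a => (a, nb.2)))) <+
      w.filterMap (fun nb => (C.S₀[nb.1]?).map (fun a => (a, nb.2))) :=
    FreeGroup.Red.sublist FreeGroup.reduce.red
  have ha2 := hsub.subset ha
  rw [List.mem_filterMap] at ha2
  obtain ⟨nb, _, hnb⟩ := ha2
  rw [Option.map_eq_some_iff] at hnb
  obtain ⟨b, hb, hba⟩ := hnb
  have hbmem := List.mem_of_getElem? hb
  rw [← hba] at *
  exact hbmem

theorem dcd_enc {f : FreeGroup C.ι} (hf : C.Good f) : C.dcd (C.enc f) = f := by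
  letI := C.dec
  unfold dcd enc
  rw [List.filterMap_map]
  have : ∀ (tw : List (C.ι × Bool)), (∀ a ∈ tw, a.1 ∈ C.S₀) →
      tw.filterMap ((fun nb : ℕ × Bool => (C.S₀[nb.1]?).map (fun a => (a, nb.2))) ∘
        (fun ab : C.ι × Bool => (C.S₀.idxOf ab.1, ab.2))) = tw := by
    intro tw
    induction tw with
    | nil => intro _; rfl
    | cons ab tw' ih =>
      intro hmem
      rw [List.filterMap_cons]
      have h1 : C.S₀[C.S₀.idxOf ab.1]? = some ab.1 :=
        List.getElem?_idxOf (hmem ab (by simp))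
      simp only [Function.comp_apply, h1, Option.map_some]
      exact congrArg (List.cons ab) (ih (fun a ha => hmem a (by simp [ha])))
  rw [this f.toWord hf, FreeGroup.mk_toWord]


/-! ### The grammar -/

def NTt : Type := Option (Fin C.m × List (ℕ × Bool) × Fin C.m)

def nt (i : Fin C.m) (f : ↥C.H) (j : Fin C.m) : C.NTt := some (i, C.enc (C.e f), j)

def allP : List (ℕ × Bool) := (List.range C.S₀.length).flatMap fun n => [(n, true), (n, false)]

def allW : List (List (ℕ × Bool)) := allLists C.allP C.K

theorem enc_mem_allW {f : ↥C.H} (hg : C.Good (C.e f)) (hl : (C.ew f).length ≤ C.K) :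
    C.enc (C.e f) ∈ C.allW := by
  apply mem_allLists
  · show (C.enc (C.e f)).length ≤ C.K
    unfold enc
    rw [List.length_map]
    exact hl
  · intro x hx
    unfold enc at hx
    rw [List.mem_map] at hx
    obtain ⟨ab, hab, rfl⟩ := hx
    have hmem : ab.1 ∈ C.S₀ := hg ab hab
    unfold allP
    rw [List.mem_flatMap]
    letI := C.dec
    refine ⟨C.S₀.idxOf ab.1, ?_, ?_⟩
    · rw [List.mem_range]
      exact List.idxOf_lt_length_iff.mpr hmem
    · cases hb : ab.2 <;> simp

def ruleStart : ContextFreeRule X C.NTt :=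
  ⟨none, [Symbol.nonterminal (C.nt (C.idx 1) C.fg C.jg)]⟩

def ruleEps (i : Fin C.m) : ContextFreeRule X C.NTt := ⟨C.nt i 1 i, []⟩

def ruleChar (i : Fin C.m) (x : X) : ContextFreeRule X C.NTt :=
  ⟨C.nt i (C.sigma i x) (C.idx (C.rep i * C.α (FreeMonoid.of x))), [Symbol.terminal x]⟩

def ruleBin (i j k : Fin C.m) (w₁ w₂ : List (ℕ × Bool)) : ContextFreeRule X C.NTt :=
  ⟨some (i, C.enc (C.dcd w₁ * C.dcd w₂), k),
   [Symbol.nonterminal (some (i, w₁, j)), Symbol.nonterminal (some (j, w₂, k))]⟩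

def rulesL : List (ContextFreeRule X C.NTt) :=
  C.ruleStart :: (((List.finRange C.m).map C.ruleEps)
  ++ ((List.finRange C.m).flatMap fun i =>
      (Finset.univ : Finset X).toList.map fun x => C.ruleChar i x)
  ++ ((List.finRange C.m).flatMap fun i => (List.finRange C.m).flatMap fun j =>
      (List.finRange C.m).flatMap fun k => C.allW.flatMap fun w₁ =>
        C.allW.map fun w₂ => C.ruleBin i j k w₁ w₂))

def grammar : ContextFreeGrammar X :=
  ⟨C.NTt, none, @List.toFinset _ (Classical.decEq _) C.rulesL⟩

theorem mem_rules_iff {r : ContextFreeRule X C.NTt} :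
    r ∈ C.grammar.rules ↔ r ∈ C.rulesL := by
  show r ∈ @List.toFinset _ (Classical.decEq _) C.rulesL ↔ _
  exact @List.mem_toFinset _ (Classical.decEq _) _ _

/-! ### Valuation and soundness -/

def val : Symbol X C.NTt → G
  | .terminal x => C.α (FreeMonoid.of x)
  | .nonterminal none => C.g
  | .nonterminal (some (i, w, j)) =>
      (C.rep i)⁻¹ * ((C.e.symm (C.dcd w) : ↥C.H) : G) * C.rep j

def sval (l : List (Symbol X C.NTt)) : G := (l.map C.val).prod

theorem sval_append (u v : List (Symbol X C.NTt)) :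
    C.sval (u ++ v) = C.sval u * C.sval v := by
  unfold sval
  rw [List.map_append, List.prod_append]

theorem val_nt {f : ↥C.H} (hg : C.Good (C.e f)) (i j : Fin C.m) :
    C.val (Symbol.nonterminal (C.nt i f j)) = (C.rep i)⁻¹ * ↑f * C.rep j := by
  show (C.rep i)⁻¹ * ((C.e.symm (C.dcd (C.enc (C.e f))) : ↥C.H) : G) * C.rep j = _
  rw [C.dcd_enc hg, MulEquiv.symm_apply_apply]

theorem rule_sound : ∀ r ∈ C.rulesL,
    C.sval r.output = C.val (Symbol.nonterminal r.input) := by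
  intro r hr
  unfold rulesL at hr
  rw [List.mem_cons, List.mem_append, List.mem_append] at hr
  rcases hr with hr | (hr | hr) | hr
  · -- start rule
    subst hr
    show C.sval [Symbol.nonterminal (C.nt (C.idx 1) C.fg C.jg)] = C.g
    unfold sval
    rw [List.map_singleton, List.prod_singleton, val_nt C C.good_fg]
    have hspec := C.phi_spec (C.rep (C.idx 1) * C.g)
    show (C.rep (C.idx 1))⁻¹ * ↑C.fg * C.rep C.jg = C.g
    unfold fg jg
    rw [mul_assoc, hspec]
    group
  · -- eps rules
    rw [List.mem_map] at hr
    obtain ⟨i, _, rfl⟩ := hr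
    show C.sval [] = C.val (Symbol.nonterminal (C.nt i 1 i))
    rw [val_nt C (by rw [_root_.map_one C.e]; exact C.good_one)]
    unfold sval
    simp
  · -- char rules
    rw [List.mem_flatMap] at hr
    obtain ⟨i, _, hr⟩ := hr
    rw [List.mem_map] at hr
    obtain ⟨x, _, rfl⟩ := hr
    show C.sval [Symbol.terminal x]
        = C.val (Symbol.nonterminal (C.nt i (C.sigma i x) (C.idx (C.rep i * C.α (FreeMonoid.of x)))))
    rw [val_nt C (C.good_sigma i x)]
    unfold sval sigma
    rw [List.map_singleton, List.prod_singleton]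
    have hspec := C.phi_spec (C.rep i * C.α (FreeMonoid.of x))
    show C.val (Symbol.terminal x) = _
    rw [mul_assoc, hspec]
    show C.α (FreeMonoid.of x) = _
    group
  · -- binary rules
    simp only [List.mem_flatMap, List.mem_map] at hr
    obtain ⟨i, _, j, _, k, _, w₁, _, w₂, _, rfl⟩ := hr
    show C.sval [Symbol.nonterminal (some (i, w₁, j)), Symbol.nonterminal (some (j, w₂, k))]
        = C.val (Symbol.nonterminal (some (i, C.enc (C.dcd w₁ * C.dcd w₂), k)))
    show _ = (C.rep i)⁻¹ * ((C.e.symm (C.dcd (C.enc (C.dcd w₁ * C.dcd w₂))) : ↥C.H) : G) * C.rep k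
    rw [C.dcd_enc (C.good_mul (C.good_dcd w₁) (C.good_dcd w₂)), _root_.map_mul]
    unfold sval
    show (C.rep i)⁻¹ * ((C.e.symm (C.dcd w₁) : ↥C.H) : G) * C.rep j *
        ((C.rep j)⁻¹ * ((C.e.symm (C.dcd w₂) : ↥C.H) : G) * C.rep k * 1) = _
    push_cast
    group

theorem derives_sval {u v : List (Symbol X C.NTt)} (h : C.grammar.Derives u v) :
    C.sval u = C.sval v := by
  induction h with
  | refl => rfl
  | tail _ step ih =>
    obtain ⟨r, hrmem, hrw⟩ := step
    obtain ⟨p, q, rfl, rfl⟩ := hrw.exists_parts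
    erw [ih, C.sval_append, C.sval_append, C.sval_append, C.sval_append]
    have hs : C.sval [Symbol.nonterminal r.input] = C.val (Symbol.nonterminal r.input) := by
      unfold sval
      rw [List.map_singleton, List.prod_singleton]
    erw [hs, C.rule_sound r ((C.mem_rules_iff).mp hrmem)]

theorem sval_terminal (w : List X) :
    C.sval (w.map Symbol.terminal) = C.α (FreeMonoid.ofList w) := by
  induction w with
  | nil =>
    show C.sval [] = C.α (FreeMonoid.ofList [])
    unfold sval
    simp
  | cons x w' ih =>
    show C.sval (Symbol.terminal x :: w'.map Symbol.terminal) = _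
    have : (Symbol.terminal x :: w'.map Symbol.terminal : List (Symbol X C.NTt))
        = [Symbol.terminal x] ++ w'.map Symbol.terminal := rfl
    rw [this, C.sval_append, ih, FreeMonoid.ofList_cons, _root_.map_mul]
    congr 1
    unfold sval
    simp [val]

theorem lang_sound {w : List X} (h : w ∈ C.grammar.language) :
    C.α (FreeMonoid.ofList w) = C.g := by
  have hd : C.grammar.Derives [Symbol.nonterminal (none : C.NTt)] (w.map Symbol.terminal) := h
  have := C.derives_sval hd
  erw [C.sval_terminal] at this
  rw [← this]
  unfold sval
  exact List.prod_singleton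


/-! ### Rule membership helpers -/

theorem ruleStart_mem : C.ruleStart ∈ C.rulesL := List.mem_cons_self

theorem ruleEps_mem (i : Fin C.m) : C.ruleEps i ∈ C.rulesL := by
  unfold rulesL
  refine List.mem_cons_of_mem _ ?_
  refine List.mem_append_left _ (List.mem_append_left _ ?_)
  exact List.mem_map_of_mem (List.mem_finRange i)

theorem ruleChar_mem (i : Fin C.m) (x : X) : C.ruleChar i x ∈ C.rulesL := by
  unfold rulesL
  refine List.mem_cons_of_mem _ ?_
  refine List.mem_append_left _ (List.mem_append_right _ ?_)
  rw [List.mem_flatMap]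
  refine ⟨i, List.mem_finRange i, ?_⟩
  exact List.mem_map_of_mem (Finset.mem_toList.mpr (Finset.mem_univ x))

theorem ruleBin_mem (i j k : Fin C.m) {w₁ w₂ : List (ℕ × Bool)}
    (h₁ : w₁ ∈ C.allW) (h₂ : w₂ ∈ C.allW) : C.ruleBin i j k w₁ w₂ ∈ C.rulesL := by
  unfold rulesL
  refine List.mem_cons_of_mem _ (List.mem_append_right _ ?_)
  rw [List.mem_flatMap]
  refine ⟨i, List.mem_finRange i, ?_⟩
  rw [List.mem_flatMap]
  refine ⟨j, List.mem_finRange j, ?_⟩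
  rw [List.mem_flatMap]
  refine ⟨k, List.mem_finRange k, ?_⟩
  rw [List.mem_flatMap]
  refine ⟨w₁, h₁, ?_⟩
  exact List.mem_map_of_mem h₂

/-! ### Completeness -/

theorem phi_step (zz : G) (x : X) :
    C.phi (zz * C.α (FreeMonoid.of x)) = C.phi zz * C.sigma (C.idx zz) x := by
  refine (C.decomp_unique _ (C.phi zz * C.sigma (C.idx zz) x)
    (C.idx (C.rep (C.idx zz) * C.α (FreeMonoid.of x))) ?_).2
  push_cast
  have h1 := C.phi_spec (C.rep (C.idx zz) * C.α (FreeMonoid.of x))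
  have h2 := C.phi_spec zz
  show zz * C.α (FreeMonoid.of x)
      = ↑(C.phi zz) * ↑(C.sigma (C.idx zz) x) * C.rep (C.idx (C.rep (C.idx zz) * C.α (FreeMonoid.of x)))
  unfold sigma
  rw [mul_assoc, h1, ← mul_assoc, h2]

theorem complete : ∀ (n : ℕ) (w : List X), w.length = n → ∀ (i j : Fin C.m) (f : ↥C.H),
    C.rep i * C.α (FreeMonoid.ofList w) = ↑f * C.rep j →
    C.Good (C.e f) → (C.ew f).length ≤ C.K →
    C.grammar.Derives [Symbol.nonterminal (C.nt i f j)] (w.map Symbol.terminal) := by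
  letI : DecidableEq C.ι := C.dec
  intro n
  induction n using Nat.strong_induction_on with
  | _ n ih =>
  intro w hlen i j f heq hgood hnorm
  rcases n with _ | n1
  · -- n = 0
    have hw : w = [] := List.length_eq_zero_iff.mp hlen
    subst hw
    have heq' : C.rep i = ↑f * C.rep j := by simpa using heq
    obtain ⟨hj, hf⟩ := C.decomp_unique _ f j heq'
    rw [C.idx_rep] at hj
    have hf1 : f = 1 := by rw [← hf, C.phi_rep]
    subst hj
    subst hf1
    refine ContextFreeGrammar.Produces.single
      ⟨C.ruleEps i, (C.mem_rules_iff).mpr (C.ruleEps_mem i), ?_⟩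
    exact ContextFreeRule.Rewrites.input_output (r := C.ruleEps i)
  rcases n1 with _ | n2
  · -- n = 1
    obtain ⟨x, hw⟩ := List.length_eq_one_iff.mp hlen
    subst hw
    have heq' : C.rep i * C.α (FreeMonoid.of x) = ↑f * C.rep j := by
      simpa using heq
    obtain ⟨hj, hf⟩ := C.decomp_unique _ f j heq'
    subst hj
    have hfs : f = C.sigma i x := by rw [← hf]; rfl
    subst hfs
    refine ContextFreeGrammar.Produces.single
      ⟨C.ruleChar i x, (C.mem_rules_iff).mpr (C.ruleChar_mem i x), ?_⟩
    exact ContextFreeRule.Rewrites.input_output (r := C.ruleChar i x)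
  · -- n = n2 + 2
    set N := w.length with hN
    have hN2 : N = n2 + 2 := hlen
    set z : ℕ → G := fun s => C.rep i * C.α (FreeMonoid.ofList (w.take s)) with hz
    set F : ℕ → FreeGroup C.ι := fun s => C.e (C.phi (z s)) with hF
    have hz0 : z 0 = C.rep i := by
      rw [hz]; simp
    have hphiz0 : C.phi (z 0) = 1 := by rw [hz0, C.phi_rep]
    have hF0 : F 0 = 1 := by rw [hF]; show C.e (C.phi (z 0)) = 1; rw [hphiz0, _root_.map_one]
    have hstep : ∀ s (hs : s < w.length),
        C.phi (z (s+1)) = C.phi (z s) * C.sigma (C.idx (z s)) (w.get ⟨s, hs⟩) := by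
      intro s hs
      have htake : w.take (s+1) = w.take s ++ [w.get ⟨s, hs⟩] := by
        rw [List.take_succ]
        congr 1
        rw [List.getElem?_eq_getElem hs]
        rfl
      have hzz : z (s+1) = z s * C.α (FreeMonoid.of (w.get ⟨s, hs⟩)) := by
        simp only [hz]
        rw [htake, FreeMonoid.ofList_append, FreeMonoid.ofList_singleton,
          _root_.map_mul, ← mul_assoc]
      rw [hzz]
      exact C.phi_step (z s) _
    have hgoodF : ∀ s, s ≤ N → C.Good (F s) := by
      intro s
      induction s with
      | zero => intro _; rw [hF0]; exact C.good_one
      | succ s ihs =>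
        intro hs
        have hs' : s < w.length := by omega
        have hFs : F (s+1) = F s * C.e (C.sigma (C.idx (z s)) (w.get ⟨s, hs'⟩)) := by
          rw [hF]
          show C.e (C.phi (z (s+1))) = _
          rw [hstep s hs', _root_.map_mul]
        rw [hFs]
        exact C.good_mul (ihs (by omega)) (C.good_sigma _ _)
    have hstepF : ∀ s, s < N → ((F s)⁻¹ * F (s+1)).toWord.length ≤ C.L₀ := by
      intro s hs
      have hs' : s < w.length := by omega
      have hFs : (F s)⁻¹ * F (s+1) = C.e (C.sigma (C.idx (z s)) (w.get ⟨s, hs'⟩)) := by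
        rw [hF]
        show (C.e (C.phi (z s)))⁻¹ * C.e (C.phi (z (s+1))) = _
        rw [hstep s hs', _root_.map_mul]
        group
      rw [hFs]
      exact C.ew_sigma_le _ _
    have hzN : z N = ↑f * C.rep j := by
      rw [hz]
      show C.rep i * C.α (FreeMonoid.ofList (w.take N)) = _
      rw [hN, List.take_length]
      exact heq
    obtain ⟨hjN, hfN⟩ := C.decomp_unique _ f j hzN
    have hFN : F N = C.e f := by rw [hF]; show C.e (C.phi (z N)) = _; rw [hfN]
    have hfK : (F N).toWord.length ≤ C.K := by
      rw [hFN]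
      exact hnorm
    obtain ⟨j', hj'0, hj'N, hnorm1, hnorm2⟩ :=
      MSAux.split_lemma C.L₀ C.K N (by unfold K; omega) (by omega) F hF0 hstepF hfK
    set i' := C.idx (z j') with hi'
    set f₁ := C.phi (z j') with hf₁
    set f₂ := f₁⁻¹ * f with hf₂
    have hFj' : F j' = C.e f₁ := rfl
    have hef₂ : C.e f₂ = (F j')⁻¹ * F N := by
      rw [hf₂, _root_.map_mul, _root_.map_inv, hFj', hFN]
    have hgood₁ : C.Good (C.e f₁) := by rw [← hFj']; exact hgoodF j' (by omega)
    have hgood₂ : C.Good (C.e f₂) := by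
      rw [hef₂, hFj', hFN]
      exact C.good_mul (C.good_inv hgood₁) hgood
    have hnormf₁ : (C.ew f₁).length ≤ C.K := by
      show (C.e f₁).toWord.length ≤ C.K
      rw [← hFj']; exact hnorm1
    have hnormf₂ : (C.ew f₂).length ≤ C.K := by
      show (C.e f₂).toWord.length ≤ C.K
      rw [hef₂]; exact hnorm2
    have heqL : C.rep i * C.α (FreeMonoid.ofList (w.take j')) = ↑f₁ * C.rep i' := by
      rw [hf₁, hi']
      exact (C.phi_spec (z j')).symm
    have heqR : C.rep i' * C.α (FreeMonoid.ofList (w.drop j')) = ↑f₂ * C.rep j := by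
      have hsplitw : z j' * C.α (FreeMonoid.ofList (w.drop j')) = z N := by
        simp only [hz]
        rw [mul_assoc, ← _root_.map_mul, ← FreeMonoid.ofList_append, List.take_append_drop, hN,
          List.take_length]
      have hrepi' : C.rep i' = (↑f₁)⁻¹ * z j' := by
        rw [hf₁, hi', eq_inv_mul_iff_mul_eq]
        exact C.phi_spec (z j')
      rw [hrepi', hf₂]
      push_cast
      rw [mul_assoc, hsplitw, hzN]
      group
    have hlenTake : (w.take j').length = j' := by
      rw [List.length_take]; omega
    have hlenDrop : (w.drop j').length = N - j' := by
      rw [List.length_drop]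
    have hdL := ih j' (by omega) (w.take j') hlenTake i i' f₁ heqL hgood₁ hnormf₁
    have hdR := ih (N - j') (by omega) (w.drop j') hlenDrop i' j f₂ heqR hgood₂ hnormf₂
    -- assemble
    have hrule := C.ruleBin_mem i i' j (C.enc_mem_allW hgood₁ hnormf₁) (C.enc_mem_allW hgood₂ hnormf₂)
    have hinput : (C.ruleBin i i' j (C.enc (C.e f₁)) (C.enc (C.e f₂))).input = C.nt i f j := by
      show some (i, C.enc (C.dcd (C.enc (C.e f₁)) * C.dcd (C.enc (C.e f₂))), j)
          = some (i, C.enc (C.e f), j)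
      rw [C.dcd_enc hgood₁, C.dcd_enc hgood₂, ← _root_.map_mul,
        show f₁ * f₂ = f by rw [hf₂]; group]
    have hproduce : C.grammar.Produces [Symbol.nonterminal (C.nt i f j)]
        ([Symbol.nonterminal (C.nt i f₁ i')] ++ [Symbol.nonterminal (C.nt i' f₂ j)]) := by
      refine ⟨C.ruleBin i i' j (C.enc (C.e f₁)) (C.enc (C.e f₂)),
        (C.mem_rules_iff).mpr hrule, ?_⟩
      have h := ContextFreeRule.Rewrites.input_output
        (r := C.ruleBin i i' j (C.enc (C.e f₁)) (C.enc (C.e f₂)))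
      rw [hinput] at h
      exact h
    refine hproduce.trans_derives ?_
    have hstep1 := ContextFreeGrammar.Derives.append_right hdL
      [Symbol.nonterminal (C.nt i' f₂ j)]
    have hstep2 := ContextFreeGrammar.Derives.append_left hdR
      ((w.take j').map Symbol.terminal)
    have hfin : ((w.take j').map Symbol.terminal : List (Symbol X C.NTt))
        ++ (w.drop j').map Symbol.terminal = w.map Symbol.terminal := by
      rw [← List.map_append, List.take_append_drop]
    erw [← hfin]
    exact hstep1.trans hstep2

/-! ### The language of the grammar -/

theorem lang_eq : C.grammar.language = {w : List X | C.α (FreeMonoid.ofList w) = C.g} := by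
  ext w
  constructor
  · exact fun h => C.lang_sound h
  · intro hw
    show C.grammar.Derives [Symbol.nonterminal (none : C.NTt)] (w.map Symbol.terminal)
    have hstart : C.grammar.Produces [Symbol.nonterminal (none : C.NTt)]
        [Symbol.nonterminal (C.nt (C.idx 1) C.fg C.jg)] := by
      refine ⟨C.ruleStart, (C.mem_rules_iff).mpr C.ruleStart_mem, ?_⟩
      exact ContextFreeRule.Rewrites.input_output (r := C.ruleStart)
    refine hstart.trans_derives ?_
    apply C.complete w.length w rfl
    · show C.rep (C.idx 1) * C.α (FreeMonoid.ofList w) = ↑C.fg * C.rep C.jg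
      rw [hw]
      exact (C.phi_spec (C.rep (C.idx 1) * C.g)).symm
    · exact C.good_fg
    · unfold K; omega

end Ctx

end

end VFCF


universe u

def VirtuallyFree (G : Type u) [Group G] : Prop :=
  ∃ H : Subgroup G, H.FiniteIndex ∧ ∃ ι : Type u, Nonempty (H ≃* FreeGroup ι)

theorem preimage_contextFree_of_virtuallyFree
    (X : Type) [Fintype X] (G : Type u) [Group G] (hG : VirtuallyFree G)
    (α : FreeMonoid X →* G) (g : G) :
    Language.IsContextFree {w : List X | α (FreeMonoid.ofList w) = g} := by
  obtain ⟨H, hFI, ι, ⟨e⟩⟩ := hG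
  letI : DecidableEq ι := Classical.decEq ι
  have hfin : Finite (G ⧸ H) := Nat.finite_of_card_ne_zero hFI.index_ne_zero
  have hfin2 : Finite (Quotient (QuotientGroup.rightRel H)) :=
    Finite.of_equiv _ (QuotientGroup.quotientRightRelEquivQuotientLeftRel H).symm
  letI : Fintype (Quotient (QuotientGroup.rightRel H)) := Fintype.ofFinite _
  let C : VFCF.Ctx X G := ⟨α, g, H, ι, inferInstance, e, Fintype.card _, Fintype.equivFin _⟩
  exact ⟨C.grammar, C.lang_eq⟩
end

section
/- Let M be a monoid and let S, S′ ⊆ M \ {1} be two finite generating sets for M. Then the word problem WP_S(M) is a rational subset of the product monoid S* × S* if and only if WP_{S′}(M) is a rational subset of S′* × S′*. -/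
open List

/-- A subset `R` of a monoid `N` is rational if it is the image of a regular
language under a monoid homomorphism from a finitely generated free monoid. -/
def IsRationalSubset {N : Type*} [Monoid N] (R : Set N) : Prop :=
  ∃ (A : Type) (_ : Finite A) (φ : FreeMonoid A →* N) (L : Language A),
    L.IsRegular ∧ (fun w => φ (FreeMonoid.ofList w)) '' L = R

namespace WPRat

lemma finite_bddList (α : Type*) [Finite α] (K : ℕ) :
    Finite {l : List α // l.length ≤ K} := by
  haveI : Finite (Option α) := Finite.of_equiv _ (Equiv.optionEquivSumPUnit.{0} α).symm
  apply Finite.of_injective (fun l : {l : List α // l.length ≤ K} =>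
    (fun i : Fin (K+1) => l.val[i.val]?))
  intro l₁ l₂ h
  apply Subtype.ext
  apply List.ext_getElem?
  intro n
  by_cases hn : n < K + 1
  · exact congrFun h ⟨n, hn⟩
  · rw [List.getElem?_eq_none_iff.2 (le_trans l₁.2 (by omega)),
      List.getElem?_eq_none_iff.2 (le_trans l₂.2 (by omega))]

lemma map_ofList {α β : Type*} (e : α → β) (w : List α) :
    FreeMonoid.map e (FreeMonoid.ofList w) = FreeMonoid.ofList (w.map e) := by
  induction w with
  | nil => rfl
  | cons a w ih => simp [FreeMonoid.ofList_cons, ih]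

/-- Regularity of the language of a DFA with merely `Finite` states (any universe). -/
lemma accepts_isRegular {A : Type} {σ : Type*} [Finite σ] (M : DFA A σ) :
    M.accepts.IsRegular := by
  let e := Finite.equivFin σ
  let D : DFA A (Fin (Nat.card σ)) :=
    ⟨fun q a => e (M.step (e.symm q) a), e M.start, {q | e.symm q ∈ M.accept}⟩
  have hev : ∀ (w : List A) (q : σ), D.evalFrom (e q) w = e (M.evalFrom q w) := by
    intro w
    induction w with
    | nil => intro q; rfl
    | cons a w ih =>
      intro q
      have : D.evalFrom (e q) (a :: w) = D.evalFrom (D.step (e q) a) w := rfl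
      rw [this]
      have h2 : D.step (e q) a = e (M.step q a) := by simp [D]
      rw [h2, ih]
      rfl
  refine ⟨Fin (Nat.card σ), inferInstance, D, ?_⟩
  ext w
  rw [DFA.mem_accepts, DFA.mem_accepts]
  show D.evalFrom D.start w ∈ D.accept ↔ _
  have : D.start = e M.start := rfl
  rw [this, hev]
  simp [D, DFA.eval, DFA.evalFrom]

/-- To show rationality it suffices to exhibit a DFA over any finite alphabet
(in any universe). -/
lemma isRationalSubset_of_dfa {N : Type*} [Monoid N] {C σ : Type*} [Finite C] [Finite σ]
    (φ : FreeMonoid C →* N) (M : DFA C σ) (R : Set N)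
    (him : (fun w => φ (FreeMonoid.ofList w)) '' M.accepts = R) :
    IsRationalSubset R := by
  let n := Nat.card C
  let e : Fin n ≃ C := (Finite.equivFin C).symm
  let D : DFA (Fin n) σ := ⟨fun q i => M.step q (e i), M.start, M.accept⟩
  have hev : ∀ (w : List (Fin n)) (q : σ), D.evalFrom q w = M.evalFrom q (w.map e) := by
    intro w
    induction w with
    | nil => intro q; rfl
    | cons i w ih => intro q; exact ih (M.step q (e i))
  have hacc : ∀ w : List (Fin n), w ∈ D.accepts ↔ w.map e ∈ M.accepts := by
    intro w
    rw [DFA.mem_accepts, DFA.mem_accepts]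
    show D.evalFrom D.start w ∈ _ ↔ _
    rw [hev]
    rfl
  refine ⟨Fin n, inferInstance, φ.comp (FreeMonoid.map e), D.accepts,
    accepts_isRegular D, ?_⟩
  rw [← him]
  ext z
  constructor
  · rintro ⟨w, hw, rfl⟩
    exact ⟨w.map e, (hacc w).1 hw, by simp [map_ofList]⟩
  · rintro ⟨l, hl, rfl⟩
    refine ⟨l.map e.symm, (hacc _).2 (by simpa using (show l ∈ M.accepts from hl)), ?_⟩
    simp [map_ofList, List.map_map]

end WPRat
set_option linter.unusedSectionVars false



section Machine

variable {α A β σ : Type*}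

/-- Concatenation of the images of the letters of a list. -/
def FbL (f : β → List α) : List β → List α
  | [] => []
  | s :: u => f s ++ FbL f u

@[simp] lemma FbL_nil (f : β → List α) : FbL f [] = [] := rfl
@[simp] lemma FbL_cons (f : β → List α) (s : β) (u : List β) :
    FbL f (s :: u) = f s ++ FbL f u := rfl

variable [Fintype β] [Fintype A]

/-- Max length of a block. -/
def maxf (f : β → List α) : ℕ := Finset.univ.sup fun s : β => (f s).length

lemma length_le_maxf (f : β → List α) (s : β) : (f s).length ≤ maxf f := by
  exact Finset.le_sup (f := fun s : β => (f s).length) (Finset.mem_univ s)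

def maxX (x y : A → List α) : ℕ :=
  Finset.univ.sup fun a : A => max (x a).length (y a).length

lemma length_x_le (x y : A → List α) (a : A) : (x a).length ≤ maxX x y := by
  exact le_trans (le_max_left _ _)
    (Finset.le_sup (f := fun a : A => max (x a).length (y a).length) (Finset.mem_univ a))

lemma length_y_le (x y : A → List α) (a : A) : (y a).length ≤ maxX x y := by
  exact le_trans (le_max_right _ _)
    (Finset.le_sup (f := fun a : A => max (x a).length (y a).length) (Finset.mem_univ a))

variable (f : β → List α) (x y : A → List α) (K : ℕ) (D : DFA A σ)

open scoped Classical in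
/-- The transition function of the composed machine. -/
noncomputable def mstep :
    Option (σ × {l : List α // l.length ≤ K} × {l : List α // l.length ≤ K}) →
    (A ⊕ (β ⊕ β)) →
    Option (σ × {l : List α // l.length ≤ K} × {l : List α // l.length ≤ K})
  | none, _ => none
  | some (q, b₁, b₂), Sum.inl a =>
      if h : (b₁.1 ++ x a).length ≤ K ∧ (b₂.1 ++ y a).length ≤ K then
        some (D.step q a, ⟨b₁.1 ++ x a, h.1⟩, ⟨b₂.1 ++ y a, h.2⟩)
      else none
  | some (q, b₁, b₂), Sum.inr (Sum.inl s) =>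
      if h : f s <+: b₁.1 then
        some (q, ⟨b₁.1.drop (f s).length,
          le_trans (by rw [List.length_drop]; exact Nat.sub_le _ _) b₁.2⟩, b₂)
      else none
  | some (q, b₁, b₂), Sum.inr (Sum.inr s) =>
      if h : f s <+: b₂.1 then
        some (q, b₁, ⟨b₂.1.drop (f s).length,
          le_trans (by rw [List.length_drop]; exact Nat.sub_le _ _) b₂.2⟩)
      else none

/-- The composed machine. -/
noncomputable def Mach :
    DFA (A ⊕ (β ⊕ β))
      (Option (σ × {l : List α // l.length ≤ K} × {l : List α // l.length ≤ K})) :=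
  ⟨mstep f x y K D,
   some (D.start, ⟨[], Nat.zero_le K⟩, ⟨[], Nat.zero_le K⟩),
   {p | ∃ q ∈ D.accept, p = some (q, ⟨[], Nat.zero_le K⟩, ⟨[], Nat.zero_le K⟩)}⟩

lemma mach_evalFrom_cons (s) (c) (w : List (A ⊕ (β ⊕ β))) :
    (Mach f x y K D).evalFrom s (c :: w) =
      (Mach f x y K D).evalFrom (mstep f x y K D s c) w := rfl

lemma mach_evalFrom_append (s) (w₁ w₂ : List (A ⊕ (β ⊕ β))) :
    (Mach f x y K D).evalFrom s (w₁ ++ w₂) =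
      (Mach f x y K D).evalFrom ((Mach f x y K D).evalFrom s w₁) w₂ :=
  List.foldl_append

@[simp] lemma mstep_none (c : A ⊕ (β ⊕ β)) : mstep f x y K D none c = none := rfl

lemma mach_evalFrom_none (w : List (A ⊕ (β ⊕ β))) :
    (Mach f x y K D).evalFrom none w = none := by
  induction w with
  | nil => rfl
  | cons c w ih => rw [mach_evalFrom_cons, mstep_none]; exact ih

/-- Projections of a mixed word. -/
def pA : List (A ⊕ (β ⊕ β)) → List A :=
  List.filterMap fun c => Sum.elim some (fun _ => none) c

def p1 : List (A ⊕ (β ⊕ β)) → List β :=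
  List.filterMap fun c => Sum.elim (fun _ => none) (Sum.elim some fun _ => none) c

def p2 : List (A ⊕ (β ⊕ β)) → List β :=
  List.filterMap fun c => Sum.elim (fun _ => none) (Sum.elim (fun _ => none) some) c

@[simp] lemma pA_nil : pA ([] : List (A ⊕ (β ⊕ β))) = [] := rfl
@[simp] lemma p1_nil : p1 ([] : List (A ⊕ (β ⊕ β))) = [] := rfl
@[simp] lemma p2_nil : p2 ([] : List (A ⊕ (β ⊕ β))) = [] := rfl

@[simp] lemma pA_cons_inl (a : A) (w : List (A ⊕ (β ⊕ β))) :
    pA (Sum.inl a :: w) = a :: pA w := by simp [pA, List.filterMap_cons]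
@[simp] lemma pA_cons_inrl (s : β) (w : List (A ⊕ (β ⊕ β))) :
    pA (Sum.inr (Sum.inl s) :: w) = pA w := by simp [pA, List.filterMap_cons]
@[simp] lemma pA_cons_inrr (s : β) (w : List (A ⊕ (β ⊕ β))) :
    pA (Sum.inr (Sum.inr s) :: w) = pA w := by simp [pA, List.filterMap_cons]

@[simp] lemma p1_cons_inl (a : A) (w : List (A ⊕ (β ⊕ β))) :
    p1 (Sum.inl a :: w) = p1 w := by simp [p1, List.filterMap_cons]
@[simp] lemma p1_cons_inrl (s : β) (w : List (A ⊕ (β ⊕ β))) :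
    p1 (Sum.inr (Sum.inl s) :: w) = s :: p1 w := by simp [p1, List.filterMap_cons]
@[simp] lemma p1_cons_inrr (s : β) (w : List (A ⊕ (β ⊕ β))) :
    p1 (Sum.inr (Sum.inr s) :: w) = p1 w := by simp [p1, List.filterMap_cons]

@[simp] lemma p2_cons_inl (a : A) (w : List (A ⊕ (β ⊕ β))) :
    p2 (Sum.inl a :: w) = p2 w := by simp [p2, List.filterMap_cons]
@[simp] lemma p2_cons_inrl (s : β) (w : List (A ⊕ (β ⊕ β))) :
    p2 (Sum.inr (Sum.inl s) :: w) = p2 w := by simp [p2, List.filterMap_cons]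
@[simp] lemma p2_cons_inrr (s : β) (w : List (A ⊕ (β ⊕ β))) :
    p2 (Sum.inr (Sum.inr s) :: w) = s :: p2 w := by simp [p2, List.filterMap_cons]

@[simp] lemma pA_append (w₁ w₂ : List (A ⊕ (β ⊕ β))) :
    pA (w₁ ++ w₂) = pA w₁ ++ pA w₂ := List.filterMap_append
@[simp] lemma p1_append (w₁ w₂ : List (A ⊕ (β ⊕ β))) :
    p1 (w₁ ++ w₂) = p1 w₁ ++ p1 w₂ := List.filterMap_append
@[simp] lemma p2_append (w₁ w₂ : List (A ⊕ (β ⊕ β))) :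
    p2 (w₁ ++ w₂) = p2 w₁ ++ p2 w₂ := List.filterMap_append

@[simp] lemma pA_map1 (u : List β) :
    pA (u.map (fun s => (Sum.inr (Sum.inl s) : A ⊕ (β ⊕ β)))) = [] := by
  induction u with | nil => rfl | cons s u ih => simpa using ih
@[simp] lemma pA_map2 (u : List β) :
    pA (u.map (fun s => (Sum.inr (Sum.inr s) : A ⊕ (β ⊕ β)))) = [] := by
  induction u with | nil => rfl | cons s u ih => simpa using ih
@[simp] lemma p1_map1 (u : List β) :
    p1 (u.map (fun s => (Sum.inr (Sum.inl s) : A ⊕ (β ⊕ β)))) = u := by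
  induction u with | nil => rfl | cons s u ih => simpa using ih
@[simp] lemma p1_map2 (u : List β) :
    p1 (u.map (fun s => (Sum.inr (Sum.inr s) : A ⊕ (β ⊕ β)))) = [] := by
  induction u with | nil => rfl | cons s u ih => simpa using ih
@[simp] lemma p2_map1 (u : List β) :
    p2 (u.map (fun s => (Sum.inr (Sum.inl s) : A ⊕ (β ⊕ β)))) = [] := by
  induction u with | nil => rfl | cons s u ih => simpa using ih
@[simp] lemma p2_map2 (u : List β) :
    p2 (u.map (fun s => (Sum.inr (Sum.inr s) : A ⊕ (β ⊕ β)))) = u := by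
  induction u with | nil => rfl | cons s u ih => simpa using ih

end Machine


set_option linter.unusedSectionVars false

namespace WPRat

section Lemmas

variable {α A β σ : Type*} [Fintype β] [Fintype A]
variable (f : β → List α) (x y : A → List α) (K : ℕ) (D : DFA A σ)

lemma buf_eq {K : ℕ} (l₁ l₂ : List α) (h : l₁ = l₂) (p₁ : l₁.length ≤ K)
    {p₂ : l₂.length ≤ K} :
    (⟨l₁, p₁⟩ : {l : List α // l.length ≤ K}) = ⟨l₂, p₂⟩ := Subtype.ext h

/-- Forward invariant of the machine. -/
lemma mach_inv (w : List (A ⊕ (β ⊕ β))) :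
    ∀ (q : σ) (b₁ b₂ q' b₁' b₂'),
    (Mach f x y K D).evalFrom (some (q, b₁, b₂)) w = some (q', b₁', b₂') →
    D.evalFrom q (pA w) = q' ∧
    b₁.1 ++ FbL x (pA w) = FbL f (p1 w) ++ b₁'.1 ∧
    b₂.1 ++ FbL y (pA w) = FbL f (p2 w) ++ b₂'.1 := by
  induction w with
  | nil =>
    intro q b₁ b₂ q' b₁' b₂' h
    simp only [DFA.evalFrom_nil, Option.some.injEq, Prod.mk.injEq] at h
    obtain ⟨rfl, rfl, rfl⟩ := h
    simp
  | cons c w ih =>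
    intro q b₁ b₂ q' b₁' b₂' h
    rw [mach_evalFrom_cons] at h
    match c with
    | Sum.inl a =>
      simp only [mstep] at h
      split at h
      · obtain ⟨h1, h2, h3⟩ := ih _ _ _ _ _ _ h
        refine ⟨by simpa using h1, by simpa [List.append_assoc] using h2,
          by simpa [List.append_assoc] using h3⟩
      · rw [mach_evalFrom_none] at h; exact absurd h (by simp)
    | Sum.inr (Sum.inl s) =>
      simp only [mstep] at h
      split at h
      case isTrue hp =>
        obtain ⟨t, ht⟩ := hp
        obtain ⟨h1, h2, h3⟩ := ih _ _ _ _ _ _ h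
        have hdrop : b₁.1.drop (f s).length = t := by rw [← ht, List.drop_left]
        simp only [hdrop] at h2
        refine ⟨by simpa using h1, ?_, by simpa using h3⟩
        simp only [p1_cons_inrl, FbL_cons, pA_cons_inrl]
        rw [← ht, List.append_assoc, h2, List.append_assoc]
      case isFalse => rw [mach_evalFrom_none] at h; exact absurd h (by simp)
    | Sum.inr (Sum.inr s) =>
      simp only [mstep] at h
      split at h
      case isTrue hp =>
        obtain ⟨t, ht⟩ := hp
        obtain ⟨h1, h2, h3⟩ := ih _ _ _ _ _ _ h
        have hdrop : b₂.1.drop (f s).length = t := by rw [← ht, List.drop_left]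
        simp only [hdrop] at h3
        refine ⟨by simpa using h1, by simpa using h2, ?_⟩
        simp only [p2_cons_inrr, FbL_cons, pA_cons_inrr]
        rw [← ht, List.append_assoc, h3, List.append_assoc]
      case isFalse => rw [mach_evalFrom_none] at h; exact absurd h (by simp)

lemma mach_consume1 (u : List β) :
    ∀ (q : σ) (b₂ : {l : List α // l.length ≤ K}) (h : (FbL f u).length ≤ K),
    (Mach f x y K D).evalFrom (some (q, ⟨FbL f u, h⟩, b₂))
        (u.map fun s => Sum.inr (Sum.inl s)) =
      some (q, ⟨[], Nat.zero_le K⟩, b₂) := by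
  induction u with
  | nil => intro q b₂ h; rfl
  | cons s u ih =>
    intro q b₂ h
    rw [List.map_cons, mach_evalFrom_cons]
    have hpre : f s <+: (⟨FbL f (s :: u), h⟩ : {l : List α // l.length ≤ K}).1 :=
      List.prefix_append _ _
    simp only [mstep]
    rw [dif_pos hpre]
    have h' : (FbL f u).length ≤ K := by
      have := h; simp only [FbL_cons, List.length_append] at this; omega
    rw [buf_eq ((⟨FbL f (s :: u), h⟩ : {l : List α // l.length ≤ K}).1.drop (f s).length)
      (FbL f u) (by simp [List.drop_left]) _ (p₂ := h')]
    exact ih q b₂ h'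

lemma mach_consume2 (v : List β) :
    ∀ (q : σ) (b₁ : {l : List α // l.length ≤ K}) (h : (FbL f v).length ≤ K),
    (Mach f x y K D).evalFrom (some (q, b₁, ⟨FbL f v, h⟩))
        (v.map fun s => Sum.inr (Sum.inr s)) =
      some (q, b₁, ⟨[], Nat.zero_le K⟩) := by
  induction v with
  | nil => intro q b₁ h; rfl
  | cons s v ih =>
    intro q b₁ h
    rw [List.map_cons, mach_evalFrom_cons]
    have hpre : f s <+: (⟨FbL f (s :: v), h⟩ : {l : List α // l.length ≤ K}).1 :=
      List.prefix_append _ _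
    simp only [mstep]
    rw [dif_pos hpre]
    have h' : (FbL f v).length ≤ K := by
      have := h; simp only [FbL_cons, List.length_append] at this; omega
    rw [buf_eq ((⟨FbL f (s :: v), h⟩ : {l : List α // l.length ≤ K}).1.drop (f s).length)
      (FbL f v) (by simp [List.drop_left]) _ (p₂ := h')]
    exact ih q b₁ h'

lemma mach_flush1 (u : List β) :
    ∀ (b rest : List α) (hb : b.length ≤ K), b ++ rest = FbL f u →
    ∃ (u₁ u₂ : List β) (b' : List α) (hb' : b'.length ≤ K),
      u = u₁ ++ u₂ ∧ b' ++ rest = FbL f u₂ ∧ b'.length ≤ maxf f ∧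
      ∀ (q : σ) (b₂ : {l : List α // l.length ≤ K}),
        (Mach f x y K D).evalFrom (some (q, ⟨b, hb⟩, b₂))
            (u₁.map fun s => Sum.inr (Sum.inl s)) =
          some (q, ⟨b', hb'⟩, b₂) := by
  induction u with
  | nil =>
    intro b rest hb h
    simp only [FbL_nil, List.append_eq_nil_iff] at h
    obtain ⟨rfl, rfl⟩ := h
    exact ⟨[], [], [], Nat.zero_le K, rfl, rfl, Nat.zero_le _, fun q b₂ => rfl⟩
  | cons s urest ih =>
    intro b rest hb h
    by_cases hp : f s <+: b
    · obtain ⟨t, ht⟩ := hp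
      have htK : t.length ≤ K := by
        have := hb; rw [← ht, List.length_append] at this; omega
      have ht' : t ++ rest = FbL f urest := by
        apply List.append_cancel_left (as := f s)
        rw [← List.append_assoc, ht, h, FbL_cons]
      obtain ⟨u₁, u₂, b', hb', hu, hrest, hlen, hev⟩ := ih t rest htK ht'
      refine ⟨s :: u₁, u₂, b', hb', by rw [List.cons_append, hu], hrest, hlen, ?_⟩
      intro q b₂
      rw [List.map_cons, mach_evalFrom_cons]
      have hpre : f s <+: (⟨b, hb⟩ : {l : List α // l.length ≤ K}).1 := ⟨t, ht⟩
      simp only [mstep]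
      rw [dif_pos hpre]
      rw [buf_eq ((⟨b, hb⟩ : {l : List α // l.length ≤ K}).1.drop (f s).length)
        t (by simp only [← ht]; simp [List.drop_left]) _ (p₂ := htK)]
      exact hev q b₂
    · refine ⟨[], s :: urest, b, hb, rfl, h, ?_, fun q b₂ => rfl⟩
      by_contra hgt
      push_neg at hgt
      have h1 : b <+: FbL f (s :: urest) := ⟨rest, h⟩
      have h2 : f s <+: FbL f (s :: urest) := by
        rw [FbL_cons]; exact List.prefix_append _ _
      have hle : (f s).length ≤ b.length :=
        le_trans (length_le_maxf f s) (le_of_lt hgt)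
      exact hp (List.prefix_of_prefix_length_le h2 h1 hle)

lemma mach_flush2 (v : List β) :
    ∀ (b rest : List α) (hb : b.length ≤ K), b ++ rest = FbL f v →
    ∃ (v₁ v₂ : List β) (b' : List α) (hb' : b'.length ≤ K),
      v = v₁ ++ v₂ ∧ b' ++ rest = FbL f v₂ ∧ b'.length ≤ maxf f ∧
      ∀ (q : σ) (b₁ : {l : List α // l.length ≤ K}),
        (Mach f x y K D).evalFrom (some (q, b₁, ⟨b, hb⟩))
            (v₁.map fun s => Sum.inr (Sum.inr s)) =
          some (q, b₁, ⟨b', hb'⟩) := by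
  induction v with
  | nil =>
    intro b rest hb h
    simp only [FbL_nil, List.append_eq_nil_iff] at h
    obtain ⟨rfl, rfl⟩ := h
    exact ⟨[], [], [], Nat.zero_le K, rfl, rfl, Nat.zero_le _, fun q b₁ => rfl⟩
  | cons s vrest ih =>
    intro b rest hb h
    by_cases hp : f s <+: b
    · obtain ⟨t, ht⟩ := hp
      have htK : t.length ≤ K := by
        have := hb; rw [← ht, List.length_append] at this; omega
      have ht' : t ++ rest = FbL f vrest := by
        apply List.append_cancel_left (as := f s)
        rw [← List.append_assoc, ht, h, FbL_cons]
      obtain ⟨v₁, v₂, b', hb', hv, hrest, hlen, hev⟩ := ih t rest htK ht'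
      refine ⟨s :: v₁, v₂, b', hb', by rw [List.cons_append, hv], hrest, hlen, ?_⟩
      intro q b₁
      rw [List.map_cons, mach_evalFrom_cons]
      have hpre : f s <+: (⟨b, hb⟩ : {l : List α // l.length ≤ K}).1 := ⟨t, ht⟩
      simp only [mstep]
      rw [dif_pos hpre]
      rw [buf_eq ((⟨b, hb⟩ : {l : List α // l.length ≤ K}).1.drop (f s).length)
        t (by simp only [← ht]; simp [List.drop_left]) _ (p₂ := htK)]
      exact hev q b₁
    · refine ⟨[], s :: vrest, b, hb, rfl, h, ?_, fun q b₁ => rfl⟩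
      by_contra hgt
      push_neg at hgt
      have h1 : b <+: FbL f (s :: vrest) := ⟨rest, h⟩
      have h2 : f s <+: FbL f (s :: vrest) := by
        rw [FbL_cons]; exact List.prefix_append _ _
      have hle : (f s).length ≤ b.length :=
        le_trans (length_le_maxf f s) (le_of_lt hgt)
      exact hp (List.prefix_of_prefix_length_le h2 h1 hle)

lemma mach_main (hK : maxf f + maxX x y ≤ K) (as : List A) :
    ∀ (q : σ) (u v : List β) (b₁ b₂ : List α)
      (h₁ : b₁ ++ FbL x as = FbL f u) (h₂ : b₂ ++ FbL y as = FbL f v)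
      (m₁ : b₁.length ≤ maxf f) (m₂ : b₂.length ≤ maxf f)
      (hb₁ : b₁.length ≤ K) (hb₂ : b₂.length ≤ K),
    ∃ w : List (A ⊕ (β ⊕ β)),
      pA w = as ∧ p1 w = u ∧ p2 w = v ∧
      (Mach f x y K D).evalFrom (some (q, ⟨b₁, hb₁⟩, ⟨b₂, hb₂⟩)) w =
        some (D.evalFrom q as, ⟨[], Nat.zero_le K⟩, ⟨[], Nat.zero_le K⟩) := by
  induction as with
  | nil =>
    intro q u v b₁ b₂ h₁ h₂ m₁ m₂ hb₁ hb₂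
    rw [FbL_nil, List.append_nil] at h₁ h₂
    subst h₁ h₂
    refine ⟨(u.map fun s => Sum.inr (Sum.inl s)) ++ (v.map fun s => Sum.inr (Sum.inr s)),
      by simp, by simp, by simp, ?_⟩
    rw [mach_evalFrom_append, mach_consume1, mach_consume2]
    rfl
  | cons a as ih =>
    intro q u v b₁ b₂ h₁ h₂ m₁ m₂ hb₁ hb₂
    have hx : (b₁ ++ x a).length ≤ K := by
      rw [List.length_append]
      have := length_x_le x y a
      omega
    have hy : (b₂ ++ y a).length ≤ K := by
      rw [List.length_append]
      have := length_y_le x y a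
      omega
    have h₁' : (b₁ ++ x a) ++ FbL x as = FbL f u := by
      rw [List.append_assoc]; exact h₁
    have h₂' : (b₂ ++ y a) ++ FbL y as = FbL f v := by
      rw [List.append_assoc]; exact h₂
    obtain ⟨u₁, u₂, b', hb', hu, hrest, hlen, hev1⟩ :=
      mach_flush1 f x y K D u (b₁ ++ x a) (FbL x as) hx h₁'
    obtain ⟨v₁, v₂, c', hc', hv, hrestv, hlenc, hev2⟩ :=
      mach_flush2 f x y K D v (b₂ ++ y a) (FbL y as) hy h₂'
    obtain ⟨w', hpA, hp1, hp2, hev3⟩ :=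
      ih (D.step q a) u₂ v₂ b' c' hrest hrestv hlen hlenc hb' hc'
    refine ⟨Sum.inl a :: ((u₁.map fun s => Sum.inr (Sum.inl s)) ++
      ((v₁.map fun s => Sum.inr (Sum.inr s)) ++ w')), ?_, ?_, ?_, ?_⟩
    · simp [hpA]
    · simp [hp1, hu]
    · simp [hp2, hv]
    · rw [mach_evalFrom_cons]
      simp only [mstep]
      rw [dif_pos ⟨hx, hy⟩]
      rw [mach_evalFrom_append, hev1, mach_evalFrom_append, hev2, hev3]
      rfl

end Lemmas

end WPRat
namespace WPRat

/-- Key transfer lemma: the preimage of a rational subset of `S* × S*` under a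
pair of monoid homomorphisms from another free monoid is rational. -/
lemma core {γ β : Type*} [Fintype γ] [Fintype β]
    (F : FreeMonoid β →* FreeMonoid γ)
    {R : Set (FreeMonoid γ × FreeMonoid γ)} (hR : IsRationalSubset R) :
    IsRationalSubset {p : FreeMonoid β × FreeMonoid β | (F p.1, F p.2) ∈ R} := by
  obtain ⟨A, hA, φ, L, ⟨σ, hσ, D, hD⟩, him⟩ := hR
  haveI : Fintype A := Fintype.ofFinite A
  set f : β → List γ := fun s => FreeMonoid.toList (F (FreeMonoid.of s)) with hf
  set x : A → List γ := fun a => FreeMonoid.toList ((φ (FreeMonoid.of a)).1) with hx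
  set y : A → List γ := fun a => FreeMonoid.toList ((φ (FreeMonoid.of a)).2) with hy
  set K : ℕ := maxf f + maxX x y with hK
  have hF : ∀ u : List β, F (FreeMonoid.ofList u) = FreeMonoid.ofList (FbL f u) := by
    intro u
    induction u with
    | nil => simp
    | cons s u ih =>
      rw [FreeMonoid.ofList_cons, map_mul, ih, FbL_cons, FreeMonoid.ofList_append]
      congr 1
  have hφ : ∀ as : List A, φ (FreeMonoid.ofList as) =
      (FreeMonoid.ofList (FbL x as), FreeMonoid.ofList (FbL y as)) := by
    intro as
    induction as with
    | nil => simp; rfl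
    | cons a as ih =>
      rw [FreeMonoid.ofList_cons, map_mul, ih, FbL_cons, FbL_cons,
        FreeMonoid.ofList_append, FreeMonoid.ofList_append]
      have : φ (FreeMonoid.of a) = (FreeMonoid.ofList (x a), FreeMonoid.ofList (y a)) := by
        rw [hx, hy]
        simp only [FreeMonoid.ofList_toList]
      rw [this, Prod.mk_mul_mk]
  -- the output homomorphism
  set ψ : FreeMonoid (A ⊕ (β ⊕ β)) →* FreeMonoid β × FreeMonoid β :=
    FreeMonoid.lift (Sum.elim (fun _ => 1)
      (Sum.elim (fun s => (FreeMonoid.of s, 1)) (fun s => (1, FreeMonoid.of s)))) with hψdef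
  have hψ : ∀ w : List (A ⊕ (β ⊕ β)),
      ψ (FreeMonoid.ofList w) = (FreeMonoid.ofList (p1 w), FreeMonoid.ofList (p2 w)) := by
    intro w
    induction w with
    | nil => simp; rfl
    | cons c w ih =>
      rw [FreeMonoid.ofList_cons, map_mul, ih]
      match c with
      | Sum.inl a =>
        rw [hψdef]
        simp only [FreeMonoid.lift_eval_of, Sum.elim_inl, p1_cons_inl, p2_cons_inl, one_mul]
      | Sum.inr (Sum.inl s) =>
        rw [hψdef]
        simp only [FreeMonoid.lift_eval_of, Sum.elim_inr, Sum.elim_inl, p1_cons_inrl,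
          p2_cons_inrl, Prod.mk_mul_mk, one_mul, mul_one]
        rw [FreeMonoid.ofList_cons]
      | Sum.inr (Sum.inr s) =>
        rw [hψdef]
        simp only [FreeMonoid.lift_eval_of, Sum.elim_inr, p1_cons_inrr,
          p2_cons_inrr, Prod.mk_mul_mk, one_mul]
        rw [FreeMonoid.ofList_cons]
  haveI : Finite {l : List γ // l.length ≤ K} := finite_bddList γ K
  haveI : Finite (Option (σ × {l : List γ // l.length ≤ K} × {l : List γ // l.length ≤ K})) :=
    Finite.of_equiv _ (Equiv.optionEquivSumPUnit.{0} _).symm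
  apply isRationalSubset_of_dfa ψ (Mach f x y K D)
  ext p
  constructor
  · rintro ⟨w, hw, rfl⟩
    replace hw := (DFA.mem_accepts _).1 hw
    obtain ⟨q, hq, heq⟩ := hw
    have hstart : (Mach f x y K D).eval w =
        (Mach f x y K D).evalFrom (some (D.start, ⟨[], Nat.zero_le K⟩, ⟨[], Nat.zero_le K⟩)) w := rfl
    rw [hstart] at heq
    obtain ⟨h1, h2, h3⟩ := mach_inv f x y K D w _ _ _ _ _ _ heq
    simp only [List.nil_append, List.append_nil] at h2 h3
    have hL : pA w ∈ L := by
      rw [← hD, DFA.mem_accepts]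
      show D.evalFrom D.start (pA w) ∈ D.accept
      rw [h1]; exact hq
    simp only [Set.mem_setOf_eq, hψ w]
    have : (F (FreeMonoid.ofList (p1 w)), F (FreeMonoid.ofList (p2 w))) =
        φ (FreeMonoid.ofList (pA w)) := by
      rw [hφ, hF, hF, h2, h3]
    rw [this, ← him]
    exact ⟨pA w, hL, rfl⟩
  · intro hp
    rw [Set.mem_setOf_eq, ← him] at hp
    obtain ⟨as, has, heq⟩ := hp
    set u : List β := FreeMonoid.toList p.1 with hu
    set v : List β := FreeMonoid.toList p.2 with hv
    have hp1 : p.1 = FreeMonoid.ofList u := (FreeMonoid.ofList_toList _).symm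
    have hp2 : p.2 = FreeMonoid.ofList v := (FreeMonoid.ofList_toList _).symm
    have heq' : (FreeMonoid.ofList (FbL x as), FreeMonoid.ofList (FbL y as)) =
        (FreeMonoid.ofList (FbL f u), FreeMonoid.ofList (FbL f v)) := by
      rw [← hφ, ← hF, ← hF, ← hp1, ← hp2]
      exact heq
    have e1 : FbL x as = FbL f u := FreeMonoid.ofList.injective (congrArg Prod.fst heq')
    have e2 : FbL y as = FbL f v := FreeMonoid.ofList.injective (congrArg Prod.snd heq')
    obtain ⟨w, hpA, hP1, hP2, hev⟩ := mach_main f x y K D le_rfl as D.start u v [] []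
      (by simpa using e1) (by simpa using e2) (Nat.zero_le _) (Nat.zero_le _)
      (Nat.zero_le _) (Nat.zero_le _)
    refine ⟨w, ?_, ?_⟩
    · refine (DFA.mem_accepts _).2 ?_
      refine ⟨D.evalFrom D.start as, ?_, hev⟩
      have : as ∈ D.accepts := hD.symm ▸ has
      rwa [DFA.mem_accepts] at this
    · show ψ (FreeMonoid.ofList w) = p
      rw [hψ w, hP1, hP2, ← hp1, ← hp2]

end WPRat
/-- The word problem of a monoid `M` with respect to a finite generating set `S`:
the set of pairs of words over `S` representing the same element of `M`. -/
def WordProblem {M : Type*} [Monoid M] (S : Finset M) :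
    Set (FreeMonoid S × FreeMonoid S) :=
  {p | FreeMonoid.lift (fun s : S => (s : M)) p.1 =
       FreeMonoid.lift (fun s : S => (s : M)) p.2}

namespace WPRat

lemma transfer {M : Type*} [Monoid M] (S S' : Finset M)
    (hSgen : Submonoid.closure (S : Set M) = ⊤) :
    IsRationalSubset (WordProblem S) → IsRationalSubset (WordProblem S') := by
  intro h
  have hg : ∀ t : S', ∃ w : FreeMonoid S,
      FreeMonoid.lift (fun s : S => (s : M)) w = (t : M) := by
    intro t
    have ht : (t : M) ∈ Submonoid.closure (S : Set M) := by
      rw [hSgen]; exact Submonoid.mem_top _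
    obtain ⟨l, hl, hprod⟩ := Submonoid.exists_list_of_mem_closure ht
    refine ⟨FreeMonoid.ofList (l.attach.map fun e => (⟨e.1, hl e.1 e.2⟩ : S)), ?_⟩
    rw [FreeMonoid.lift_ofList, List.map_map]
    have h2 : (List.map ((fun s : S => (s : M)) ∘ fun e => (⟨e.1, hl e.1 e.2⟩ : S)) l.attach)
        = l := by
      have h3 := List.attach_map_val (l := l) (f := fun m : M => m)
      simpa [Function.comp] using h3
    rw [h2, hprod]
  choose g hgspec using hg
  set F : FreeMonoid S' →* FreeMonoid S := FreeMonoid.lift g with hFdef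
  have hFcomp : ∀ w, FreeMonoid.lift (fun s : S => (s : M)) (F w) =
      FreeMonoid.lift (fun t : S' => (t : M)) w := by
    intro w
    have hcomp : (FreeMonoid.lift (fun s : S => (s : M))).comp F =
        FreeMonoid.lift (fun t : S' => (t : M)) := by
      apply FreeMonoid.hom_eq
      intro t
      simp only [MonoidHom.comp_apply, hFdef, FreeMonoid.lift_eval_of]
      exact hgspec t
    exact DFunLike.congr_fun hcomp w
  have hset : WordProblem S' =
      {p : FreeMonoid S' × FreeMonoid S' | (F p.1, F p.2) ∈ WordProblem S} := by
    ext p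
    simp only [WordProblem, Set.mem_setOf_eq, hFcomp]
  rw [hset]
  exact core F h

end WPRat

theorem wordProblem_rational_independent_of_generating_set
    (M : Type*) [Monoid M] (S S' : Finset M)
    (hS1 : (S : Set M) ⊆ {g : M | g ≠ 1}) (hS'1 : (S' : Set M) ⊆ {g : M | g ≠ 1})
    (hSgen : Submonoid.closure (S : Set M) = ⊤)
    (hS'gen : Submonoid.closure (S' : Set M) = ⊤) :
    IsRationalSubset (WordProblem S) ↔ IsRationalSubset (WordProblem S') :=
  ⟨WPRat.transfer S S' hSgen, WPRat.transfer S' S hS'gen⟩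
end

section
/- Let G be a virtually free group generated by a finite set A, and let M be a graded submonoid of G generated by a finite set S ⊆ G \ {1}, with α : S* → G the canonical monoid homomorphism. Then there exists a constant C > 0 with the following property: for all words u, v ∈ S* with α(u) = α(v), there exists a word w over the alphabet Ŝ = (S × {1}) ∪ ({1} × S) whose projections to the first and second components are u and v respectively, such that every prefix p of w satisfies |α(π₁(p))⁻¹ · α(π₂(p))|_A ≤ C, where π₁, π₂ : Ŝ* → S* are the two component projection homomorphisms. -/
universe u

/-- The word length of `g` with respect to the generating set `A`: the least `n`
such that `g` is a product of `n` elements of `A ∪ A⁻¹`. -/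
noncomputable def wordLength {G : Type*} [Group G] (A : Set G) (g : G) : ℕ :=
  sInf {n : ℕ | ∃ l : List G, l.length = n ∧ (∀ x ∈ l, x ∈ A ∨ x⁻¹ ∈ A) ∧ l.prod = g}

/-- Projection to the first component: a letter `Sum.inl s` of the alphabet
`Ŝ = (S × {1}) ∪ ({1} × S)` projects to `s`, a letter `Sum.inr s` to the empty word. -/
def proj₁ {A : Type*} : FreeMonoid (A ⊕ A) →* FreeMonoid A :=
  FreeMonoid.lift (Sum.elim FreeMonoid.of fun _ => 1)

/-- Projection to the second component. -/
def proj₂ {A : Type*} : FreeMonoid (A ⊕ A) →* FreeMonoid A :=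
  FreeMonoid.lift (Sum.elim (fun _ => (1 : FreeMonoid A)) FreeMonoid.of)

set_option linter.unusedSectionVars false
set_option maxHeartbeats 1000000
namespace BRP

open List

section Lcp
variable {β : Type*} [DecidableEq β]

def lcp : List β → List β → ℕ
  | a :: l, b :: m => if a = b then lcp l m + 1 else 0
  | _, _ => 0

@[simp] lemma lcp_nil_left (w : List β) : lcp [] w = 0 := by cases w <;> rfl
@[simp] lemma lcp_nil_right (w : List β) : lcp w [] = 0 := by cases w <;> rfl
lemma lcp_cons (a b : β) (l m : List β) :
    lcp (a :: l) (b :: m) = if a = b then lcp l m + 1 else 0 := rfl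

lemma lcp_le_left : ∀ w w' : List β, lcp w w' ≤ w.length
  | [], w' => by simp
  | w, [] => by simp
  | a :: l, b :: m => by
    rw [lcp_cons]
    split
    · simpa using lcp_le_left l m
    · simp

lemma lcp_comm : ∀ w w' : List β, lcp w w' = lcp w' w
  | [], w' => by simp
  | w, [] => by simp
  | a :: l, b :: m => by
    rw [lcp_cons, lcp_cons, lcp_comm l m]
    by_cases h : a = b
    · simp [h]
    · rw [if_neg h, if_neg (fun hh => h hh.symm)]

lemma lcp_le_right (w w' : List β) : lcp w w' ≤ w'.length := by
  rw [lcp_comm]; exact lcp_le_left w' w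

lemma take_lcp_eq : ∀ w w' : List β, w.take (lcp w w') = w'.take (lcp w w')
  | [], w' => by simp
  | w, [] => by simp
  | a :: l, b :: m => by
    rw [lcp_cons]
    split
    · next h => simp [h, take_lcp_eq l m]
    · simp

lemma length_le_lcp : ∀ {x w w' : List β}, x <+: w → x <+: w' → x.length ≤ lcp w w'
  | [], _, _, _, _ => by simp
  | a :: xs, w, w', h1, h2 => by
    obtain ⟨t1, rfl⟩ := h1
    obtain ⟨t2, h2'⟩ := h2
    cases w' with
    | nil => simp at h2'
    | cons b m =>
      rw [cons_append] at h2'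
      injection h2' with hb hm
      subst hb
      rw [cons_append, lcp_cons, if_pos rfl]
      have := length_le_lcp (x := xs) (⟨t1, rfl⟩ : xs <+: xs ++ t1) (⟨t2, hm⟩ : xs <+: m)
      simpa using this

lemma le_lcp_of_take_eq {m : ℕ} {w w' : List β} (hm : m ≤ w.length)
    (h : w.take m = w'.take m) : m ≤ lcp w w' := by
  have h1 : w.take m <+: w := take_prefix _ _
  have h2 : w.take m <+: w' := h ▸ take_prefix m w'
  have := length_le_lcp h1 h2
  rwa [length_take, Nat.min_eq_left hm] at this

lemma take_eq_take_of_le_lcp {m : ℕ} {w w' : List β} (hm : m ≤ lcp w w') :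
    w.take m = w'.take m := by
  have := take_lcp_eq w w'
  calc w.take m = (w.take (lcp w w')).take m := by rw [take_take, Nat.min_eq_left hm]
    _ = (w'.take (lcp w w')).take m := by rw [this]
    _ = w'.take m := by rw [take_take, Nat.min_eq_left hm]

lemma lcp_self (w : List β) : lcp w w = w.length := by
  have h1 := lcp_le_left w w
  have h2 := le_lcp_of_take_eq (m := w.length) le_rfl rfl
  omega

lemma lcp_triangle (w₁ w₂ w₃ : List β) : min (lcp w₁ w₂) (lcp w₂ w₃) ≤ lcp w₁ w₃ := by
  set m := min (lcp w₁ w₂) (lcp w₂ w₃) with hm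
  apply le_lcp_of_take_eq (le_trans (Nat.min_le_left _ _) (lcp_le_left _ _))
  calc w₁.take m = w₂.take m := take_eq_take_of_le_lcp (Nat.min_le_left _ _)
    _ = w₃.take m := take_eq_take_of_le_lcp (Nat.min_le_right _ _)

lemma head_drop_lcp_ne {w w' : List β} {p q : β} {l m : List β}
    (h1 : w.drop (lcp w w') = p :: l) (h2 : w'.drop (lcp w w') = q :: m) : p ≠ q := by
  intro hpq
  set c := lcp w w' with hc
  have hlen : c + 1 ≤ w.length := by
    have := congrArg List.length h1
    simp only [length_drop, length_cons] at this
    omega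
  have ht1 : w.take (c + 1) = w.take c ++ [p] := by
    rw [take_add, h1]; rfl
  have ht2 : w'.take (c + 1) = w'.take c ++ [q] := by
    rw [take_add, h2]; rfl
  have : w.take (c+1) = w'.take (c+1) := by
    rw [ht1, ht2, take_eq_take_of_le_lcp (le_refl c), hpq]
  have := le_lcp_of_take_eq hlen this
  omega

end Lcp

section Free
variable {ι : Type*} [DecidableEq ι]
open FreeGroup

def IsRed (L : List (ι × Bool)) : Prop :=
  List.IsChain (fun a b => ¬(a.1 = b.1 ∧ a.2 = !b.2)) L

lemma isRed_reduce (L : List (ι × Bool)) : IsRed (reduce L) := by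
  induction L with
  | nil => simp [IsRed]
  | cons x L ih =>
    rw [reduce.cons]
    rcases h : reduce L with _ | ⟨hd, tl⟩
    · simp [IsRed]
    · rw [h] at ih
      dsimp only
      split
      · exact ih.tail
      · next hcond =>
        exact List.IsChain.cons_cons (by tauto) ih

lemma IsRed.reduce_eq {L : List (ι × Bool)} (h : IsRed L) : reduce L = L := by
  induction L with
  | nil => rfl
  | cons x L ih =>
    have hL : IsRed L := h.tail
    rw [reduce.cons, ih hL]
    cases L with
    | nil => rfl
    | cons hd tl =>
      dsimp only
      rw [if_neg]
      exact List.isChain_cons_cons.mp h |>.1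

lemma isRed_toWord (g : FreeGroup ι) : IsRed (toWord g) := by
  rw [← reduce_toWord]; exact isRed_reduce _

lemma toWord_mk_isRed {L : List (ι × Bool)} (h : IsRed L) : toWord (mk L) = L := by
  rw [toWord_mk, h.reduce_eq]

lemma norm_mk_isRed {L : List (ι × Bool)} (h : IsRed L) : norm (mk L) = L.length := by
  unfold FreeGroup.norm
  rw [toWord_mk_isRed h]

lemma IsRed.invRev {L : List (ι × Bool)} (h : IsRed L) : IsRed (FreeGroup.invRev L) := by
  unfold FreeGroup.invRev
  rw [IsRed, List.isChain_reverse, List.isChain_map]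
  apply List.IsChain.imp _ h
  rintro ⟨x, bx⟩ ⟨y, yb⟩ hr ⟨h1, h2⟩
  exact hr ⟨h1.symm, by revert h2; cases bx <;> cases yb <;> simp⟩

theorem norm_inv_mul (g g' : FreeGroup ι) :
    norm (g⁻¹ * g') + 2 * lcp g.toWord g'.toWord = norm g + norm g' := by
  set w := g.toWord with hw
  set w' := g'.toWord with hw'
  set c := lcp w w' with hc
  set a := w.drop c with ha
  set b := w'.drop c with hb
  have hred : IsRed w := isRed_toWord g
  have hred' : IsRed w' := isRed_toWord g'
  have hga : g = mk (w.take c) * mk a := by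
    rw [mul_mk, take_append_drop, hw, mk_toWord]
  have hgb : g' = mk (w'.take c) * mk b := by
    rw [mul_mk, take_append_drop, hw', mk_toWord]
  have htk : w.take c = w'.take c := take_eq_take_of_le_lcp le_rfl
  have key : g⁻¹ * g' = mk (FreeGroup.invRev a ++ b) := by
    rw [hga, hgb, htk, ← mul_mk, ← inv_mk]
    group
  have hreda : IsRed a := List.IsChain.drop hred c
  have hredb : IsRed b := List.IsChain.drop hred' c
  have hjunct : IsRed (FreeGroup.invRev a ++ b) := by
    rw [IsRed, List.isChain_append]
    refine ⟨hreda.invRev, hredb, ?_⟩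
    intro x hx y hy
    -- x is the last of invRev a, y the head of b
    rcases hae : a with _ | ⟨pa, la⟩
    · simp [FreeGroup.invRev, hae] at hx
    rcases hbe : b with _ | ⟨pb, lb⟩
    · simp [hbe] at hy
    have hpq : pa ≠ pb := head_drop_lcp_ne (ha ▸ hae) (hb ▸ hbe)
    have hxv : x = (pa.1, !pa.2) := by
      have : (FreeGroup.invRev (pa :: la)).getLast? =
          some ((pa.1, !pa.2)) := by
        unfold FreeGroup.invRev
        rw [List.getLast?_reverse]
        rfl
      rw [hae] at hx
      rw [this] at hx
      exact (Option.mem_some_iff.mp hx).symm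
    have hyv : y = pb := by
      rw [hbe] at hy
      simp at hy
      exact hy.symm
    subst hxv hyv
    rintro ⟨h1, h2⟩
    exact hpq (Prod.ext h1 (Bool.not_inj h2))
  have hnorm : norm (g⁻¹ * g') = a.length + b.length := by
    rw [key, norm_mk_isRed hjunct]
    simp [FreeGroup.invRev]
  have hla : a.length = w.length - c := by rw [ha, length_drop]
  have hlb : b.length = w'.length - c := by rw [hb, length_drop]
  have hcw : c ≤ w.length := lcp_le_left _ _
  have hcw' : c ≤ w'.length := lcp_le_right _ _
  have hng : norm g = w.length := rfl
  have hng' : norm g' = w'.length := rfl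
  omega

-- now the tree corollaries
variable {x : List (ι × Bool)} {h h' : FreeGroup ι}

/-- If `x` is a prefix of the reduced word of `h'` but not of that of `h`, then the
lcp of the words of `h` and `h'` is less than the length of `x`. -/
lemma lcp_lt_of_prefix_not_prefix (hx' : x <+: toWord h') (hx : ¬ x <+: toWord h) :
    lcp (toWord h) (toWord h') < x.length := by
  by_contra hle
  push_neg at hle
  apply hx
  have h1 : x = (toWord h').take x.length := List.prefix_iff_eq_take.mp hx'
  have h2 : (toWord h).take x.length = (toWord h').take x.length :=
    take_eq_take_of_le_lcp hle
  rw [h1, ← h2]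
  exact take_prefix _ _

lemma norm_inv_mul_of_prefix (hx : IsRed x) (hx' : x <+: toWord h') :
    norm ((mk x)⁻¹ * h') + x.length = norm h' := by
  have h1 := norm_inv_mul (mk x) h'
  rw [toWord_mk_isRed hx] at h1
  have h2 : lcp x (toWord h') = x.length := by
    have := length_le_lcp (List.prefix_refl x) hx'
    have := lcp_le_left x (toWord h')
    omega
  rw [norm_mk_isRed hx] at h1
  omega

/-- Tree geometry: if `x` is a prefix of `toWord h'` but not of `toWord h`, then the point
`mk x` lies on the geodesic from `h` to `h'`; in particular both ends are at distance at
most `norm (h⁻¹ * h')` from `mk x`. -/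
lemma tree_cross₁ (hx : IsRed x) (hx' : x <+: toWord h') (hxh : ¬ x <+: toWord h) :
    norm ((mk x)⁻¹ * h) ≤ norm (h⁻¹ * h') := by
  have hc : lcp (toWord h) (toWord h') < x.length := lcp_lt_of_prefix_not_prefix hx' hxh
  have e1 := norm_inv_mul (mk x) h
  rw [toWord_mk_isRed hx, norm_mk_isRed hx] at e1
  have e2 := norm_inv_mul h h'
  have hlx : x.length ≤ (toWord h').length := hx'.length_le
  have t1 : min (lcp x (toWord h')) (lcp (toWord h') (toWord h)) ≤ lcp x (toWord h) :=
    lcp_triangle _ _ _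
  have hxw' : lcp x (toWord h') = x.length := by
    have := length_le_lcp (List.prefix_refl x) hx'
    have := lcp_le_left x (toWord h')
    omega
  have hsymm : lcp (toWord h') (toWord h) = lcp (toWord h) (toWord h') := lcp_comm _ _
  have hnh' : norm h' = (toWord h').length := rfl
  omega

lemma tree_cross₂ (hx : IsRed x) (hx' : x <+: toWord h') (hxh : ¬ x <+: toWord h) :
    norm ((mk x)⁻¹ * h') ≤ norm (h⁻¹ * h') := by
  have hc : lcp (toWord h) (toWord h') < x.length := lcp_lt_of_prefix_not_prefix hx' hxh
  have e1 := norm_inv_mul_of_prefix hx hx'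
  have e2 := norm_inv_mul h h'
  have hlx : x.length ≤ (toWord h').length := hx'.length_le
  have hch : lcp (toWord h) (toWord h') ≤ (toWord h).length := lcp_le_left _ _
  have hnh : norm h = (toWord h).length := rfl
  have hnh' : norm h' = (toWord h').length := rfl
  omega

/-- Separation: nested prefixes `y.take ℓ` and `y.take ℓ'`, the small one not a prefix
of `toWord h`, the big one a prefix of `toWord h'`: then `ℓ' < ℓ + norm (h⁻¹ * h')`. -/
lemma tree_sep {y : List (ι × Bool)} {ℓ ℓ' : ℕ} (hll : ℓ ≤ ℓ') (hl' : ℓ' ≤ y.length)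
    (hx' : y.take ℓ' <+: toWord h') (hxh : ¬ y.take ℓ <+: toWord h) :
    ℓ' < ℓ + norm (h⁻¹ * h') := by
  have hxx : y.take ℓ <+: y.take ℓ' := take_isPrefix_take.mpr (Or.inl hll)
  have hxw' : y.take ℓ <+: toWord h' := hxx.trans hx'
  have hlc : lcp (toWord h) (toWord h') < (y.take ℓ).length :=
    lcp_lt_of_prefix_not_prefix hxw' hxh
  have hltl : (y.take ℓ).length = ℓ := by
    rw [length_take, Nat.min_eq_left (le_trans hll hl')]
  have hl'w : ℓ' ≤ (toWord h').length := by
    have := hx'.length_le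
    rwa [length_take, Nat.min_eq_left hl'] at this
  have e2 := norm_inv_mul h h'
  have hch : lcp (toWord h) (toWord h') ≤ (toWord h).length := lcp_le_left _ _
  have hnh : norm h = (toWord h).length := rfl
  have hnh' : norm h' = (toWord h').length := rfl
  omega
lemma lcp_lipschitz (h h' g : FreeGroup ι) :
    lcp (toWord h') (toWord g) ≤ lcp (toWord h) (toWord g) + norm (h⁻¹ * h') := by
  have e := norm_inv_mul h h'
  have tri := lcp_triangle (toWord h) (toWord h') (toWord g)
  have tri2 := lcp_triangle (toWord h') (toWord h) (toWord g)
  have hcomm : lcp (toWord h') (toWord h) = lcp (toWord h) (toWord h') := lcp_comm _ _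
  have h1 : lcp (toWord h') (toWord g) ≤ (toWord h').length := lcp_le_left _ _
  have h2 : lcp (toWord h) (toWord h') ≤ (toWord h').length := lcp_le_right _ _
  have h3 : lcp (toWord h) (toWord h') ≤ (toWord h).length := lcp_le_left _ _
  have hnh : norm h = (toWord h).length := rfl
  have hnh' : norm h' = (toWord h').length := rfl
  omega

end Free

section Graded

variable {G : Type u} [Group G] (S : Finset G)

def IsGraded' (M : Type*) [Monoid M] : Prop :=
  ∃ (X : Type) (_ : Finite X) (α : FreeMonoid X →* M),
    Function.Surjective α ∧ ∀ m : M, (α ⁻¹' {m}).Finite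

lemma length_le_of_toList_ne_nil {X : Type} (ls : List (FreeMonoid X))
    (h : ∀ l ∈ ls, FreeMonoid.toList l ≠ []) :
    ls.length ≤ (FreeMonoid.toList ls.prod).length := by
  induction ls with
  | nil => simp
  | cons a ls ih =>
    rw [List.prod_cons, FreeMonoid.toList_mul, length_append, length_cons]
    have h1 := h a (by simp)
    have h2 := ih (fun l hl => h l (by simp [hl]))
    have h3 : 1 ≤ (FreeMonoid.toList a).length := by
      cases he : FreeMonoid.toList a
      · exact absurd he h1
      · simp
    omega

lemma exists_length_bound
    (hS1 : (S : Set G) ⊆ {g : G | g ≠ 1})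
    (hgr : IsGraded' (Submonoid.closure (S : Set G))) (g : G) :
    ∃ N : ℕ, ∀ w : List G, (∀ x ∈ w, x ∈ S) → w.prod = g → w.length ≤ N := by
  classical
  obtain ⟨X, hX, β, hsurj, hfib⟩ := hgr
  by_cases hg : g ∈ Submonoid.closure (S : Set G)
  case neg =>
    refine ⟨0, fun w hw hp => absurd ?_ hg⟩
    exact hp ▸ Submonoid.list_prod_mem _
      (fun x hx => Submonoid.subset_closure (hw x hx))
  case pos =>
    have hc : ∀ (x : G) (hx : x ∈ S), ∃ l : FreeMonoid X,
        β l = ⟨x, Submonoid.subset_closure hx⟩ ∧ FreeMonoid.toList l ≠ [] := by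
      intro x hx
      obtain ⟨l, hl⟩ := hsurj ⟨x, Submonoid.subset_closure hx⟩
      refine ⟨l, hl, fun hnil => ?_⟩
      have hl1 : l = 1 := by
        have := congrArg FreeMonoid.ofList hnil
        rwa [FreeMonoid.ofList_toList] at this
      rw [hl1, map_one] at hl
      have : x = (1 : G) := by
        have := congrArg (Subtype.val) hl
        exact this.symm
      exact hS1 hx this
    choose c hc1 hc2 using hc
    -- bound from the finite fiber over ⟨g, hg⟩
    have hfin : ((fun l : FreeMonoid X => (FreeMonoid.toList l).length) ''
        (β ⁻¹' {⟨g, hg⟩})).Finite := (hfib _).image _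
    obtain ⟨N, hN⟩ := hfin.bddAbove
    refine ⟨N, fun w hw hp => ?_⟩
    -- build the X-word
    set ls : List (FreeMonoid X) := w.attach.map (fun x => c x.1 (hw x.1 x.2)) with hls
    have hβ : β ls.prod = ⟨g, hg⟩ := by
      apply Subtype.ext
      rw [map_list_prod, SubmonoidClass.coe_list_prod]
      have hmapeq : (List.map (⇑β) ls).map (Subtype.val) = w := by
        rw [hls, List.map_map, List.map_map]
        have h' : ∀ x ∈ w.attach, (((Subtype.val ∘ ⇑β) ∘ fun x : {y // y ∈ w} =>
            c x.1 (hw x.1 x.2)) x) = x.1 := by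
          intro x _
          simp only [Function.comp_apply]
          rw [hc1 x.1 (hw x.1 x.2)]
        rw [List.map_congr_left h']
        simp
      rw [hmapeq, hp]
    have hmem : (FreeMonoid.toList ls.prod).length ∈ ((fun l : FreeMonoid X =>
        (FreeMonoid.toList l).length) '' (β ⁻¹' {⟨g, hg⟩})) := ⟨ls.prod, by simp [hβ], rfl⟩
    have hlen : ls.length ≤ (FreeMonoid.toList ls.prod).length := by
      apply length_le_of_toList_ne_nil
      intro l hl
      rw [hls] at hl
      obtain ⟨x, _, rfl⟩ := List.mem_map.mp hl
      exact hc2 x.1 (hw x.1 x.2)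
    have : ls.length = w.length := by simp [hls]
    have := hN hmem
    omega

lemma prod_flatten_replicate {M : Type*} [Monoid M] (m : ℕ) (Q : List M) :
    ((List.replicate m Q).flatten).prod = Q.prod ^ m := by
  induction m with
  | zero => simp
  | succ m ih => rw [List.replicate_succ, List.flatten_cons, List.prod_append, ih, pow_succ']

lemma length_flatten_replicate {M : Type*} (m : ℕ) (Q : List M) :
    ((List.replicate m Q).flatten).length = m * Q.length := by
  induction m with
  | zero => simp
  | succ m ih => rw [List.replicate_succ, List.flatten_cons, length_append, ih]; ring

lemma pump (hS1 : (S : Set G) ⊆ {g : G | g ≠ 1})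
    (hgr : IsGraded' (Submonoid.closure (S : Set G)))
    (w : List G) (hw : ∀ x ∈ w, x ∈ S)
    (k₁ k₂ k₃ k₄ : ℕ) (h12 : k₁ ≤ k₂) (h23 : k₂ ≤ k₃) (h34 : k₃ ≤ k₄)
    (h4n : k₄ ≤ w.length) (hne : k₁ < k₂ ∨ k₃ < k₄)
    (heq : ((w.take k₁).prod)⁻¹ * (w.take k₄).prod
        = ((w.take k₂).prod)⁻¹ * (w.take k₃).prod) : False := by
  obtain ⟨N, hN⟩ := exists_length_bound S hS1 hgr w.prod
  set Q := (w.drop k₁).take (k₂ - k₁) with hQdef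
  set R := (w.drop k₂).take (k₃ - k₂) with hRdef
  set T := (w.drop k₃).take (k₄ - k₃) with hTdef
  set U := w.drop k₄ with hUdef
  have hQ : w.take k₂ = w.take k₁ ++ Q := by
    rw [hQdef, ← take_add]; congr 1; omega
  have hR : w.take k₃ = w.take k₂ ++ R := by
    rw [hRdef, ← take_add]; congr 1; omega
  have hT : w.take k₄ = w.take k₃ ++ T := by
    rw [hTdef, ← take_add]; congr 1; omega
  set a := (w.take k₁).prod with hadef
  set q := Q.prod with hqdef
  set s := R.prod with hsdef
  set t := T.prod with htdef
  have hp2 : (w.take k₂).prod = a * q := by rw [hQ, List.prod_append]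
  have hp3 : (w.take k₃).prod = a * q * s := by rw [hR, List.prod_append, hp2]
  have hp4 : (w.take k₄).prod = a * q * s * t := by rw [hT, List.prod_append, hp3]
  have hwp : w.prod = a * q * s * t * U.prod := by
    have : w.prod = (w.take k₄).prod * U.prod := by
      rw [hUdef, ← List.prod_append, take_append_drop]
    rw [this, hp4]
  have key : q * s * t = s := by
    rw [hp4, hp2, hp3] at heq
    have := heq
    group at this ⊢
    -- derive
    calc q * s * t = a⁻¹ * (a * q * s * t) := by group
      _ = a⁻¹ * (a * (q * s * t)) := by group
      _ = s := by
          have h' : a⁻¹ * (a * q * s * t) = (a * q)⁻¹ * (a * q * s) := heq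
          calc a⁻¹ * (a * (q * s * t)) = a⁻¹ * (a * q * s * t) := by group
            _ = (a * q)⁻¹ * (a * q * s) := h'
            _ = s := by group
  have hpow : ∀ m : ℕ, q ^ m * s * t ^ m = s := by
    intro m
    induction m with
    | zero => simp
    | succ m ih =>
      calc q ^ (m+1) * s * t ^ (m+1) = q * (q ^ m * s * t ^ m) * t := by
            rw [pow_succ' q m, pow_succ t m]; group
        _ = q * s * t := by rw [ih]
        _ = s := key
  set wm : ℕ → List G := fun m =>
    w.take k₁ ++ (List.replicate m Q).flatten ++ R ++ (List.replicate m T).flatten ++ U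
    with hwm
  have hmemS : ∀ m, ∀ x ∈ wm m, x ∈ S := by
    intro m x hx
    rw [hwm] at hx
    simp only [List.mem_append] at hx
    have hQS : ∀ y ∈ Q, y ∈ S := fun y hy =>
      hw y (List.mem_of_mem_drop (List.mem_of_mem_take hy))
    have hTS : ∀ y ∈ T, y ∈ S := fun y hy =>
      hw y (List.mem_of_mem_drop (List.mem_of_mem_take hy))
    rcases hx with ((((hx | hx) | hx) | hx) | hx)
    · exact hw x (List.mem_of_mem_take hx)
    · obtain ⟨l, hl, hxl⟩ := List.mem_flatten.mp hx
      exact hQS x (List.eq_of_mem_replicate hl ▸ hxl)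
    · exact hw x (List.mem_of_mem_drop (List.mem_of_mem_take hx))
    · obtain ⟨l, hl, hxl⟩ := List.mem_flatten.mp hx
      exact hTS x (List.eq_of_mem_replicate hl ▸ hxl)
    · exact hw x (List.mem_of_mem_drop hx)
  have hprod : ∀ m, (wm m).prod = w.prod := by
    intro m
    rw [hwm]
    simp only [List.prod_append, prod_flatten_replicate]
    rw [hwp]
    calc a * q ^ m * s * t ^ m * U.prod = a * (q ^ m * s * t ^ m) * U.prod := by group
      _ = a * s * U.prod := by rw [hpow]
      _ = a * (q * s * t) * U.prod := by rw [key]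
      _ = a * q * s * t * U.prod := by group
  have hlen : ∀ m, m ≤ (wm m).length := by
    intro m
    rw [hwm]
    simp only [List.length_append, length_flatten_replicate]
    have hQl : Q.length = k₂ - k₁ := by
      rw [hQdef, length_take, length_drop]; omega
    have hTl : T.length = k₄ - k₃ := by
      rw [hTdef, length_take, length_drop]; omega
    have : 1 ≤ Q.length + T.length := by omega
    calc m = m * 1 := by omega
      _ ≤ m * (Q.length + T.length) := Nat.mul_le_mul_left m this
      _ = m * Q.length + m * T.length := by ring
      _ ≤ _ := by omega
  have h1 := hN (wm (N+1)) (hmemS _) (hprod _)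
  have h2 := hlen (N+1)
  omega
end Graded

section Supp
variable {ι : Type*} [DecidableEq ι]
open FreeGroup

def SuppIn (z : FreeGroup ι) (J : Set ι) : Prop := ∀ p ∈ z.toWord, p.1 ∈ J

lemma suppIn_one (J : Set ι) : SuppIn (1 : FreeGroup ι) J := by
  intro p hp
  rw [toWord_one] at hp
  simp at hp

lemma SuppIn.mul {z z' : FreeGroup ι} {J : Set ι} (h : SuppIn z J) (h' : SuppIn z' J) :
    SuppIn (z * z') J := by
  intro p hp
  have := (toWord_mul_sublist z z').subset hp
  rcases List.mem_append.mp this with h1 | h1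
  · exact h p h1
  · exact h' p h1

lemma SuppIn.inv {z : FreeGroup ι} {J : Set ι} (h : SuppIn z J) : SuppIn z⁻¹ J := by
  intro p hp
  rw [toWord_inv] at hp
  unfold FreeGroup.invRev at hp
  rw [List.mem_reverse, List.mem_map] at hp
  obtain ⟨q, hq, rfl⟩ := hp
  exact h q hq

lemma suppIn_mk_of_prefix {x : List (ι × Bool)} {h : FreeGroup ι} {J : Set ι}
    (hred : IsRed x) (hpre : x <+: toWord h) (hs : SuppIn h J) : SuppIn (mk x) J := by
  intro p hp
  rw [toWord_mk_isRed hred] at hp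
  exact hs p (hpre.subset hp)

lemma finite_lists {β : Type*} {s : Set β} (hs : s.Finite) (n : ℕ) :
    {l : List β | l.length ≤ n ∧ ∀ x ∈ l, x ∈ s}.Finite := by
  haveI := hs.to_subtype
  have big := List.finite_length_le (α := s) n
  apply Set.Finite.subset (big.image (List.map Subtype.val))
  rintro l ⟨hlen, hmem⟩
  refine ⟨l.attach.map (fun x => ⟨x.1, hmem x.1 x.2⟩), ?_, ?_⟩
  · simp only [Set.mem_setOf_eq, List.length_map, List.length_attach]
    exact hlen
  · rw [List.map_map]
    simp

lemma finite_ball {J : Set ι} (hJ : J.Finite) (n : ℕ) :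
    {z : FreeGroup ι | norm z ≤ n ∧ SuppIn z J}.Finite := by
  have h1 : {l : List (ι × Bool) | l.length ≤ n ∧
      ∀ x ∈ l, x ∈ (J ×ˢ (Set.univ : Set Bool))}.Finite :=
    finite_lists (hJ.prod Set.finite_univ) n
  apply Set.Finite.of_finite_image (f := toWord) _ (toWord_injective.injOn)
  apply h1.subset
  rintro L ⟨z, ⟨hn, hs⟩, rfl⟩
  exact ⟨hn, fun p hp => ⟨hs p hp, trivial⟩⟩

end Supp

section Ctx
open FreeGroup
variable {G : Type u} [Group G]

structure Ctx (G : Type u) [Group G] where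
  H : Subgroup G
  ι : Type u
  φ : H ≃* FreeGroup ι
  rep : G → G
  mem' : ∀ g : G, g * (rep g)⁻¹ ∈ H
  coset : ∀ g g' : G, g' * g⁻¹ ∈ H → rep g = rep g'
  rep1 : rep 1 = 1
  finrange : (Set.range rep).Finite

variable (c : Ctx G)

def Ctx.hh (g : G) : FreeGroup c.ι := c.φ ⟨g * (c.rep g)⁻¹, c.mem' g⟩

lemma Ctx.hh_one : c.hh 1 = 1 := by
  have : ((⟨1 * (c.rep 1)⁻¹, c.mem' 1⟩ : c.H)) = 1 := by
    apply Subtype.ext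
    simp [c.rep1]
  rw [Ctx.hh, this, _root_.map_one]

lemma Ctx.decomp (g : G) : ((c.φ.symm (c.hh g) : c.H) : G) * c.rep g = g := by
  rw [Ctx.hh, MulEquiv.symm_apply_apply]
  group

def Ctx.Δ (t s : G) : FreeGroup c.ι := c.φ ⟨(t * s) * (c.rep (t * s))⁻¹, c.mem' _⟩

lemma Ctx.rep_mul (g s : G) : c.rep (g * s) = c.rep (c.rep g * s) := by
  apply c.coset
  have h1 : g * (c.rep g)⁻¹ ∈ c.H := c.mem' g
  have h2 : c.rep g * g⁻¹ ∈ c.H := by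
    have := c.H.inv_mem h1
    simpa using this
  have : c.rep g * s * (g * s)⁻¹ = c.rep g * g⁻¹ := by group
  rw [this]
  exact h2

lemma Ctx.hh_step (g s : G) : c.hh (g * s) = c.hh g * c.Δ (c.rep g) s := by
  rw [Ctx.hh, Ctx.hh, Ctx.Δ, ← _root_.map_mul]
  congr 1
  apply Subtype.ext
  show g * s * (c.rep (g * s))⁻¹ = (g * (c.rep g)⁻¹) * ((c.rep g * s) * (c.rep (c.rep g * s))⁻¹)
  rw [← c.rep_mul g s]
  group

lemma Ctx.diff_eq (g g' : G) :
    g⁻¹ * g' = (c.rep g)⁻¹ * ((c.φ.symm ((c.hh g)⁻¹ * (c.hh g')) : c.H) : G) * c.rep g' := by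
  rw [_root_.map_mul, _root_.map_inv]
  push_cast
  have hg := c.decomp g
  have hg' := c.decomp g'
  calc g⁻¹ * g' = (((c.φ.symm (c.hh g) : c.H) : G) * c.rep g)⁻¹
        * (((c.φ.symm (c.hh g') : c.H) : G) * c.rep g') := by rw [hg, hg']
    _ = _ := by group

end Ctx

section Exc
open FreeGroup
variable {G : Type u} [Group G] (c : Ctx G) [DecidableEq c.ι] (S : Finset G)

def pref (w : List G) (i : ℕ) : G := (w.take i).prod

def hseq (c : Ctx G) (w : List G) (i : ℕ) : FreeGroup c.ι := c.hh (pref w i)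

lemma pref_zero (w : List G) : pref w 0 = 1 := by simp [pref]

lemma hseq_zero (w : List G) : hseq c w 0 = 1 := by
  rw [hseq, pref_zero, c.hh_one]

lemma pref_succ (w : List G) {i : ℕ} (hi : i < w.length) :
    pref w (i + 1) = pref w i * w.get ⟨i, hi⟩ := List.prod_take_succ w i hi

lemma hseq_step (w : List G) {i : ℕ} (hi : i < w.length) :
    hseq c w (i + 1) = hseq c w i * c.Δ (c.rep (pref w i)) (w.get ⟨i, hi⟩) := by
  rw [hseq, hseq, pref_succ w hi, c.hh_step]

variable {J : Set c.ι} {L' : ℕ}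

lemma step_norm (hΔL : ∀ t ∈ Set.range c.rep, ∀ s ∈ S, norm (c.Δ t s) ≤ L')
    {w : List G} (hw : ∀ x ∈ w, x ∈ S) {i : ℕ} (hi : i < w.length) :
    norm ((hseq c w i)⁻¹ * hseq c w (i + 1)) ≤ L' := by
  rw [hseq_step c w hi]
  have : (hseq c w i)⁻¹ * (hseq c w i * c.Δ (c.rep (pref w i)) (w.get ⟨i, hi⟩))
      = c.Δ (c.rep (pref w i)) (w.get ⟨i, hi⟩) := by group
  rw [this]
  exact hΔL _ ⟨_, rfl⟩ _ (hw _ (w.get_mem _))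

lemma step_norm' (hΔL : ∀ t ∈ Set.range c.rep, ∀ s ∈ S, norm (c.Δ t s) ≤ L')
    {w : List G} (hw : ∀ x ∈ w, x ∈ S) {i : ℕ} (hi : i < w.length) :
    norm ((hseq c w (i + 1))⁻¹ * hseq c w i) ≤ L' := by
  have h1 : (hseq c w (i+1))⁻¹ * hseq c w i = ((hseq c w i)⁻¹ * hseq c w (i+1))⁻¹ := by group
  rw [h1, norm_inv_eq]
  exact step_norm c S hΔL hw hi

lemma hseq_supp (hΔJ : ∀ t ∈ Set.range c.rep, ∀ s ∈ S, SuppIn (c.Δ t s) J)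
    {w : List G} (hw : ∀ x ∈ w, x ∈ S) (i : ℕ) : SuppIn (hseq c w i) J := by
  induction i with
  | zero => rw [hseq_zero]; exact suppIn_one J
  | succ i ih =>
    by_cases hi : i < w.length
    · rw [hseq_step c w hi]
      exact ih.mul (hΔJ _ ⟨_, rfl⟩ _ (hw _ (w.get_mem _)))
    · push_neg at hi
      have : pref w (i+1) = pref w i := by
        rw [pref, pref, List.take_of_length_le hi, List.take_of_length_le (by omega)]
      rw [hseq, this, ← hseq]
      exact ih

def stateSet (J : Set c.ι) (L' : ℕ) : Set (FreeGroup c.ι × G × FreeGroup c.ι × G) :=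
  {z : FreeGroup c.ι | norm z ≤ L' ∧ SuppIn z J} ×ˢ (Set.range c.rep) ×ˢ
    ({z : FreeGroup c.ι | norm z ≤ L' ∧ SuppIn z J} ×ˢ (Set.range c.rep))

lemma stateSet_finite (hJ : J.Finite) (L' : ℕ) : (stateSet c J L').Finite :=
  ((finite_ball hJ L').prod (c.finrange.prod ((finite_ball hJ L').prod c.finrange)))

lemma stateSet_mem {z₁ z₂ : FreeGroup c.ι} {t₁ t₂ : G}
    (h1 : norm z₁ ≤ L') (h2 : SuppIn z₁ J) (h3 : t₁ ∈ Set.range c.rep)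
    (h4 : norm z₂ ≤ L') (h5 : SuppIn z₂ J) (h6 : t₂ ∈ Set.range c.rep) :
    (z₁, t₁, z₂, t₂) ∈ stateSet c J L' :=
  ⟨⟨h1, h2⟩, h3, ⟨h4, h5⟩, h6⟩

lemma exists_deviation_bound
    (hS1 : (S : Set G) ⊆ {g : G | g ≠ 1})
    (hgr : IsGraded' (Submonoid.closure (S : Set G)))
    (hJ : J.Finite)
    (hΔJ : ∀ t ∈ Set.range c.rep, ∀ s ∈ S, SuppIn (c.Δ t s) J)
    (hΔL : ∀ t ∈ Set.range c.rep, ∀ s ∈ S, norm (c.Δ t s) ≤ L') :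
    ∃ K : ℕ, ∀ w : List G, (∀ x ∈ w, x ∈ S) → ∀ i ≤ w.length,
      norm (hseq c w i) ≤ lcp (toWord (hseq c w i)) (toWord (hseq c w w.length)) + K := by
  classical
  set N := (stateSet_finite c hJ L').toFinset.card with hNdef
  refine ⟨(N + 1) * (L' + 1) + 1, ?_⟩
  intro w hw i hin
  by_contra hdev
  push_neg at hdev
  set n := w.length with hn
  set m := lcp (toWord (hseq c w i)) (toWord (hseq c w n)) with hm
  set lev : ℕ → ℕ := fun t => m + 1 + t * (L' + 1) with hlev
  have hnormi : norm (hseq c w i) = (toWord (hseq c w i)).length := rfl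
  have hlevle : ∀ t ≤ N, lev t ≤ norm (hseq c w i) := by
    intro t ht
    have h1 : t * (L'+1) ≤ N * (L'+1) := Nat.mul_le_mul_right (L'+1) ht
    have h2 : m + (N+1) * (L'+1) + 1 < norm (hseq c w i) := hdev
    have h3 : N * (L'+1) + (L'+1) = (N+1)*(L'+1) := by ring
    simp only [hlev]
    omega
  have hlevm : ∀ t : ℕ, m < lev t := by intro t; simp only [hlev]; omega
  set X : ℕ → List (c.ι × Bool) := fun ℓ => (toWord (hseq c w i)).take ℓ with hX
  have hXred : ∀ ℓ, IsRed (X ℓ) := fun ℓ => (isRed_toWord _).take ℓ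
  have hXlen : ∀ ℓ, ℓ ≤ norm (hseq c w i) → (X ℓ).length = ℓ := by
    intro ℓ hℓ; simp only [hX, List.length_take]; omega
  have hXpre : ∀ ℓ, X ℓ <+: toWord (hseq c w i) := fun ℓ => List.take_prefix _ _
  have hXsupp : ∀ ℓ, SuppIn (mk (X ℓ)) J := fun ℓ =>
    suppIn_mk_of_prefix (hXred ℓ) (hXpre ℓ) (hseq_supp c S hΔJ hw i)
  set B : ℕ → ℕ → Prop := fun ℓ k => X ℓ <+: toWord (hseq c w k) with hB
  have hBdef : ∀ ℓ k, B ℓ k ↔ X ℓ <+: toWord (hseq c w k) := fun ℓ k => Iff.rfl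
  have hBmono : ∀ ℓ ℓ' k, ℓ ≤ ℓ' → B ℓ' k → B ℓ k := by
    intro ℓ ℓ' k h hk
    rw [hBdef] at *
    exact (List.take_isPrefix_take.mpr (Or.inl h)).trans hk
  have hBn : ∀ ℓ, m < ℓ → ℓ ≤ norm (hseq c w i) → ¬ B ℓ n := by
    intro ℓ h1 h2 hpre
    rw [hBdef] at hpre
    have := length_le_lcp (hXpre ℓ) hpre
    rw [hXlen ℓ h2] at this; omega
  have hB0 : ∀ ℓ, 0 < ℓ → ℓ ≤ norm (hseq c w i) → ¬ B ℓ 0 := by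
    intro ℓ h1 h2 hpre
    rw [hBdef] at hpre
    rw [hseq_zero, toWord_one, List.prefix_nil] at hpre
    have := hXlen ℓ h2
    rw [hpre] at this
    simp at this; omega
  have hBi : ∀ ℓ, B ℓ i := fun ℓ => (hBdef ℓ i).mpr (hXpre ℓ)
  have hirange : i ≤ n := hin
  -- last exit
  have hoex : ∀ ℓ, m < ℓ → ℓ ≤ norm (hseq c w i) →
      ∃ oo, ¬ B ℓ oo ∧ oo < i ∧ ∀ k, oo < k → k ≤ i → B ℓ k := by
    intro ℓ h1 h2
    have hP0 : ¬ B ℓ 0 := hB0 ℓ (by omega) h2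
    have hspec : ¬ B ℓ (Nat.findGreatest (fun k => ¬ B ℓ k) i) :=
      Nat.findGreatest_spec (P := fun k => ¬ B ℓ k) (Nat.zero_le i) hP0
    refine ⟨Nat.findGreatest (fun k => ¬ B ℓ k) i, hspec, ?_, ?_⟩
    · rcases Nat.lt_or_ge (Nat.findGreatest (fun k => ¬ B ℓ k) i) i with h | h
      · exact h
      · exfalso
        have hle := Nat.findGreatest_le (P := fun k => ¬ B ℓ k) i
        have heqi : Nat.findGreatest (fun k => ¬ B ℓ k) i = i := le_antisymm hle h
        rw [heqi] at hspec
        exact hspec (hBi ℓ)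
    · intro k hk1 hk2
      by_contra hnB
      exact (Nat.findGreatest_is_greatest hk1 hk2) hnB
  -- first return
  have hrex : ∀ ℓ, m < ℓ → ℓ ≤ norm (hseq c w i) →
      ∃ rr, ¬ B ℓ rr ∧ i < rr ∧ rr ≤ n ∧ ∀ k, i ≤ k → k < rr → B ℓ k := by
    intro ℓ h1 h2
    have hiadd : i + (n - i) = n := by omega
    have hex : ∃ d, ¬ B ℓ (i + d) := ⟨n - i, by rw [hiadd]; exact hBn ℓ h1 h2⟩
    refine ⟨i + Nat.find hex, Nat.find_spec hex, ?_, ?_, ?_⟩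
    · have hne0 : Nat.find hex ≠ 0 := by
        intro h0
        have hsp := Nat.find_spec hex
        rw [h0] at hsp
        exact hsp (by simpa using hBi ℓ)
      omega
    · have := Nat.find_min' hex (m := n - i) (by rw [hiadd]; exact hBn ℓ h1 h2)
      omega
    · intro k hk1 hk2
      have hmin := Nat.find_min hex (m := k - i) (by omega)
      rw [not_not] at hmin
      have hkadd : i + (k - i) = k := by omega
      rwa [hkadd] at hmin
  -- apply to the levels
  have hlml : ∀ t : Fin (N+1), m < lev t := fun t => hlevm t
  have hlnorm : ∀ t : Fin (N+1), lev t ≤ norm (hseq c w i) := fun t =>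
    hlevle t (by omega)
  choose O hO1 hO2 hO3 using fun t : Fin (N+1) => hoex (lev t) (hlml t) (hlnorm t)
  choose R hR1 hR2 hR3 hR4 using fun t : Fin (N+1) => hrex (lev t) (hlml t) (hlnorm t)
  have hO1' : ∀ t : Fin (N+1), B (lev t) (O t + 1) := fun t =>
    hO3 t _ (by omega) (by have := hO2 t; omega)
  have hR1' : ∀ t : Fin (N+1), B (lev t) (R t - 1) := fun t =>
    hR4 t _ (by have := hR2 t; omega) (by have := hR2 t; omega)
  have hnorm1 : ∀ t : Fin (N+1), norm ((mk (X (lev t)))⁻¹ * hseq c w (O t)) ≤ L' := by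
    intro t
    have hcross := tree_cross₁ (hXred (lev t)) ((hBdef _ _).mp (hO1' t))
      (fun hc => (hO1 t) ((hBdef _ _).mpr hc))
    have hstep := step_norm c S hΔL hw (i := O t) (by have := hO2 t; omega)
    omega
  have hnorm2 : ∀ t : Fin (N+1), norm ((mk (X (lev t)))⁻¹ * hseq c w (R t)) ≤ L' := by
    intro t
    have h1 : (R t - 1) + 1 = R t := by have := hR2 t; omega
    have hcross := tree_cross₁ (hXred (lev t)) ((hBdef _ _).mp (hR1' t))
      (fun hc => (hR1 t) ((hBdef _ _).mpr hc))
    have hstep := step_norm' c S hΔL hw (i := R t - 1)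
      (by have := hR2 t; have := hR3 t; omega)
    rw [h1] at hstep
    omega
  have hsupp1 : ∀ t : Fin (N+1), SuppIn ((mk (X (lev t)))⁻¹ * hseq c w (O t)) J := by
    intro t
    exact ((hXsupp (lev t)).inv).mul (hseq_supp c S hΔJ hw _)
  have hsupp2 : ∀ t : Fin (N+1), SuppIn ((mk (X (lev t)))⁻¹ * hseq c w (R t)) J := by
    intro t
    exact ((hXsupp (lev t)).inv).mul (hseq_supp c S hΔJ hw _)
  set St : Fin (N+1) → FreeGroup c.ι × G × FreeGroup c.ι × G := fun t =>
    ((mk (X (lev t)))⁻¹ * hseq c w (O t), c.rep (pref w (O t)),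
     (mk (X (lev t)))⁻¹ * hseq c w (R t), c.rep (pref w (R t))) with hSt
  have hStmem : ∀ t, St t ∈ (stateSet_finite c hJ L').toFinset := by
    intro t
    rw [Set.Finite.mem_toFinset]
    exact stateSet_mem c (hnorm1 t) (hsupp1 t) ⟨_, rfl⟩ (hnorm2 t) (hsupp2 t) ⟨_, rfl⟩
  have hcard : Fintype.card {x // x ∈ (stateSet_finite c hJ L').toFinset} <
      Fintype.card (Fin (N+1)) := by
    rw [Fintype.card_coe, Fintype.card_fin]
    omega
  obtain ⟨a, b, hab, habeq⟩ := Fintype.exists_ne_map_eq_of_card_lt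
    (fun t : Fin (N+1) => (⟨St t, hStmem t⟩ : {x // x ∈ (stateSet_finite c hJ L').toFinset}))
    hcard
  have hSteq : St a = St b := congrArg Subtype.val habeq
  -- the difference of prefix products is determined by the state
  have hdiff : ∀ t : Fin (N+1), (pref w (O t))⁻¹ * pref w (R t) =
      ((St t).2.1)⁻¹ * ((c.φ.symm ((St t).1⁻¹ * (St t).2.2.1) : c.H) : G) * (St t).2.2.2 := by
    intro t
    have h1 : (St t).1⁻¹ * (St t).2.2.1 = (hseq c w (O t))⁻¹ * hseq c w (R t) := by
      rw [hSt]; simp only; group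
    rw [h1]
    have h2 : (St t).2.1 = c.rep (pref w (O t)) := rfl
    have h3 : (St t).2.2.2 = c.rep (pref w (R t)) := rfl
    rw [h2, h3]
    exact c.diff_eq _ _
  -- main contradiction, assuming a < b
  have key : ∀ a b : Fin (N+1), a < b → St a = St b → False := by
    intro a b hab' hSteq'
    have hOmono : O a ≤ O b := by
      by_contra hlt
      push_neg at hlt
      have hBk : B (lev b) (O a) := hO3 b (O a) hlt (by have := hO2 a; omega)
      exact (hO1 a) (hBmono _ _ _ (by
        have : (a : ℕ) ≤ (b : ℕ) := le_of_lt hab'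
        simp only [hlev]
        have := Nat.mul_le_mul_right (L'+1) this
        omega) hBk)
    have hRmono : R b ≤ R a := by
      by_contra hlt
      push_neg at hlt
      have hBk : B (lev b) (R a) := hR4 b (R a) (by have := hR2 a; omega) hlt
      exact (hR1 a) (hBmono _ _ _ (by
        have : (a : ℕ) ≤ (b : ℕ) := le_of_lt hab'
        simp only [hlev]
        have := Nat.mul_le_mul_right (L'+1) this
        omega) hBk)
    have hlevlt : lev a + L' < lev b := by
      have : (a : ℕ) + 1 ≤ (b : ℕ) := hab'
      have := Nat.mul_le_mul_right (L'+1) this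
      simp only [hlev]
      have hexp : ((a : ℕ) + 1) * (L'+1) = (a : ℕ) * (L'+1) + L' + 1 := by ring
      omega
    have hne : O a < O b ∨ R b < R a := by
      by_contra hcon
      push_neg at hcon
      obtain ⟨h1, h2⟩ := hcon
      have hOeq : O a = O b := le_antisymm hOmono h1
      -- separation contradiction
      have hsep := tree_sep (h := hseq c w (O a)) (h' := hseq c w (O a + 1))
        (y := toWord (hseq c w i)) (ℓ := lev a) (ℓ' := lev b)
        (by omega) (by rw [← hnormi]; exact hlnorm b)
        (by rw [hOeq]; exact (hBdef _ _).mp (hO1' b))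
        (fun hc => (hO1 a) ((hBdef _ _).mpr hc))
      have hstep := step_norm c S hΔL hw (i := O a) (by have := hO2 a; omega)
      omega
    have heq : ((w.take (O a)).prod)⁻¹ * (w.take (R a)).prod
        = ((w.take (O b)).prod)⁻¹ * (w.take (R b)).prod := by
      have e1 := hdiff a
      have e2 := hdiff b
      rw [hSteq'] at e1
      rw [← e2] at e1
      exact e1
    exact pump S hS1 hgr w hw (O a) (O b) (R b) (R a)
      hOmono (by have := hO2 b; have := hR2 b; omega) hRmono (hR3 a) hne heq
  rcases lt_trichotomy a b with h | h | h
  · exact key a b h hSteq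
  · exact absurd h hab
  · exact key b a h hSteq.symm
lemma exists_dip_bound
    (hS1 : (S : Set G) ⊆ {g : G | g ≠ 1})
    (hgr : IsGraded' (Submonoid.closure (S : Set G)))
    (hJ : J.Finite)
    (hΔJ : ∀ t ∈ Set.range c.rep, ∀ s ∈ S, SuppIn (c.Δ t s) J)
    (hΔL : ∀ t ∈ Set.range c.rep, ∀ s ∈ S, norm (c.Δ t s) ≤ L') :
    ∃ K : ℕ, ∀ w : List G, (∀ x ∈ w, x ∈ S) → ∀ j' j, j' ≤ j → j ≤ w.length →
      lcp (toWord (hseq c w j')) (toWord (hseq c w w.length)) ≤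
        lcp (toWord (hseq c w j)) (toWord (hseq c w w.length)) + K := by
  classical
  set N := (stateSet_finite c hJ L').toFinset.card with hNdef
  refine ⟨(N + 1) * (L' + 1) + 1, ?_⟩
  intro w hw j' j hj'j hjn
  by_contra hdip
  push_neg at hdip
  set n := w.length with hn
  set m' := lcp (toWord (hseq c w j')) (toWord (hseq c w n)) with hm'
  set mj := lcp (toWord (hseq c w j)) (toWord (hseq c w n)) with hmj
  set lev : ℕ → ℕ := fun t => mj + 1 + t * (L' + 1) with hlev
  have hm'norm : m' ≤ norm (hseq c w n) := lcp_le_right _ _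
  have hnormn : norm (hseq c w n) = (toWord (hseq c w n)).length := rfl
  have hlevle : ∀ t ≤ N, lev t ≤ m' := by
    intro t ht
    have h1 : t * (L'+1) ≤ N * (L'+1) := Nat.mul_le_mul_right (L'+1) ht
    have h3 : N * (L'+1) + (L'+1) = (N+1)*(L'+1) := by ring
    simp only [hlev]
    omega
  have hlevm : ∀ t : ℕ, mj < lev t := by intro t; simp only [hlev]; omega
  set X : ℕ → List (c.ι × Bool) := fun ℓ => (toWord (hseq c w n)).take ℓ with hX
  have hXred : ∀ ℓ, IsRed (X ℓ) := fun ℓ => (isRed_toWord _).take ℓ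
  have hXlen : ∀ ℓ, ℓ ≤ norm (hseq c w n) → (X ℓ).length = ℓ := by
    intro ℓ hℓ; simp only [hX, List.length_take]; omega
  have hXpre : ∀ ℓ, X ℓ <+: toWord (hseq c w n) := fun ℓ => List.take_prefix _ _
  have hXsupp : ∀ ℓ, SuppIn (mk (X ℓ)) J := fun ℓ =>
    suppIn_mk_of_prefix (hXred ℓ) (hXpre ℓ) (hseq_supp c S hΔJ hw n)
  set B : ℕ → ℕ → Prop := fun ℓ k => X ℓ <+: toWord (hseq c w k) with hB
  have hBdef : ∀ ℓ k, B ℓ k ↔ X ℓ <+: toWord (hseq c w k) := fun ℓ k => Iff.rfl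
  have hBmono : ∀ ℓ ℓ' k, ℓ ≤ ℓ' → B ℓ' k → B ℓ k := by
    intro ℓ ℓ' k h hk
    rw [hBdef] at *
    exact (List.take_isPrefix_take.mpr (Or.inl h)).trans hk
  have hBj' : ∀ ℓ, ℓ ≤ m' → B ℓ j' := by
    intro ℓ hℓ
    rw [hBdef]
    have h1 : (toWord (hseq c w j')).take ℓ = (toWord (hseq c w n)).take ℓ :=
      take_eq_take_of_le_lcp (by rw [← hm']; exact hℓ)
    rw [hX]
    simp only
    rw [← h1]
    exact List.take_prefix _ _
  have hBj : ∀ ℓ, mj < ℓ → ℓ ≤ norm (hseq c w n) → ¬ B ℓ j := by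
    intro ℓ h1 h2 hpre
    rw [hBdef] at hpre
    have := length_le_lcp hpre (hXpre ℓ)
    rw [hXlen ℓ h2] at this
    omega
  have hBn : ∀ ℓ, B ℓ n := fun ℓ => (hBdef ℓ n).mpr (hXpre ℓ)
  -- last time on the geodesic before j
  have hoex : ∀ ℓ, mj < ℓ → ℓ ≤ m' →
      ∃ oo, B ℓ oo ∧ oo < j ∧ ∀ k, oo < k → k ≤ j → ¬ B ℓ k := by
    intro ℓ h1 h2
    have hP0 : B ℓ j' := hBj' ℓ h2
    have hspec : B ℓ (Nat.findGreatest (fun k => B ℓ k) j) :=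
      Nat.findGreatest_spec (P := fun k => B ℓ k) hj'j hP0
    refine ⟨Nat.findGreatest (fun k => B ℓ k) j, hspec, ?_, ?_⟩
    · rcases Nat.lt_or_ge (Nat.findGreatest (fun k => B ℓ k) j) j with h | h
      · exact h
      · exfalso
        have hle := Nat.findGreatest_le (P := fun k => B ℓ k) j
        have heqi : Nat.findGreatest (fun k => B ℓ k) j = j := le_antisymm hle h
        rw [heqi] at hspec
        exact hBj ℓ h1 (le_trans h2 hm'norm) hspec
    · intro k hk1 hk2
      exact Nat.findGreatest_is_greatest hk1 hk2
  -- first return to the geodesic after j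
  have hrex : ∀ ℓ, mj < ℓ → ℓ ≤ m' →
      ∃ rr, B ℓ rr ∧ j < rr ∧ rr ≤ n ∧ ∀ k, j ≤ k → k < rr → ¬ B ℓ k := by
    intro ℓ h1 h2
    have hjadd : j + (n - j) = n := by omega
    have hex : ∃ d, B ℓ (j + d) := ⟨n - j, by rw [hjadd]; exact hBn ℓ⟩
    refine ⟨j + Nat.find hex, Nat.find_spec hex, ?_, ?_, ?_⟩
    · have hne0 : Nat.find hex ≠ 0 := by
        intro h0
        have hsp := Nat.find_spec hex
        rw [h0] at hsp
        simp only [Nat.add_zero] at hsp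
        exact hBj ℓ h1 (le_trans h2 hm'norm) hsp
      omega
    · have := Nat.find_min' hex (m := n - j) (by rw [hjadd]; exact hBn ℓ)
      omega
    · intro k hk1 hk2
      have hmin := Nat.find_min hex (m := k - j) (by omega)
      have hkadd : j + (k - j) = k := by omega
      rwa [hkadd] at hmin
  have hlml : ∀ t : Fin (N+1), mj < lev t := fun t => hlevm t
  have hlm' : ∀ t : Fin (N+1), lev t ≤ m' := fun t => hlevle t (by omega)
  choose E hE1 hE2 hE3 using fun t : Fin (N+1) => hoex (lev t) (hlml t) (hlm' t)
  choose R hR1 hR2 hR3 hR4 using fun t : Fin (N+1) => hrex (lev t) (hlml t) (hlm' t)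
  have hE1' : ∀ t : Fin (N+1), ¬ B (lev t) (E t + 1) := fun t =>
    hE3 t _ (by omega) (by have := hE2 t; omega)
  have hR1' : ∀ t : Fin (N+1), ¬ B (lev t) (R t - 1) := fun t =>
    hR4 t _ (by have := hR2 t; omega) (by have := hR2 t; omega)
  have hnorm1 : ∀ t : Fin (N+1), norm ((mk (X (lev t)))⁻¹ * hseq c w (E t)) ≤ L' := by
    intro t
    have hcross := tree_cross₂ (hXred (lev t)) ((hBdef _ _).mp (hE1 t))
      (fun hc => (hE1' t) ((hBdef _ _).mpr hc))
    have hstep := step_norm' c S hΔL hw (i := E t) (by have := hE2 t; omega)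
    omega
  have hnorm2 : ∀ t : Fin (N+1), norm ((mk (X (lev t)))⁻¹ * hseq c w (R t)) ≤ L' := by
    intro t
    have h1 : (R t - 1) + 1 = R t := by have := hR2 t; omega
    have hcross := tree_cross₂ (hXred (lev t)) ((hBdef _ _).mp (hR1 t))
      (fun hc => (hR1' t) ((hBdef _ _).mpr hc))
    have hstep := step_norm c S hΔL hw (i := R t - 1)
      (by have := hR2 t; have := hR3 t; omega)
    rw [h1] at hstep
    omega
  have hsupp1 : ∀ t : Fin (N+1), SuppIn ((mk (X (lev t)))⁻¹ * hseq c w (E t)) J := by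
    intro t
    exact ((hXsupp (lev t)).inv).mul (hseq_supp c S hΔJ hw _)
  have hsupp2 : ∀ t : Fin (N+1), SuppIn ((mk (X (lev t)))⁻¹ * hseq c w (R t)) J := by
    intro t
    exact ((hXsupp (lev t)).inv).mul (hseq_supp c S hΔJ hw _)
  set St : Fin (N+1) → FreeGroup c.ι × G × FreeGroup c.ι × G := fun t =>
    ((mk (X (lev t)))⁻¹ * hseq c w (E t), c.rep (pref w (E t)),
     (mk (X (lev t)))⁻¹ * hseq c w (R t), c.rep (pref w (R t))) with hSt
  have hStmem : ∀ t, St t ∈ (stateSet_finite c hJ L').toFinset := by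
    intro t
    rw [Set.Finite.mem_toFinset]
    exact stateSet_mem c (hnorm1 t) (hsupp1 t) ⟨_, rfl⟩ (hnorm2 t) (hsupp2 t) ⟨_, rfl⟩
  have hcard : Fintype.card {x // x ∈ (stateSet_finite c hJ L').toFinset} <
      Fintype.card (Fin (N+1)) := by
    rw [Fintype.card_coe, Fintype.card_fin]
    omega
  obtain ⟨a, b, hab, habeq⟩ := Fintype.exists_ne_map_eq_of_card_lt
    (fun t : Fin (N+1) => (⟨St t, hStmem t⟩ : {x // x ∈ (stateSet_finite c hJ L').toFinset}))
    hcard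
  have hSteq : St a = St b := congrArg Subtype.val habeq
  have hdiff : ∀ t : Fin (N+1), (pref w (E t))⁻¹ * pref w (R t) =
      ((St t).2.1)⁻¹ * ((c.φ.symm ((St t).1⁻¹ * (St t).2.2.1) : c.H) : G) * (St t).2.2.2 := by
    intro t
    have h1 : (St t).1⁻¹ * (St t).2.2.1 = (hseq c w (E t))⁻¹ * hseq c w (R t) := by
      rw [hSt]; simp only; group
    rw [h1]
    have h2 : (St t).2.1 = c.rep (pref w (E t)) := rfl
    have h3 : (St t).2.2.2 = c.rep (pref w (R t)) := rfl
    rw [h2, h3]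
    exact c.diff_eq _ _
  have key : ∀ a b : Fin (N+1), a < b → St a = St b → False := by
    intro a b hab' hSteq'
    have hlevab : lev a ≤ lev b := by
      have : (a : ℕ) ≤ (b : ℕ) := le_of_lt hab'
      simp only [hlev]
      have := Nat.mul_le_mul_right (L'+1) this
      omega
    have hEmono : E b ≤ E a := by
      by_contra hlt
      push_neg at hlt
      have hBk : ¬ B (lev a) (E b) := hE3 a (E b) hlt (by have := hE2 b; omega)
      exact hBk (hBmono _ _ _ hlevab (hE1 b))
    have hRmono : R a ≤ R b := by
      by_contra hlt
      push_neg at hlt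
      have hBk : ¬ B (lev a) (R b) := hR4 a (R b) (by have := hR2 b; omega) hlt
      exact hBk (hBmono _ _ _ hlevab (hR1 b))
    have hlevlt : lev a + L' < lev b := by
      have : (a : ℕ) + 1 ≤ (b : ℕ) := hab'
      have := Nat.mul_le_mul_right (L'+1) this
      simp only [hlev]
      have hexp : ((a : ℕ) + 1) * (L'+1) = (a : ℕ) * (L'+1) + L' + 1 := by ring
      omega
    have hne : E b < E a ∨ R a < R b := by
      by_contra hcon
      push_neg at hcon
      obtain ⟨h1, h2⟩ := hcon
      have hEeq : E a = E b := le_antisymm h1 hEmono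
      have hsep := tree_sep (h := hseq c w (E a + 1)) (h' := hseq c w (E a))
        (y := toWord (hseq c w n)) (ℓ := lev a) (ℓ' := lev b)
        (by omega) (by rw [← hnormn]; exact le_trans (hlm' b) hm'norm)
        (by rw [hEeq]; exact (hBdef _ _).mp (hE1 b))
        (fun hc => (hE1' a) ((hBdef _ _).mpr hc))
      have hstep := step_norm' c S hΔL hw (i := E a) (by have := hE2 a; omega)
      omega
    have heq : ((w.take (E b)).prod)⁻¹ * (w.take (R b)).prod
        = ((w.take (E a)).prod)⁻¹ * (w.take (R a)).prod := by
      have e1 := hdiff a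
      have e2 := hdiff b
      rw [hSteq'] at e1
      rw [← e2] at e1
      exact e1.symm
    exact pump S hS1 hgr w hw (E b) (E a) (R a) (R b)
      hEmono (by have := hE2 a; have := hR2 a; omega) hRmono (hR3 b)
      (by tauto) heq
  rcases lt_trichotomy a b with h | h | h
  · exact key a b h hSteq
  · exact absurd h hab
  · exact key b a h hSteq.symm

end Exc

section Shuffle
variable {A : Type*}

def projl : List (A ⊕ A) → List A :=
  List.filterMap (fun x => Sum.elim some (fun _ => none) x)

def projr : List (A ⊕ A) → List A :=
  List.filterMap (fun x => Sum.elim (fun _ => none) some x)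

@[simp] lemma projl_nil : projl ([] : List (A ⊕ A)) = [] := rfl
@[simp] lemma projr_nil : projr ([] : List (A ⊕ A)) = [] := rfl
@[simp] lemma projl_cons_inl (a : A) (L : List (A ⊕ A)) :
    projl (Sum.inl a :: L) = a :: projl L := rfl
@[simp] lemma projl_cons_inr (a : A) (L : List (A ⊕ A)) :
    projl (Sum.inr a :: L) = projl L := rfl
@[simp] lemma projr_cons_inl (a : A) (L : List (A ⊕ A)) :
    projr (Sum.inl a :: L) = projr L := rfl
@[simp] lemma projr_cons_inr (a : A) (L : List (A ⊕ A)) :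
    projr (Sum.inr a :: L) = a :: projr L := rfl

lemma projl_map_inr (vs : List A) : projl (vs.map Sum.inr) = [] := by
  induction vs with
  | nil => rfl
  | cons b vs ih => simp [ih]

lemma projr_map_inl (us : List A) : projr (us.map Sum.inl) = [] := by
  induction us with
  | nil => rfl
  | cons b vs ih => simp [ih]

lemma projl_map_inl (us : List A) : projl (us.map Sum.inl) = us := by
  induction us with
  | nil => rfl
  | cons b vs ih => simp [ih]

lemma projr_map_inr (vs : List A) : projr (vs.map Sum.inr) = vs := by
  induction vs with
  | nil => rfl
  | cons b vs ih => simp [ih]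

def shuffle (f g : ℕ → ℕ) : List A → List A → ℕ → ℕ → List (A ⊕ A)
  | [], vs, _, _ => vs.map Sum.inr
  | a :: us, [], _, _ => (a :: us).map Sum.inl
  | a :: us, b :: vs, i, j =>
    if f i ≤ g j then Sum.inl a :: shuffle f g us (b :: vs) (i+1) j
    else Sum.inr b :: shuffle f g (a :: us) vs i (j+1)
  termination_by us vs => us.length + vs.length
  decreasing_by all_goals (simp only [List.length_cons]; omega)

lemma shuffle_projl (f g : ℕ → ℕ) :
    ∀ (us vs : List A) (i j : ℕ), projl (shuffle f g us vs i j) = us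
  | [], vs, i, j => by rw [shuffle]; exact projl_map_inr vs
  | a :: us, [], i, j => by rw [shuffle]; exact projl_map_inl _
  | a :: us, b :: vs, i, j => by
    rw [shuffle]
    split
    · rw [projl_cons_inl, shuffle_projl f g us (b :: vs) (i+1) j]
    · rw [projl_cons_inr, shuffle_projl f g (a :: us) vs i (j+1)]
  termination_by us vs => us.length + vs.length
  decreasing_by all_goals (simp only [List.length_cons]; omega)

lemma shuffle_projr (f g : ℕ → ℕ) :
    ∀ (us vs : List A) (i j : ℕ), projr (shuffle f g us vs i j) = vs
  | [], vs, i, j => by rw [shuffle]; exact projr_map_inr vs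
  | a :: us, [], i, j => by rw [shuffle]; exact projr_map_inl _
  | a :: us, b :: vs, i, j => by
    rw [shuffle]
    split
    · rw [projr_cons_inl, shuffle_projr f g us (b :: vs) (i+1) j]
    · rw [projr_cons_inr, shuffle_projr f g (a :: us) vs i (j+1)]
  termination_by us vs => us.length + vs.length
  decreasing_by all_goals (simp only [List.length_cons]; omega)

lemma take_min_length (l : List A) (k : ℕ) : l.take (min k l.length) = l.take k := by
  rcases le_total k l.length with h | h
  · rw [Nat.min_eq_left h]
  · rw [Nat.min_eq_right h, List.take_length, List.take_of_length_le h]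

lemma shuffle_take_spec (f g : ℕ → ℕ) (n₁ n₂ : ℕ) (Inv : ℕ → ℕ → Prop)
    (hstepu : ∀ i j, i < n₁ → j ≤ n₂ → Inv i j → (j = n₂ ∨ f i ≤ g j) → Inv (i+1) j)
    (hstepv : ∀ i j, i ≤ n₁ → j < n₂ → Inv i j → (i = n₁ ∨ g j < f i) → Inv i (j+1)) :
    ∀ (us vs : List A) (i j : ℕ), i + us.length = n₁ → j + vs.length = n₂ → Inv i j →
    ∀ k : ℕ, ∃ d e : ℕ, d ≤ us.length ∧ e ≤ vs.length ∧
      projl ((shuffle f g us vs i j).take k) = us.take d ∧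
      projr ((shuffle f g us vs i j).take k) = vs.take e ∧ Inv (i+d) (j+e)
  | [], vs, i, j => by
    intro hi hj hInv k
    rw [shuffle]
    have hi' : i = n₁ := by simpa using hi
    have hInvs : ∀ e : ℕ, e ≤ vs.length → Inv i (j + e) := by
      intro e
      induction e with
      | zero => intro _; simpa using hInv
      | succ e ih =>
        intro he
        have h1 : Inv i (j + e) := ih (by omega)
        exact hstepv i (j + e) (by omega) (by omega) h1 (Or.inl hi')
    refine ⟨0, min k vs.length, by simp, Nat.min_le_right _ _, ?_, ?_, ?_⟩
    · rw [← List.map_take, projl_map_inr]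
      simp
    · rw [← List.map_take, projr_map_inr, take_min_length]
    · simpa using hInvs (min k vs.length) (Nat.min_le_right _ _)
  | a :: us, [], i, j => by
    intro hi hj hInv k
    rw [shuffle]
    have hj' : j = n₂ := by simpa using hj
    have hInvs : ∀ d : ℕ, d ≤ (a :: us).length → Inv (i + d) j := by
      intro d
      induction d with
      | zero => intro _; simpa using hInv
      | succ d ih =>
        intro hd
        have h1 : Inv (i + d) j := ih (by omega)
        exact hstepu (i + d) j (by omega) (by omega) h1 (Or.inl hj')
    refine ⟨min k (a :: us).length, 0, Nat.min_le_right _ _, by simp, ?_, ?_, ?_⟩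
    · rw [← List.map_take, projl_map_inl, take_min_length]
    · rw [← List.map_take, projr_map_inl]
      simp
    · simpa using hInvs (min k (a :: us).length) (Nat.min_le_right _ _)
  | a :: us, b :: vs, i, j => by
    intro hi hj hInv k
    rw [shuffle]
    cases k with
    | zero =>
      refine ⟨0, 0, by simp, by simp, ?_, ?_, ?_⟩
      · simp
      · simp
      · simpa using hInv
    | succ k =>
      split
      · next hfg =>
        have hInv' : Inv (i+1) j :=
          hstepu i j (by simp at hi; omega) (by simp at hj; omega) hInv (Or.inr hfg)
        obtain ⟨d, e, hd, he, hpl, hpr, hI⟩ := shuffle_take_spec f g n₁ n₂ Inv hstepu hstepv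
          us (b :: vs) (i+1) j (by simp at hi ⊢; omega) hj hInv' k
        refine ⟨d + 1, e, by simpa using hd, he, ?_, ?_, ?_⟩
        · rw [List.take_succ_cons, projl_cons_inl, hpl, List.take_succ_cons]
        · rw [List.take_succ_cons, projr_cons_inl, hpr]
        · have harr : i + (d + 1) = (i + 1) + d := by omega
          rw [harr]
          exact hI
      · next hfg =>
        have hlt : g j < f i := by omega
        have hInv' : Inv i (j+1) :=
          hstepv i j (by simp at hi; omega) (by simp at hj; omega) hInv (Or.inr hlt)
        obtain ⟨d, e, hd, he, hpl, hpr, hI⟩ := shuffle_take_spec f g n₁ n₂ Inv hstepu hstepv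
          (a :: us) vs i (j+1) hi (by simp at hj ⊢; omega) hInv' k
        refine ⟨d, e + 1, hd, by simpa using he, ?_, ?_, ?_⟩
        · rw [List.take_succ_cons, projl_cons_inr, hpl]
        · rw [List.take_succ_cons, projr_cons_inr, hpr, List.take_succ_cons]
        · have harr : j + (e + 1) = (j + 1) + e := by omega
          rw [harr]
          exact hI
  termination_by us vs => us.length + vs.length
  decreasing_by all_goals (simp only [List.length_cons]; omega)

end Shuffle
end BRP

namespace BRP
section Glue
variable {A : Type*}

lemma ofList_cons {B : Type*} (x : B) (L : List B) :
    FreeMonoid.ofList (x :: L) = FreeMonoid.of x * FreeMonoid.ofList L := rfl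

lemma proj₁_ofList (L : List (A ⊕ A)) :
    proj₁ (FreeMonoid.ofList L) = FreeMonoid.ofList (projl L) := by
  induction L with
  | nil => simp [proj₁]
  | cons x L ih =>
    rw [ofList_cons, map_mul, ih]
    cases x with
    | inl a =>
      have h1 : proj₁ (FreeMonoid.of (Sum.inl a : A ⊕ A)) = FreeMonoid.of a := by
        simp [proj₁]
      rw [projl_cons_inl, ofList_cons, h1]
    | inr a =>
      rw [projl_cons_inr]
      have : proj₁ (FreeMonoid.of (Sum.inr a : A ⊕ A)) = 1 := by simp [proj₁]
      rw [this, one_mul]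

lemma proj₂_ofList (L : List (A ⊕ A)) :
    proj₂ (FreeMonoid.ofList L) = FreeMonoid.ofList (projr L) := by
  induction L with
  | nil => simp [proj₂]
  | cons x L ih =>
    rw [ofList_cons, map_mul, ih]
    cases x with
    | inr a =>
      have h1 : proj₂ (FreeMonoid.of (Sum.inr a : A ⊕ A)) = FreeMonoid.of a := by
        simp [proj₂]
      rw [projr_cons_inr, ofList_cons, h1]
    | inl a =>
      rw [projr_cons_inl]
      have : proj₂ (FreeMonoid.of (Sum.inl a : A ⊕ A)) = 1 := by simp [proj₂]
      rw [this, one_mul]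

end Glue
end BRP

open BRP in
theorem bounded_relation_paths_of_graded
    (G : Type u) [Group G] (hG : VirtuallyFree G)
    (A : Finset G) (hA : Subgroup.closure (A : Set G) = ⊤)
    (S : Finset G) (hS1 : (S : Set G) ⊆ {g : G | g ≠ 1})
    (hgraded : IsGraded (Submonoid.closure (S : Set G)))
    (α : FreeMonoid S →* G) (hα : α = FreeMonoid.lift (fun s : S => (s : G))) :
    ∃ C : ℕ, 0 < C ∧
      ∀ u v : FreeMonoid S, α u = α v →
        ∃ w : FreeMonoid (S ⊕ S), proj₁ w = u ∧ proj₂ w = v ∧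
          ∀ p : FreeMonoid (S ⊕ S), FreeMonoid.toList p <+: FreeMonoid.toList w →
            wordLength (A : Set G) ((α (proj₁ p))⁻¹ * α (proj₂ p)) ≤ C := by
  classical
  obtain ⟨H, hfi, ι, ⟨φ⟩⟩ := hG
  haveI := hfi
  haveI hQfin : Finite (Quotient (QuotientGroup.rightRel H)) :=
    Finite.of_equiv _ (QuotientGroup.quotientRightRelEquivQuotientLeftRel (H : Subgroup G)).symm
  -- build the context
  set rep : G → G := fun g => if g ∈ H then 1
    else (Quotient.mk (QuotientGroup.rightRel H) g).out with hrepdef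
  have hmem' : ∀ g : G, g * (rep g)⁻¹ ∈ H := by
    intro g
    by_cases hgH : g ∈ H
    · rw [hrepdef]
      simp only [if_pos hgH]
      simpa using hgH
    · rw [hrepdef]
      simp only [if_neg hgH]
      have hout := Quotient.mk_out (s := QuotientGroup.rightRel H) g
      exact (QuotientGroup.rightRel_apply).mp hout
  have hcoset : ∀ g g' : G, g' * g⁻¹ ∈ H → rep g = rep g' := by
    intro g g' hgg'
    by_cases hgH : g ∈ H
    · have hg'H : g' ∈ H := by
        have := H.mul_mem hgg' hgH
        simpa using this
      rw [hrepdef]; simp [hgH, hg'H]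
    · have hg'H : g' ∉ H := by
        intro hg'
        apply hgH
        have h2 : g * g'⁻¹ ∈ H := by
          have := H.inv_mem hgg'
          simpa using this
        have := H.mul_mem h2 hg'
        simpa using this
      rw [hrepdef]
      simp only [if_neg hgH, if_neg hg'H]
      congr 1
      exact Quotient.sound ((QuotientGroup.rightRel_apply).mpr hgg')
  have hrep1 : rep 1 = 1 := by rw [hrepdef]; exact if_pos H.one_mem
  have hfinr : (Set.range rep).Finite := by
    apply Set.Finite.subset (((Set.finite_range
      (fun q : Quotient (QuotientGroup.rightRel H) => q.out)).insert 1))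
    rintro x ⟨g, rfl⟩
    rw [hrepdef]
    by_cases hgH : g ∈ H
    · simp [hgH]
    · simp only [if_neg hgH]
      exact Set.mem_insert_of_mem _ ⟨_, rfl⟩
  set c : Ctx G := ⟨H, ι, φ, rep, hmem', hcoset, hrep1, hfinr⟩ with hc
  haveI : DecidableEq c.ι := Classical.decEq _
  -- gradedness
  have hgr : IsGraded' (Submonoid.closure (S : Set G)) := hgraded
  -- constants
  set Dset : Set (FreeGroup c.ι) := Set.image2 c.Δ (Set.range c.rep) (S : Set G) with hDset
  have hDfin : Dset.Finite := Set.Finite.image2 _ c.finrange S.finite_toSet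
  obtain ⟨L', hL'⟩ := (hDfin.image (FreeGroup.norm)).bddAbove
  have hΔL : ∀ t ∈ Set.range c.rep, ∀ s ∈ S, FreeGroup.norm (c.Δ t s) ≤ L' := by
    intro t ht s hs
    exact hL' ⟨c.Δ t s, Set.mem_image2_of_mem ht hs, rfl⟩
  set J : Set c.ι := ⋃ d ∈ Dset, (Prod.fst '' {p | p ∈ FreeGroup.toWord d}) with hJdef
  have hJ : J.Finite :=
    Set.Finite.biUnion hDfin (fun d _ => ((FreeGroup.toWord d).finite_toSet).image _)
  have hΔJ : ∀ t ∈ Set.range c.rep, ∀ s ∈ S, SuppIn (c.Δ t s) J := by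
    intro t ht s hs p hp
    rw [hJdef]
    exact Set.mem_biUnion (Set.mem_image2_of_mem ht hs) ⟨p, hp, rfl⟩
  obtain ⟨Kdev, hKdev⟩ := exists_deviation_bound c S hS1 hgr hJ hΔJ hΔL
  obtain ⟨Kdip, hKdip⟩ := exists_dip_bound c S hS1 hgr hJ hΔJ hΔL
  set Bstar := 2 * Kdev + 2 * Kdip + L' with hBstar
  set ballB : Set (FreeGroup c.ι) :=
    {z : FreeGroup c.ι | FreeGroup.norm z ≤ Bstar ∧ SuppIn z J} with hballB
  have hball : ballB.Finite := finite_ball hJ Bstar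
  set F : Set G := (fun x : G × FreeGroup c.ι × G =>
    x.1⁻¹ * ((c.φ.symm x.2.1 : c.H) : G) * x.2.2) ''
    ((Set.range c.rep) ×ˢ ballB ×ˢ (Set.range c.rep)) with hFdef
  have hF : F.Finite := (c.finrange.prod (hball.prod c.finrange)).image _
  refine ⟨(hF.toFinset.sup (wordLength (A : Set G))) + 1, by omega, ?_⟩
  intro u v huv
  -- the lists
  set lu : List ↥S := FreeMonoid.toList u with hlu
  set lv : List ↥S := FreeMonoid.toList v with hlv
  set wlu : List G := lu.map (fun s : ↥S => (s : G)) with hwlu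
  set wlv : List G := lv.map (fun s : ↥S => (s : G)) with hwlv
  have hαval : ∀ x : FreeMonoid ↥S, α x = ((FreeMonoid.toList x).map
      (fun s : ↥S => (s : G))).prod := by
    intro x
    rw [hα, FreeMonoid.lift_apply]
  have hwu : ∀ x ∈ wlu, x ∈ S := by
    rintro x hx
    rw [hwlu] at hx
    obtain ⟨s, _, rfl⟩ := List.mem_map.mp hx
    exact s.2
  have hwv : ∀ x ∈ wlv, x ∈ S := by
    rintro x hx
    rw [hwlv] at hx
    obtain ⟨s, _, rfl⟩ := List.mem_map.mp hx
    exact s.2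
  set n₁ := wlu.length with hn₁
  set n₂ := wlv.length with hn₂
  have hsame : hseq c wlu n₁ = hseq c wlv n₂ := by
    rw [hseq, hseq, pref, pref, hn₁, hn₂, List.take_length, List.take_length]
    have : wlu.prod = wlv.prod := by
      rw [hwlu, hwlv, ← hαval u, ← hαval v, huv]
    rw [this]
  -- the projection functions
  set mu : ℕ → ℕ := fun i =>
    lcp (FreeGroup.toWord (hseq c wlu i)) (FreeGroup.toWord (hseq c wlu n₁)) with hmu
  set mv : ℕ → ℕ := fun j =>
    lcp (FreeGroup.toWord (hseq c wlv j)) (FreeGroup.toWord (hseq c wlv n₂)) with hmv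
  set Mu : ℕ → ℕ := fun i => (Finset.range (i+1)).sup mu with hMu
  set Mv : ℕ → ℕ := fun j => (Finset.range (j+1)).sup mv with hMv
  set Mtop := (FreeGroup.toWord (hseq c wlu n₁)).length with hMtop
  have hMtop' : (FreeGroup.toWord (hseq c wlv n₂)).length = Mtop := by rw [← hsame]
  -- basic facts about mu, Mu
  have hmu_le : ∀ i, mu i ≤ Mtop := fun i => lcp_le_right _ _
  have hmv_le : ∀ j, mv j ≤ Mtop := by
    intro j
    rw [← hMtop']
    exact lcp_le_right _ _
  have hmuMu : ∀ i, mu i ≤ Mu i := fun i =>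
    Finset.le_sup (Finset.mem_range.mpr (by omega))
  have hmvMv : ∀ j, mv j ≤ Mv j := fun j =>
    Finset.le_sup (Finset.mem_range.mpr (by omega))
  have hMu_le : ∀ i, Mu i ≤ Mtop := fun i => Finset.sup_le (fun j _ => hmu_le j)
  have hMv_le : ∀ j, Mv j ≤ Mtop := fun j => Finset.sup_le (fun j' _ => hmv_le j')
  have hMu_mono : ∀ i i', i ≤ i' → Mu i ≤ Mu i' := by
    intro i i' h
    exact Finset.sup_mono (Finset.range_subset_range.mpr (by omega))
  have hMv_mono : ∀ j j', j ≤ j' → Mv j ≤ Mv j' := by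
    intro j j' h
    exact Finset.sup_mono (Finset.range_subset_range.mpr (by omega))
  have hmu_end : mu n₁ = Mtop := by
    rw [hmu]
    simp only
    rw [lcp_self]
  have hmv_end : mv n₂ = Mtop := by
    rw [hmv]
    simp only
    rw [lcp_self, hMtop']
  have hMu_end : Mu n₁ = Mtop := le_antisymm (hMu_le n₁) (hmu_end ▸ hmuMu n₁)
  have hMv_end : Mv n₂ = Mtop := le_antisymm (hMv_le n₂) (hmv_end ▸ hmvMv n₂)
  have hMu_succ : ∀ i, Mu (i+1) = max (Mu i) (mu (i+1)) := by
    intro i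
    rw [hMu]
    simp only
    rw [Finset.range_add_one, Finset.sup_insert]
    rw [max_comm]
  have hMv_succ : ∀ j, Mv (j+1) = max (Mv j) (mv (j+1)) := by
    intro j
    rw [hMv]
    simp only
    rw [Finset.range_add_one, Finset.sup_insert]
    rw [max_comm]
  have hmu_step : ∀ i, i < n₁ → mu (i+1) ≤ mu i + L' := by
    intro i hi
    have := lcp_lipschitz (hseq c wlu i) (hseq c wlu (i+1)) (hseq c wlu n₁)
    have hst := step_norm c S hΔL hwu (i := i) hi
    rw [hmu]
    simp only
    omega
  have hmv_step : ∀ j, j < n₂ → mv (j+1) ≤ mv j + L' := by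
    intro j hj
    have := lcp_lipschitz (hseq c wlv j) (hseq c wlv (j+1)) (hseq c wlv n₂)
    have hst := step_norm c S hΔL hwv (i := j) hj
    rw [hmv]
    simp only
    omega
  have hMu_step : ∀ i, i < n₁ → Mu (i+1) ≤ Mu i + L' := by
    intro i hi
    rw [hMu_succ]
    have h1 := hmu_step i hi
    have h2 := hmuMu i
    omega
  have hMv_step : ∀ j, j < n₂ → Mv (j+1) ≤ Mv j + L' := by
    intro j hj
    rw [hMv_succ]
    have h1 := hmv_step j hj
    have h2 := hmvMv j
    omega
  -- invariant
  have hmu0 : mu 0 = 0 := by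
    rw [hmu]
    simp only
    rw [hseq_zero, FreeGroup.toWord_one]
    exact lcp_nil_left _
  have hmv0 : mv 0 = 0 := by
    rw [hmv]
    simp only
    rw [hseq_zero, FreeGroup.toWord_one]
    exact lcp_nil_left _
  have hMu0 : Mu 0 = 0 := by
    have h1 : Mu 0 ≤ 0 := Finset.sup_le (fun j hj => by
      rw [Finset.mem_range] at hj
      have : j = 0 := by omega
      subst this
      omega)
    omega
  have hMv0 : Mv 0 = 0 := by
    have h1 : Mv 0 ≤ 0 := Finset.sup_le (fun j hj => by
      rw [Finset.mem_range] at hj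
      have : j = 0 := by omega
      subst this
      omega)
    omega
  set Inv : ℕ → ℕ → Prop := fun i j => Mu i ≤ Mv j + L' ∧ Mv j ≤ Mu i + L' with hInv
  have hInv00 : Inv 0 0 := ⟨by omega, by omega⟩
  have hstepu : ∀ i j, i < n₁ → j ≤ n₂ → Inv i j → (j = n₂ ∨ Mu i ≤ Mv j) → Inv (i+1) j := by
    intro i j hi hj hIn hcase
    obtain ⟨h1, h2⟩ := hIn
    have hs := hMu_step i hi
    have hm := hMu_mono i (i+1) (by omega)
    rcases hcase with heq | hle
    · have h3 := hMu_le (i+1)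
      have h4 := hMv_end
      subst heq
      exact ⟨by omega, by omega⟩
    · exact ⟨by omega, by omega⟩
  have hstepv : ∀ i j, i ≤ n₁ → j < n₂ → Inv i j → (i = n₁ ∨ Mv j < Mu i) → Inv i (j+1) := by
    intro i j hi hj hIn hcase
    obtain ⟨h1, h2⟩ := hIn
    have hs := hMv_step j hj
    have hm := hMv_mono j (j+1) (by omega)
    rcases hcase with heq | hlt
    · have h3 := hMv_le (j+1)
      have h4 := hMu_end
      subst heq
      exact ⟨by omega, by omega⟩
    · exact ⟨by omega, by omega⟩
  -- the shuffle word
  refine ⟨FreeMonoid.ofList (shuffle Mu Mv lu lv 0 0), ?_, ?_, ?_⟩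
  · rw [proj₁_ofList, shuffle_projl, hlu, FreeMonoid.ofList_toList]
  · rw [proj₂_ofList, shuffle_projr, hlv, FreeMonoid.ofList_toList]
  · intro p hp
    rw [FreeMonoid.toList_ofList] at hp
    have hpeq : FreeMonoid.toList p =
        (shuffle Mu Mv lu lv 0 0).take (FreeMonoid.toList p).length :=
      List.prefix_iff_eq_take.mp hp
    obtain ⟨d, e, hd, he, hpl, hpr, hIde⟩ := shuffle_take_spec Mu Mv n₁ n₂ Inv hstepu hstepv
      lu lv 0 0 (by rw [hn₁, hwlu, List.length_map]; omega)
      (by rw [hn₂, hwlv, List.length_map]; omega) hInv00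
      (FreeMonoid.toList p).length
    have hd' : d ≤ n₁ := by
      rw [hn₁, hwlu, List.length_map]; exact hd
    have he' : e ≤ n₂ := by
      rw [hn₂, hwlv, List.length_map]; exact he
    have hIde' : Inv d e := by simpa using hIde
    -- identify the two projections
    have hproj1 : α (proj₁ p) = pref wlu d := by
      have : proj₁ p = FreeMonoid.ofList (lu.take d) := by
        conv_lhs => rw [← FreeMonoid.ofList_toList p]
        rw [proj₁_ofList, hpeq, hpl]
      rw [this, hαval, FreeMonoid.toList_ofList, pref, hwlu, List.map_take]
    have hproj2 : α (proj₂ p) = pref wlv e := by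
      have : proj₂ p = FreeMonoid.ofList (lv.take e) := by
        conv_lhs => rw [← FreeMonoid.ofList_toList p]
        rw [proj₂_ofList, hpeq, hpr]
      rw [this, hαval, FreeMonoid.toList_ofList, pref, hwlv, List.map_take]
    rw [hproj1, hproj2]
    -- the element is in F
    set z := (hseq c wlu d)⁻¹ * hseq c wlv e with hz
    have hnormz : FreeGroup.norm z ≤ Bstar := by
      have e1 := norm_inv_mul (hseq c wlu d) (hseq c wlv e)
      have hdevu : FreeGroup.norm (hseq c wlu d) ≤ mu d + Kdev := hKdev wlu hwu d hd'
      have hdevv : FreeGroup.norm (hseq c wlv e) ≤ mv e + Kdev := hKdev wlv hwv e he'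
      have hdipu : Mu d ≤ mu d + Kdip := by
        apply Finset.sup_le
        intro j' hj'
        rw [Finset.mem_range] at hj'
        exact (hKdip wlu hwu j' d (by omega) hd' :
          mu j' ≤ mu d + Kdip)
      have hdipv : Mv e ≤ mv e + Kdip := by
        apply Finset.sup_le
        intro j' hj'
        rw [Finset.mem_range] at hj'
        exact (hKdip wlv hwv j' e (by omega) he' :
          mv j' ≤ mv e + Kdip)
      have tri := lcp_triangle (FreeGroup.toWord (hseq c wlu d))
        (FreeGroup.toWord (hseq c wlu n₁)) (FreeGroup.toWord (hseq c wlv e))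
      have hcm : lcp (FreeGroup.toWord (hseq c wlu n₁)) (FreeGroup.toWord (hseq c wlv e))
          = mv e := by
        rw [hsame, lcp_comm]
      rw [hcm] at tri
      have h1 := hmuMu d
      have h2 := hmvMv e
      obtain ⟨hI1, hI2⟩ := hIde'
      rw [hBstar]
      rw [hz]
      -- mu d is the lcp with the endpoint
      have hmud : mu d = lcp (FreeGroup.toWord (hseq c wlu d))
          (FreeGroup.toWord (hseq c wlu n₁)) := rfl
      have hmve : mv e = lcp (FreeGroup.toWord (hseq c wlv e))
          (FreeGroup.toWord (hseq c wlv n₂)) := rfl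
      omega
    have hsuppz : SuppIn z J := by
      rw [hz]
      exact ((hseq_supp c S hΔJ hwu d).inv).mul (hseq_supp c S hΔJ hwv e)
    have hmemF : (pref wlu d)⁻¹ * pref wlv e ∈ F := by
      have hdq := c.diff_eq (pref wlu d) (pref wlv e)
      rw [hFdef]
      refine ⟨(c.rep (pref wlu d), z, c.rep (pref wlv e)), ?_, ?_⟩
      · exact ⟨⟨_, rfl⟩, ⟨hnormz, hsuppz⟩, ⟨_, rfl⟩⟩
      · simp only [hz, hseq]
        exact hdq.symm
    have : wordLength (A : Set G) ((pref wlu d)⁻¹ * pref wlv e) ≤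
        hF.toFinset.sup (wordLength (A : Set G)) :=
      Finset.le_sup (Set.Finite.mem_toFinset hF |>.mpr hmemF)
    omega
end

section
/- Let G be a group, X a finite alphabet, and β : X* → G × G a monoid homomorphism from the free monoid on X, with components β₁ and β₂. Let N be a nondeterministic finite automaton over X with finite state set Q, a unique initial state q₀, accepting states T, and transition relation E ⊆ Q × X × Q, and assume N is trim: every state lies on some successful path, i.e., for every q ∈ Q there are words u, v ∈ X* such that q is reachable from q₀ reading u and some state of T is reachable from q reading v. Then β₁(w) = β₂(w) for every word w accepted by N if and only if there exists a function λ : Q → G with λ(q₀) = 1, λ(t) = 1 for every t ∈ T, and λ(q) = β₁(x)⁻¹ · λ(p) · β₂(x) for every transition (p, x, q) ∈ E. -/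
/-- `Reaches E p w q` holds if the automaton with transition relation `E`
can go from state `p` to state `q` reading the word `w`. -/
def Reaches {Q X : Type*} (E : Set (Q × X × Q)) : Q → List X → Q → Prop
  | p, [], q => p = q
  | p, x :: w, q => ∃ r : Q, (p, x, r) ∈ E ∧ Reaches E r w q

theorem Reaches.append {Q X : Type*} {E : Set (Q × X × Q)} :
    ∀ {u : List X} {v : List X} {p q r : Q},
      Reaches E p u q → Reaches E q v r → Reaches E p (u ++ v) r := by
  intro u
  induction u with
  | nil => intro v p q r h1 h2; cases h1; exact h2
  | cons x w ih =>
    rintro v p q r ⟨s, hs, hsw⟩ h2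
    exact ⟨s, hs, ih hsw h2⟩

theorem accepted_words_in_diagonal_iff_potential
    (G : Type*) [Group G] (X : Type) [Fintype X]
    (β : FreeMonoid X →* G × G)
    (Q : Type) [Fintype Q] (q₀ : Q) (T : Set Q) (E : Set (Q × X × Q))
    (htrim : ∀ q : Q, ∃ (u v : List X) (t : Q),
      Reaches E q₀ u q ∧ t ∈ T ∧ Reaches E q v t) :
    (∀ w : List X, (∃ t ∈ T, Reaches E q₀ w t) →
        (β (FreeMonoid.ofList w)).1 = (β (FreeMonoid.ofList w)).2) ↔
      ∃ lam : Q → G, lam q₀ = 1 ∧ (∀ t ∈ T, lam t = 1) ∧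
        ∀ (p : Q) (x : X) (q : Q), (p, x, q) ∈ E →
          lam q = (β (FreeMonoid.of x)).1⁻¹ * lam p * (β (FreeMonoid.of x)).2 := by
  constructor
  · intro h
    choose u v t hu ht hv using htrim
    set lam : Q → G := fun q =>
      (β (FreeMonoid.ofList (v q))).1 * (β (FreeMonoid.ofList (v q))).2⁻¹ with hlam
    have key : ∀ (q : Q) (w : List X), Reaches E q₀ w q →
        lam q = (β (FreeMonoid.ofList w)).1⁻¹ * (β (FreeMonoid.ofList w)).2 := by
      intro q w hw
      have hacc : (β (FreeMonoid.ofList (w ++ v q))).1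
          = (β (FreeMonoid.ofList (w ++ v q))).2 :=
        h _ ⟨t q, ht q, hw.append (hv q)⟩
      have hsplit : FreeMonoid.ofList (w ++ v q)
          = FreeMonoid.ofList w * FreeMonoid.ofList (v q) := rfl
      rw [hsplit, map_mul, Prod.fst_mul, Prod.snd_mul] at hacc
      simp only [hlam]
      have h2 := congrArg (fun g => (β (FreeMonoid.ofList w)).1⁻¹ * g
        * (β (FreeMonoid.ofList (v q))).2⁻¹) hacc
      simp only [mul_assoc, inv_mul_cancel_left, mul_inv_cancel_right,
        mul_inv_cancel, mul_one] at h2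
      exact h2
    refine ⟨lam, ?_, ?_, ?_⟩
    · have := key q₀ [] rfl
      simpa using this
    · intro s hs
      have := key s (u s) (hu s)
      have hacc := h (u s) ⟨s, hs, hu s⟩
      rw [this, hacc]
      simp
    · intro p x q hpxq
      have hq := key q (u p ++ [x]) ((hu p).append ⟨q, hpxq, rfl⟩)
      have hp := key p (u p) (hu p)
      have hsplit : FreeMonoid.ofList (u p ++ [x])
          = FreeMonoid.ofList (u p) * FreeMonoid.of x := rfl
      rw [hq, hp, hsplit, map_mul, Prod.fst_mul, Prod.snd_mul]
      group
  · rintro ⟨lam, h0, hT, hE⟩ w ⟨t, htT, hw⟩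
    have key : ∀ (w : List X) (p q : Q), Reaches E p w q →
        lam q = (β (FreeMonoid.ofList w)).1⁻¹ * lam p * (β (FreeMonoid.ofList w)).2 := by
      intro w
      induction w with
      | nil => intro p q hpq; cases hpq; simp
      | cons x w ih =>
        rintro p q ⟨r, hr, hrw⟩
        have h1 := ih r q hrw
        have h2 := hE p x r hr
        have hsplit : FreeMonoid.ofList (x :: w)
            = FreeMonoid.of x * FreeMonoid.ofList w := rfl
        rw [h1, h2, hsplit, map_mul, Prod.fst_mul, Prod.snd_mul]
        group
    have := key w q₀ t hw
    rw [h0, hT t htT] at this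
    have : (β (FreeMonoid.ofList w)).1 * 1 = (β (FreeMonoid.ofList w)).1 *
        ((β (FreeMonoid.ofList w)).1⁻¹ * 1 * (β (FreeMonoid.ofList w)).2) := by
      rw [← this]
    simpa using this
end
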